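/- arXiv:2503.01500 — 7 statements merged into one kernel-verified Lean document; each statement's English description precedes it below -/
import Mathlib

section
/- For every integer r ≥ 2: every finite connected simple graph G with ind-match(G) = min-match(G) = match(G) = r has at least 2r edges, and there exists a finite connected simple graph G with ind-match(G) = min-match(G) = match(G) = r and exactly 2r edges. (That is, the minimum number of edges of such graphs is 2r.) -/
variable {V : Type*}

/-- A matching of `G`: a set of edges of `G` that are pairwise disjoint. -/
def IsMatchingSet (G : SimpleGraph V) (M : Set (Sym2 V)) : Prop :=
  (∀ e ∈ M, e ∈ G.edgeSet) ∧
    ∀ e ∈ M, ∀ f ∈ M, e ≠ f → ∀ v : V, v ∈ e → v ∉ f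

/-- A maximal matching of `G`: a matching `M` such that `M ∪ {e}` is not a matching
for every edge `e` of `G` not in `M`. -/
def IsMaximalMatchingSet (G : SimpleGraph V) (M : Set (Sym2 V)) : Prop :=
  IsMatchingSet G M ∧
    ∀ e ∈ G.edgeSet, e ∉ M → ¬ IsMatchingSet G (insert e M)

/-- An induced matching of `G`: a matching `M` such that no edge of `G` meets
two distinct edges of `M`. -/
def IsInducedMatchingSet (G : SimpleGraph V) (M : Set (Sym2 V)) : Prop :=
  IsMatchingSet G M ∧
    ∀ e ∈ M, ∀ f ∈ M, e ≠ f → ∀ g ∈ G.edgeSet,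
      ¬ ((∃ v : V, v ∈ g ∧ v ∈ e) ∧ (∃ v : V, v ∈ g ∧ v ∈ f))

/-- The matching number of `G`: the maximum size of a matching. -/
noncomputable def matchNum (G : SimpleGraph V) : ℕ :=
  sSup {n | ∃ M : Set (Sym2 V), IsMatchingSet G M ∧ M.ncard = n}

/-- The minimum matching number of `G`: the minimum size of a maximal matching. -/
noncomputable def minMatchNum (G : SimpleGraph V) : ℕ :=
  sInf {n | ∃ M : Set (Sym2 V), IsMaximalMatchingSet G M ∧ M.ncard = n}

/-- The induced matching number of `G`: the maximum size of an induced matching. -/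
noncomputable def indMatchNum (G : SimpleGraph V) : ℕ :=
  sSup {n | ∃ M : Set (Sym2 V), IsInducedMatchingSet G M ∧ M.ncard = n}

/-! ### Auxiliary material -/

/-- A walk starting inside `K` and ending outside crosses an edge. -/
lemma aux_cross_edge {G : SimpleGraph V} {K : Set V} :
    ∀ {a c : V}, G.Walk a c → a ∈ K → c ∉ K →
      ∃ u w, G.Adj u w ∧ u ∈ K ∧ w ∉ K := by
  intro a c p
  induction p with
  | nil => intro ha hc; exact absurd ha hc
  | @cons x y z h p ih =>
      intro ha hc
      by_cases hy : y ∈ K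
      · exact ih hy hc
      · exact ⟨x, y, h, ha, hy⟩

/-- The lower bound part. -/
lemma aux_lower_bound (r : ℕ) (hr : 2 ≤ r) (V : Type) [Fintype V]
    (G : SimpleGraph V) (hc : G.Connected) (hind : indMatchNum G = r) :
    2 * r ≤ G.edgeSet.ncard := by
  classical
  set S := {n | ∃ M : Set (Sym2 V), IsInducedMatchingSet G M ∧ M.ncard = n} with hS
  have hne : S.Nonempty := ⟨0, ∅, ⟨⟨by simp, by simp⟩, by simp⟩, by simp⟩
  have hbdd : BddAbove S := by
    refine ⟨G.edgeSet.ncard, ?_⟩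
    rintro n ⟨M, hM, rfl⟩
    exact Set.ncard_le_ncard hM.1.1 (Set.toFinite _)
  have hrS : r ∈ S := by
    rw [← hind]; exact Nat.sSup_mem hne hbdd
  obtain ⟨M, ⟨⟨hsub, hdisj⟩, hindM⟩, hMcard⟩ := hrS
  have h1lt : 1 < M.ncard := by omega
  have key : ∀ e ∈ M, ∃ g, g ∈ G.edgeSet ∧ g ∉ M ∧ ∃ v, v ∈ g ∧ v ∈ e := by
    intro e he
    obtain ⟨f, hf, hfe⟩ := Set.exists_ne_of_one_lt_ncard h1lt e
    have hx : e.out.1 ∈ {v | v ∈ e} := Sym2.out_fst_mem e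
    have hcK : f.out.1 ∉ {v | v ∈ e} := hdisj f hf e he hfe _ (Sym2.out_fst_mem f)
    obtain ⟨p⟩ := hc.preconnected e.out.1 f.out.1
    obtain ⟨u, w, huw, hu, hw⟩ := aux_cross_edge p hx hcK
    refine ⟨s(u, w), G.mem_edgeSet.2 huw, ?_, u, Sym2.mem_mk_left u w, hu⟩
    intro hg
    by_cases hge : s(u, w) = e
    · apply hw
      show w ∈ e
      rw [← hge]
      exact Sym2.mem_mk_right u w
    · exact hdisj e he _ hg (fun h => hge h.symm) u hu (Sym2.mem_mk_left u w)
  let φ : Sym2 V → Sym2 V := fun e => if h : e ∈ M then (key e h).choose else e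
  have hφ : ∀ e ∈ M, φ e ∈ G.edgeSet ∧ φ e ∉ M ∧ ∃ v, v ∈ φ e ∧ v ∈ e := by
    intro e he
    simp only [φ, dif_pos he]
    exact (key e he).choose_spec
  have hmaps : ∀ e ∈ M, φ e ∈ G.edgeSet \ M :=
    fun e he => ⟨(hφ e he).1, (hφ e he).2.1⟩
  have hinj : Set.InjOn φ M := by
    intro e he f hf hef
    by_contra hne
    exact hindM e he f hf hne (φ e) (hφ e he).1
      ⟨(hφ e he).2.2, by rw [hef]; exact (hφ f hf).2.2⟩
  have h1 : M.ncard ≤ (G.edgeSet \ M).ncard :=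
    Set.ncard_le_ncard_of_injOn φ hmaps hinj (Set.toFinite _)
  have h2 : (G.edgeSet \ M).ncard + M.ncard = G.edgeSet.ncard :=
    Set.ncard_diff_add_ncard_of_subset hsub (Set.toFinite _)
  omega

/-! ### The spider graph achieving the bound -/

/-- Middle vertex of leg `i`. -/
def av (r : ℕ) (i : Fin r) : Fin (2 * r + 1) := ⟨i.val + 1, by have := i.2; omega⟩

/-- End vertex of leg `i`. -/
def bv (r : ℕ) (i : Fin r) : Fin (2 * r + 1) := ⟨r + 1 + i.val, by have := i.2; omega⟩

/-- Edge set of the spider graph. -/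
def spiderE (r : ℕ) : Set (Sym2 (Fin (2 * r + 1))) :=
  {e | ∃ i : Fin r, e = s((0 : Fin (2 * r + 1)), av r i) ∨ e = s(av r i, bv r i)}

/-- The spider graph: center `0` with `r` legs of length two. -/
def spider (r : ℕ) : SimpleGraph (Fin (2 * r + 1)) := SimpleGraph.fromEdgeSet (spiderE r)

lemma av_inj {r : ℕ} {i j : Fin r} (h : av r i = av r j) : i = j := by
  have hi := i.2; have hj := j.2
  rw [av, av, Fin.mk.injEq] at h
  exact Fin.ext (by omega)

lemma bv_inj {r : ℕ} {i j : Fin r} (h : bv r i = bv r j) : i = j := by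
  have hi := i.2; have hj := j.2
  rw [bv, bv, Fin.mk.injEq] at h
  exact Fin.ext (by omega)

lemma av_ne_zero {r : ℕ} (i : Fin r) : av r i ≠ 0 := by
  have hi := i.2
  intro h
  have h2 := congrArg Fin.val h
  simp [av] at h2

lemma bv_ne_zero {r : ℕ} (i : Fin r) : bv r i ≠ 0 := by
  have hi := i.2
  intro h
  have h2 := congrArg Fin.val h
  simp [bv] at h2

lemma av_ne_bv {r : ℕ} (i j : Fin r) : av r i ≠ bv r j := by
  have hi := i.2; have hj := j.2
  intro h
  have h2 := congrArg Fin.val h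
  simp [av, bv] at h2
  omega

lemma spider_edgeSet (r : ℕ) : (spider r).edgeSet = spiderE r := by
  rw [spider, SimpleGraph.edgeSet_fromEdgeSet]
  refine sdiff_eq_left.mpr (Set.disjoint_left.mpr ?_)
  rintro e ⟨i, rfl | rfl⟩ hd
  · rw [Sym2.mem_diagSet, Sym2.isDiag_iff_proj_eq] at hd
    exact (av_ne_zero i) hd.symm
  · rw [Sym2.mem_diagSet, Sym2.isDiag_iff_proj_eq] at hd
    exact (av_ne_bv i i) hd

lemma spider_adj_av (r : ℕ) (i : Fin r) : (spider r).Adj 0 (av r i) := by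
  rw [spider, SimpleGraph.fromEdgeSet_adj]
  exact ⟨⟨i, Or.inl rfl⟩, fun h => av_ne_zero i h.symm⟩

lemma spider_adj_bv (r : ℕ) (i : Fin r) : (spider r).Adj (av r i) (bv r i) := by
  rw [spider, SimpleGraph.fromEdgeSet_adj]
  exact ⟨⟨i, Or.inr rfl⟩, av_ne_bv i i⟩

lemma spider_tri (r : ℕ) (v : Fin (2 * r + 1)) :
    v = 0 ∨ (∃ i, v = av r i) ∨ ∃ i, v = bv r i := by
  obtain ⟨k, hk⟩ := v
  by_cases h0 : k = 0
  · exact Or.inl (Fin.ext (by simp [h0]))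
  by_cases h1 : k ≤ r
  · exact Or.inr (Or.inl ⟨⟨k - 1, by omega⟩, Fin.ext (by simp [av]; omega)⟩)
  · exact Or.inr (Or.inr ⟨⟨k - (r + 1), by omega⟩, Fin.ext (by simp [bv]; omega)⟩)

lemma spider_connected (r : ℕ) : (spider r).Connected := by
  have hreach : ∀ v, (spider r).Reachable v 0 := by
    intro v
    rcases spider_tri r v with rfl | ⟨i, rfl⟩ | ⟨i, rfl⟩
    · exact SimpleGraph.Reachable.refl 0
    · exact (spider_adj_av r i).symm.reachable
    · exact ((spider_adj_bv r i).symm.reachable).trans (spider_adj_av r i).symm.reachable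
  exact SimpleGraph.Connected.mk fun u v => (hreach u).trans (hreach v).symm

/-- Every edge of the spider contains a unique `av` vertex. -/
lemma spider_edge_av {r : ℕ} {e : Sym2 (Fin (2 * r + 1))} (he : e ∈ spiderE r) :
    ∃ i, av r i ∈ e ∧ ∀ j, av r j ∈ e → j = i := by
  obtain ⟨i, rfl | rfl⟩ := he
  · refine ⟨i, Sym2.mem_mk_right _ _, ?_⟩
    intro j hj
    rw [Sym2.mem_iff] at hj
    rcases hj with hj | hj
    · exact absurd hj (av_ne_zero j)
    · exact av_inj hj
  · refine ⟨i, Sym2.mem_mk_left _ _, ?_⟩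
    intro j hj
    rw [Sym2.mem_iff] at hj
    rcases hj with hj | hj
    · exact av_inj hj
    · exact absurd hj (av_ne_bv j i)

/-- Any matching of the spider has at most `r` edges. -/
lemma spider_matching_le (r : ℕ) (hr : 0 < r) {M : Set (Sym2 (Fin (2 * r + 1)))}
    (hM : IsMatchingSet (spider r) M) : M.ncard ≤ r := by
  classical
  have hsub : ∀ e ∈ M, e ∈ spiderE r := by
    intro e he
    have := hM.1 e he
    rwa [spider_edgeSet] at this
  let f : Sym2 (Fin (2 * r + 1)) → Fin r :=
    fun e => if h : e ∈ spiderE r then (spider_edge_av h).choose else ⟨0, hr⟩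
  have hf : ∀ e ∈ M, av r (f e) ∈ e := by
    intro e he
    simp only [f, dif_pos (hsub e he)]
    exact (spider_edge_av (hsub e he)).choose_spec.1
  have hinj : Set.InjOn f M := by
    intro e he e' he' hfe
    by_contra hne
    exact hM.2 e he e' he' hne (av r (f e)) (hf e he) (hfe ▸ hf e' he')
  calc M.ncard ≤ (Set.univ : Set (Fin r)).ncard :=
        Set.ncard_le_ncard_of_injOn f (fun e _ => Set.mem_univ _) hinj (Set.toFinite _)
    _ = r := by simp [Set.ncard_univ]

/-- The canonical matching of outer edges. -/
def spiderM (r : ℕ) : Set (Sym2 (Fin (2 * r + 1))) :=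
  (fun i => s(av r i, bv r i)) '' Set.univ

lemma spiderM_card (r : ℕ) : (spiderM r).ncard = r := by
  rw [spiderM, Set.ncard_image_of_injective _ ?_, Set.ncard_univ, Nat.card_eq_fintype_card,
    Fintype.card_fin]
  intro i j h
  rw [Sym2.eq_iff] at h
  rcases h with ⟨h, -⟩ | ⟨h, -⟩
  · exact av_inj h
  · exact absurd h (av_ne_bv i j)

lemma spiderM_matching (r : ℕ) : IsMatchingSet (spider r) (spiderM r) := by
  constructor
  · rintro e ⟨i, -, rfl⟩
    rw [spider_edgeSet]
    exact ⟨i, Or.inr rfl⟩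
  · rintro e ⟨i, -, rfl⟩ f ⟨j, -, rfl⟩ hne v hv hvf
    have hij : i ≠ j := fun h => hne (by rw [h])
    rw [Sym2.mem_iff] at hv hvf
    rcases hv with rfl | rfl <;> rcases hvf with h | h
    · exact hij (av_inj h)
    · exact av_ne_bv i j h
    · exact av_ne_bv j i h.symm
    · exact hij (bv_inj h)

lemma spiderM_maximal (r : ℕ) : IsMaximalMatchingSet (spider r) (spiderM r) := by
  refine ⟨spiderM_matching r, ?_⟩
  intro e he heM hIns
  rw [spider_edgeSet] at he
  obtain ⟨i, rfl | rfl⟩ := he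
  · refine hIns.2 _ (Set.mem_insert _ _) (s(av r i, bv r i))
      (Set.mem_insert_of_mem _ ⟨i, Set.mem_univ i, rfl⟩) ?_ (av r i)
      (Sym2.mem_mk_right _ _) (Sym2.mem_mk_left _ _)
    intro h
    exact heM (h ▸ ⟨i, Set.mem_univ i, rfl⟩)
  · exact heM ⟨i, Set.mem_univ i, rfl⟩

lemma spiderM_induced (r : ℕ) : IsInducedMatchingSet (spider r) (spiderM r) := by
  refine ⟨spiderM_matching r, ?_⟩
  rintro e ⟨i, -, rfl⟩ f ⟨j, -, rfl⟩ hne g hg ⟨⟨v, hvg, hve⟩, ⟨w, hwg, hwf⟩⟩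
  have hij : i ≠ j := fun h => hne (by rw [h])
  rw [spider_edgeSet] at hg
  -- a vertex common to g and s(av k, bv k) pins down the index of g
  have pin : ∀ (k : Fin r) (x : Fin (2 * r + 1)), x ∈ g → x ∈ s(av r k, bv r k) →
      ∀ m, av r m ∈ g → m = k := by
    intro k x hxg hxk m hm
    obtain ⟨l, rfl | rfl⟩ := hg
    · rw [Sym2.mem_iff] at hxg hxk hm
      rcases hm with hm | hm
      · exact absurd hm (av_ne_zero m)
      · rcases hxg with rfl | rfl
        · rcases hxk with h | h
          · exact absurd h.symm (av_ne_zero k)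
          · exact absurd h.symm (bv_ne_zero k)
        · rcases hxk with h | h
          · exact (av_inj hm).trans (av_inj h)
          · exact absurd h (av_ne_bv l k)
    · rw [Sym2.mem_iff] at hxg hxk hm
      have hml : m = l := by
        rcases hm with hm | hm
        · exact av_inj hm
        · exact absurd hm (av_ne_bv m l)
      rcases hxg with rfl | rfl
      · rcases hxk with h | h
        · exact hml.trans (av_inj h)
        · exact absurd h (av_ne_bv l k)
      · rcases hxk with h | h
        · exact absurd h.symm (av_ne_bv k l)
        · exact hml.trans (bv_inj h)
  have havg : ∃ m, av r m ∈ g := by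
    obtain ⟨l, rfl | rfl⟩ := hg
    · exact ⟨l, Sym2.mem_mk_right _ _⟩
    · exact ⟨l, Sym2.mem_mk_left _ _⟩
  obtain ⟨m, hm⟩ := havg
  have h1 : m = i := pin i v hvg hve m hm
  have h2 : m = j := pin j w hwg hwf m hm
  exact hij (h1 ▸ h2)

/-- Every maximal matching of the spider has at least `r` edges. -/
lemma spider_maximal_ge (r : ℕ) {M : Set (Sym2 (Fin (2 * r + 1)))}
    (hM : IsMaximalMatchingSet (spider r) M) : r ≤ M.ncard := by
  classical
  have hsub : ∀ e ∈ M, e ∈ spiderE r := by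
    intro e he
    have := hM.1.1 e he
    rwa [spider_edgeSet] at this
  have hcov : ∀ i : Fin r, ∃ e, e ∈ M ∧ av r i ∈ e := by
    intro i
    by_contra hno
    push_neg at hno
    have hbi : ∀ e ∈ M, bv r i ∉ e := by
      intro e he hbie
      obtain ⟨k, rfl | rfl⟩ := hsub e he
      · rw [Sym2.mem_iff] at hbie
        rcases hbie with h | h
        · exact bv_ne_zero i h
        · exact av_ne_bv k i h.symm
      · rw [Sym2.mem_iff] at hbie
        rcases hbie with h | h
        · exact av_ne_bv k i h.symm
        · exact hno _ he (bv_inj h ▸ Sym2.mem_mk_left _ _)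
    have hnotM : s(av r i, bv r i) ∉ M := fun h => hno _ h (Sym2.mem_mk_left _ _)
    have hedge : s(av r i, bv r i) ∈ (spider r).edgeSet := by
      rw [spider_edgeSet]; exact ⟨i, Or.inr rfl⟩
    refine hM.2 _ hedge hnotM ⟨?_, ?_⟩
    · intro e he
      rcases Set.mem_insert_iff.1 he with rfl | he
      · exact hedge
      · exact hM.1.1 e he
    · intro e he f hf hne v hv hvf
      rcases Set.mem_insert_iff.1 he with rfl | he <;>
        rcases Set.mem_insert_iff.1 hf with rfl | hf
      · exact hne rfl
      · rw [Sym2.mem_iff] at hv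
        rcases hv with rfl | rfl
        · exact hno f hf hvf
        · exact hbi f hf hvf
      · rw [Sym2.mem_iff] at hvf
        rcases hvf with rfl | rfl
        · exact hno e he hv
        · exact hbi e he hv
      · exact hM.1.2 e he f hf hne v hv hvf
  let g : Fin r → Sym2 (Fin (2 * r + 1)) := fun i => (hcov i).choose
  have hg : ∀ i, g i ∈ M ∧ av r i ∈ g i := fun i => (hcov i).choose_spec
  have hinj : Set.InjOn g Set.univ := by
    intro i _ j _ hij
    obtain ⟨k, -, huniq⟩ := spider_edge_av (hsub _ (hg i).1)
    have h1 : i = k := huniq i (hg i).2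
    have h2 : j = k := huniq j (hij ▸ (hg j).2)
    exact h1.trans h2.symm
  calc r = (Set.univ : Set (Fin r)).ncard := by simp [Set.ncard_univ]
    _ ≤ M.ncard :=
        Set.ncard_le_ncard_of_injOn g (fun i _ => (hg i).1) hinj (Set.toFinite _)

lemma spider_edge_card (r : ℕ) : (spider r).edgeSet.ncard = 2 * r := by
  rw [spider_edgeSet]
  have heq : spiderE r =
      (fun i : Fin r => s((0 : Fin (2 * r + 1)), av r i)) '' Set.univ ∪
        (fun i : Fin r => s(av r i, bv r i)) '' Set.univ := by
    ext e
    simp only [spiderE, Set.mem_setOf_eq, Set.image_univ, Set.mem_union, Set.mem_range]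
    constructor
    · rintro ⟨i, h | h⟩
      exacts [Or.inl ⟨i, h.symm⟩, Or.inr ⟨i, h.symm⟩]
    · rintro (⟨i, h⟩ | ⟨i, h⟩)
      exacts [⟨i, Or.inl h.symm⟩, ⟨i, Or.inr h.symm⟩]
  have hinj1 : Function.Injective fun i : Fin r => s((0 : Fin (2 * r + 1)), av r i) := by
    intro i j h
    rw [Sym2.eq_iff] at h
    rcases h with ⟨-, h⟩ | ⟨h, -⟩
    · exact av_inj h
    · exact absurd h.symm (av_ne_zero j)
  have hinj2 : Function.Injective fun i : Fin r => s(av r i, bv r i) := by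
    intro i j h
    rw [Sym2.eq_iff] at h
    rcases h with ⟨h, -⟩ | ⟨h, -⟩
    · exact av_inj h
    · exact absurd h (av_ne_bv i j)
  have hdisj : Disjoint ((fun i : Fin r => s((0 : Fin (2 * r + 1)), av r i)) '' Set.univ)
      ((fun i : Fin r => s(av r i, bv r i)) '' Set.univ) := by
    rw [Set.disjoint_left]
    rintro e ⟨i, -, rfl⟩ ⟨j, -, hj⟩
    rw [Sym2.eq_iff] at hj
    rcases hj with ⟨h, -⟩ | ⟨-, h⟩
    · exact av_ne_zero j h
    · exact bv_ne_zero j h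
  rw [heq, Set.ncard_union_eq hdisj (Set.toFinite _) (Set.toFinite _),
    Set.ncard_image_of_injective _ hinj1, Set.ncard_image_of_injective _ hinj2,
    Set.ncard_univ, Nat.card_eq_fintype_card, Fintype.card_fin]
  omega

lemma spider_matchNum (r : ℕ) (hr : 0 < r) : matchNum (spider r) = r := by
  refine le_antisymm (csSup_le ⟨r, spiderM r, spiderM_matching r, spiderM_card r⟩ ?_)
    (le_csSup ⟨r, ?_⟩ ⟨spiderM r, spiderM_matching r, spiderM_card r⟩)
  · rintro n ⟨M, hM, rfl⟩
    exact spider_matching_le r hr hM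
  · rintro n ⟨M, hM, rfl⟩
    exact spider_matching_le r hr hM

lemma spider_indMatchNum (r : ℕ) (hr : 0 < r) : indMatchNum (spider r) = r := by
  refine le_antisymm (csSup_le ⟨r, spiderM r, spiderM_induced r, spiderM_card r⟩ ?_)
    (le_csSup ⟨r, ?_⟩ ⟨spiderM r, spiderM_induced r, spiderM_card r⟩)
  · rintro n ⟨M, hM, rfl⟩
    exact spider_matching_le r hr hM.1
  · rintro n ⟨M, hM, rfl⟩
    exact spider_matching_le r hr hM.1

lemma spider_minMatchNum (r : ℕ) : minMatchNum (spider r) = r := by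
  refine le_antisymm (Nat.sInf_le ⟨spiderM r, spiderM_maximal r, spiderM_card r⟩)
    (le_csInf ⟨r, spiderM r, spiderM_maximal r, spiderM_card r⟩ ?_)
  rintro n ⟨M, hM, rfl⟩
  exact spider_maximal_ge r hM

theorem stmt_9 (r : ℕ) (hr : 2 ≤ r) :
    (∀ (V : Type) [Fintype V] (G : SimpleGraph V), G.Connected →
      indMatchNum G = r → minMatchNum G = r → matchNum G = r →
      2 * r ≤ G.edgeSet.ncard) ∧
    (∃ (n : ℕ) (G : SimpleGraph (Fin n)), G.Connected ∧
      indMatchNum G = r ∧ minMatchNum G = r ∧ matchNum G = r ∧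
      G.edgeSet.ncard = 2 * r) := by
  constructor
  · intro V _ G hc hind _ _
    exact aux_lower_bound r hr V G hc hind
  · exact ⟨2 * r + 1, spider r, spider_connected r, spider_indMatchNum r (by omega),
      spider_minMatchNum r, spider_matchNum r (by omega), spider_edge_card r⟩
end

section
/- For every integer q ≥ 3 there exists a finite connected simple graph G with ind-match(G) = 1, min-match(G) = q, match(G) = q + 1, and at most q² + 2 edges. -/
variable {V : Type*}

/-! ### Auxiliary general lemmas -/

/-- Upper bound for the size of a matching via a vertex cover. -/
lemma aux_matching_le_cover {G : SimpleGraph V} {M : Set (Sym2 V)} {T : Set V}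
    (hM : IsMatchingSet G M) (hT : T.Finite)
    (hcov : ∀ e ∈ G.edgeSet, ∃ v, v ∈ T ∧ v ∈ e) : M.ncard ≤ T.ncard := by
  classical
  rcases M.eq_empty_or_nonempty with rfl | ⟨e0, he0⟩
  · simp
  have : Nonempty V := ⟨(Quot.out e0).1⟩
  set f : Sym2 V → V := fun e =>
    if h : ∃ v, v ∈ T ∧ v ∈ e then h.choose else Classical.arbitrary V with hf
  have hspec : ∀ e ∈ M, f e ∈ T ∧ f e ∈ e := by
    intro e he
    have h : ∃ v, v ∈ T ∧ v ∈ e := hcov e (hM.1 e he)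
    simp only [hf, dif_pos h]
    exact h.choose_spec
  refine Set.ncard_le_ncard_of_injOn f (fun e he => (hspec e he).1) ?_ hT
  intro e he e' he' hee'
  by_contra hne
  exact hM.2 e he e' he' hne (f e) (hspec e he).2 (hee' ▸ (hspec e' he').2)

/-- Lower bound for the size of a matching covering a set `S` of vertices such that
each edge contains at most one vertex of `S`. -/
lemma aux_cover_le_matching {M : Set (Sym2 V)} {S : Set V}
    (hMfin : M.Finite)
    (hcov : ∀ v ∈ S, ∃ e, e ∈ M ∧ v ∈ e)
    (huniq : ∀ e ∈ M, ∀ u ∈ S, ∀ w ∈ S, u ∈ e → w ∈ e → u = w) :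
    S.ncard ≤ M.ncard := by
  classical
  rcases S.eq_empty_or_nonempty with rfl | ⟨v0, hv0⟩
  · simp
  have : Nonempty (Sym2 V) := ⟨s(v0, v0)⟩
  set g : V → Sym2 V := fun v =>
    if h : ∃ e, e ∈ M ∧ v ∈ e then h.choose else Classical.arbitrary (Sym2 V) with hg
  have hspec : ∀ v ∈ S, g v ∈ M ∧ v ∈ g v := by
    intro v hv
    have h : ∃ e, e ∈ M ∧ v ∈ e := hcov v hv
    simp only [hg, dif_pos h]
    exact h.choose_spec
  refine Set.ncard_le_ncard_of_injOn g (fun v hv => (hspec v hv).1) ?_ hMfin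
  intro u hu w hw huw
  exact huniq (g u) (hspec u hu).1 u hu w hw (hspec u hu).2 (huw ▸ (hspec w hw).2)

/-! ### The construction -/

def GRel (q : ℕ) (u v : Fin (2*q+2)) : Prop :=
  (u.val < q ∧ q ≤ v.val ∧ v.val < 2*q) ∨ (u.val = 2*q ∧ v.val = 0) ∨
    (u.val = 2*q+1 ∧ v.val = q)

def Gr (q : ℕ) : SimpleGraph (Fin (2*q+2)) where
  Adj u v := u ≠ v ∧ (GRel q u v ∨ GRel q v u)
  symm := ⟨fun _ _ ⟨h1, h2⟩ => ⟨h1.symm, h2.symm⟩⟩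
  loopless := ⟨fun _ h => h.1 rfl⟩

def vert (q i : ℕ) : Fin (2*q+2) := ⟨i % (2*q+2), Nat.mod_lt _ (by omega)⟩

lemma vert_val {q i : ℕ} (h : i < 2*q+2) : (vert q i).val = i := Nat.mod_eq_of_lt h

lemma vert_val_self {q : ℕ} (v : Fin (2*q+2)) : vert q v.val = v :=
  Fin.ext (vert_val v.isLt)

lemma grel_vert {q x y : ℕ} (hx : x < 2*q+2) (hy : y < 2*q+2)
    (h : (x < q ∧ q ≤ y ∧ y < 2*q) ∨ (x = 2*q ∧ y = 0) ∨ (x = 2*q+1 ∧ y = q)) :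
    GRel q (vert q x) (vert q y) := by
  unfold GRel
  rw [vert_val hx, vert_val hy]
  exact h

lemma gr_adj_iff {q : ℕ} {u v : Fin (2*q+2)} :
    (Gr q).Adj u v ↔ u.val ≠ v.val ∧ (GRel q u v ∨ GRel q v u) := by
  constructor
  · rintro ⟨h1, h2⟩; exact ⟨fun h => h1 (Fin.ext h), h2⟩
  · rintro ⟨h1, h2⟩; exact ⟨fun h => h1 (congrArg Fin.val h), h2⟩

/-- edge normal form -/
lemma adj_vert {q x y : ℕ} (hx : x < 2*q+2) (hy : y < 2*q+2) (hne : x ≠ y)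
    (h : (x < q ∧ q ≤ y ∧ y < 2*q) ∨ (x = 2*q ∧ y = 0) ∨ (x = 2*q+1 ∧ y = q)) :
    (Gr q).Adj (vert q x) (vert q y) :=
  gr_adj_iff.2 ⟨by rw [vert_val hx, vert_val hy]; exact hne, Or.inl (grel_vert hx hy h)⟩

lemma edge_cases {q : ℕ} {e : Sym2 (Fin (2*q+2))} (he : e ∈ (Gr q).edgeSet) :
    ∃ a b : Fin (2*q+2), e = s(a, b) ∧
      ((a.val < q ∧ q ≤ b.val ∧ b.val < 2*q) ∨ (a.val = 2*q ∧ b.val = 0) ∨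
        (a.val = 2*q+1 ∧ b.val = q)) := by
  induction e using Sym2.ind with
  | _ u v =>
    rw [SimpleGraph.mem_edgeSet] at he
    rcases he.2 with h | h
    · exact ⟨u, v, rfl, h⟩
    · exact ⟨v, u, Sym2.eq_swap, h⟩

lemma mem_pair_val {q x y : ℕ} (hx : x < 2*q+2) (hy : y < 2*q+2) {v : Fin (2*q+2)}
    (h : v ∈ s(vert q x, vert q y)) : v.val = x ∨ v.val = y := by
  rcases Sym2.mem_iff.1 h with rfl | rfl
  · left; exact vert_val hx
  · right; exact vert_val hy

lemma ncard_interval (q c m : ℕ) (h : c + m ≤ 2*q+2) :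
    {v : Fin (2*q+2) | c ≤ v.val ∧ v.val < c+m}.ncard = m := by
  have heq : {v : Fin (2*q+2) | c ≤ v.val ∧ v.val < c+m}
      = Set.range (fun i : Fin m => vert q (c+i)) := by
    ext v
    simp only [Set.mem_setOf_eq, Set.mem_range]
    constructor
    · rintro ⟨h1, h2⟩
      refine ⟨⟨v.val - c, by omega⟩, Fin.ext ?_⟩
      show (vert q (c + (v.val - c))).val = v.val
      rw [vert_val (by omega)]
      omega
    · rintro ⟨i, rfl⟩
      rw [vert_val (by omega)]
      omega
  have hinj : Function.Injective (fun i : Fin m => vert q (c+i)) := by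
    intro i j hij
    have : (vert q (c+i)).val = (vert q (c+j)).val := congrArg Fin.val hij
    rw [vert_val (by omega), vert_val (by omega)] at this
    exact Fin.ext (by omega)
  rw [heq, ← Set.image_univ, Set.ncard_image_of_injective _ hinj, Set.ncard_univ,
    Nat.card_eq_fintype_card, Fintype.card_fin]

lemma ncard_range_sym2 {q m : ℕ} (a b : ℕ → ℕ)
    (hab : ∀ k, k < m → a k < 2*q+2 ∧ b k < 2*q+2)
    (hdis : ∀ k l, k < m → l < m → a k ≠ b l)
    (hinj : ∀ k l, k < m → l < m → k ≠ l → a k ≠ a l) :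
    (Set.range (fun k : Fin m => s(vert q (a k), vert q (b k)))).ncard = m := by
  have hinj' : Function.Injective (fun k : Fin m => s(vert q (a k), vert q (b k))) := by
    intro i j hij
    simp only [Sym2.eq_iff] at hij
    rcases hij with ⟨h1, _⟩ | ⟨h1, _⟩
    · by_contra hne
      have := congrArg Fin.val h1
      rw [vert_val (hab i i.isLt).1, vert_val (hab j j.isLt).1] at this
      exact hinj i j i.isLt j.isLt (fun h => hne (Fin.ext h)) this
    · have := congrArg Fin.val h1
      rw [vert_val (hab i i.isLt).1, vert_val (hab j j.isLt).2] at this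
      exact absurd this (hdis i j i.isLt j.isLt)
  rw [← Set.image_univ, Set.ncard_image_of_injective _ hinj', Set.ncard_univ,
    Nat.card_eq_fintype_card, Fintype.card_fin]

/-! ### The small maximal matching `M0` -/

def M0 (q : ℕ) : Set (Sym2 (Fin (2*q+2))) :=
  Set.range (fun i : Fin q => s(vert q i.val, vert q (q + i.val)))

lemma M0_card (q : ℕ) : (M0 q).ncard = q := by
  unfold M0
  apply ncard_range_sym2 (fun k => k) (fun k => q + k) <;>
    · intros
      try dsimp only
      omega

lemma M0_matching {q : ℕ} (hq : 3 ≤ q) : IsMatchingSet (Gr q) (M0 q) := by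
  constructor
  · rintro e ⟨i, rfl⟩
    rw [SimpleGraph.mem_edgeSet, gr_adj_iff]
    have h1 : (vert q i.val).val = i.val := vert_val (by omega)
    have h2 : (vert q (q + i.val)).val = q + i.val := vert_val (by omega)
    refine ⟨by omega, Or.inl (Or.inl ?_)⟩
    rw [h1, h2]
    exact ⟨i.isLt, by omega, by omega⟩
  · rintro e ⟨i, rfl⟩ f ⟨j, rfl⟩ hne v hv hv'
    have hij : i.val ≠ j.val := by
      intro h
      exact hne (by rw [Fin.ext h])
    have h1 := mem_pair_val (q := q) (by omega) (by omega) hv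
    have h2 := mem_pair_val (q := q) (by omega) (by omega) hv'
    omega

lemma M0_covers {q : ℕ} {v : Fin (2*q+2)} (hv : v.val < 2*q) : ∃ e ∈ M0 q, v ∈ e := by
  by_cases h : v.val < q
  · refine ⟨s(vert q (⟨v.val, h⟩ : Fin q).val, vert q (q + (⟨v.val, h⟩ : Fin q).val)),
      ⟨⟨v.val, h⟩, rfl⟩, ?_⟩
    have : vert q (⟨v.val, h⟩ : Fin q).val = v := vert_val_self v
    rw [this]
    exact Sym2.mem_mk_left _ _
  · have h' : v.val - q < q := by omega
    refine ⟨s(vert q (⟨v.val - q, h'⟩ : Fin q).val, vert q (q + (⟨v.val - q, h'⟩ : Fin q).val)),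
      ⟨⟨v.val - q, h'⟩, rfl⟩, ?_⟩
    have : vert q (q + (⟨v.val - q, h'⟩ : Fin q).val) = v := by
      apply Fin.ext
      rw [vert_val (by omega)]
      show q + (v.val - q) = v.val
      omega
    rw [this]
    exact Sym2.mem_mk_right _ _

lemma M0_maximal {q : ℕ} (hq : 3 ≤ q) : IsMaximalMatchingSet (Gr q) (M0 q) := by
  refine ⟨M0_matching hq, ?_⟩
  intro e he heM hmat
  obtain ⟨a, b, rfl, htype⟩ := edge_cases he
  have : ∃ c : Fin (2*q+2), c ∈ s(a, b) ∧ c.val < 2*q := by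
    rcases htype with h | h | h
    · exact ⟨a, Sym2.mem_mk_left _ _, by omega⟩
    · exact ⟨b, Sym2.mem_mk_right _ _, by omega⟩
    · exact ⟨b, Sym2.mem_mk_right _ _, by omega⟩
  obtain ⟨c, hce, hc⟩ := this
  obtain ⟨f, hfM, hcf⟩ := M0_covers hc
  have hne : s(a, b) ≠ f := fun h => heM (h ▸ hfM)
  exact hmat.2 s(a, b) (Set.mem_insert _ _) f (Set.mem_insert_of_mem _ hfM) hne c hce hcf

/-! ### The maximum matching `M1` -/

def u1 (q k : ℕ) : ℕ := if k = 0 then 2*q else if k = q then 2*q+1 else k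
def w1 (q k : ℕ) : ℕ := if k = 0 then 0 else if k = q then q else q + k

lemma uw1_facts {q : ℕ} (hq : 3 ≤ q) (k l : ℕ) (hk : k ≤ q) (hl : l ≤ q) :
    u1 q k < 2*q+2 ∧ w1 q k < 2*q+2 ∧ u1 q k ≠ w1 q l ∧
      (k ≠ l → u1 q k ≠ u1 q l ∧ w1 q k ≠ w1 q l) := by
  simp only [u1, w1]
  split_ifs <;> omega

lemma uw1_rel {q : ℕ} (hq : 3 ≤ q) (k : ℕ) (hk : k ≤ q) :
    (u1 q k < q ∧ q ≤ w1 q k ∧ w1 q k < 2*q) ∨ (u1 q k = 2*q ∧ w1 q k = 0) ∨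
      (u1 q k = 2*q+1 ∧ w1 q k = q) := by
  simp only [u1, w1]
  split_ifs <;> omega

def M1 (q : ℕ) : Set (Sym2 (Fin (2*q+2))) :=
  Set.range (fun k : Fin (q+1) => s(vert q (u1 q k.val), vert q (w1 q k.val)))

lemma M1_card {q : ℕ} (hq : 3 ≤ q) : (M1 q).ncard = q + 1 := by
  refine ncard_range_sym2 (u1 q) (w1 q) ?_ ?_ ?_
  · intro k hk
    exact ⟨(uw1_facts hq k k (by omega) (by omega)).1, (uw1_facts hq k k (by omega) (by omega)).2.1⟩
  · intro k l hk hl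
    exact (uw1_facts hq k l (by omega) (by omega)).2.2.1
  · intro k l hk hl hne
    exact ((uw1_facts hq k l (by omega) (by omega)).2.2.2 hne).1

lemma M1_matching {q : ℕ} (hq : 3 ≤ q) : IsMatchingSet (Gr q) (M1 q) := by
  constructor
  · rintro e ⟨k, rfl⟩
    have hk : k.val ≤ q := by omega
    obtain ⟨hu, hw, hne, -⟩ := uw1_facts hq k.val k.val hk hk
    rw [SimpleGraph.mem_edgeSet]
    exact adj_vert hu hw hne (uw1_rel hq k.val hk)
  · rintro e ⟨k, rfl⟩ f ⟨l, rfl⟩ hne v hv hv'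
    have hkl : k.val ≠ l.val := by
      intro h
      exact hne (by rw [Fin.ext h])
    have hk : k.val ≤ q := by omega
    have hl : l.val ≤ q := by omega
    obtain ⟨hu, hw, -, -⟩ := uw1_facts hq k.val k.val hk hk
    obtain ⟨hu', hw', -, -⟩ := uw1_facts hq l.val l.val hl hl
    have h1 := mem_pair_val hu hw hv
    have h2 := mem_pair_val hu' hw' hv'
    obtain ⟨-, -, hd1, hi⟩ := uw1_facts hq k.val l.val hk hl
    obtain ⟨-, -, hd2, -⟩ := uw1_facts hq l.val k.val hl hk
    obtain ⟨hiu, hiw⟩ := hi hkl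
    omega

/-! ### The vertex cover `T` and the sides `A`, `B` -/

lemma cover_T {q : ℕ} (hq : 3 ≤ q) :
    ∀ e ∈ (Gr q).edgeSet, ∃ v, v ∈ {v : Fin (2*q+2) | 0 ≤ v.val ∧ v.val < 0 + (q+1)} ∧ v ∈ e := by
  intro e he
  obtain ⟨a, b, rfl, htype⟩ := edge_cases he
  rcases htype with h | h | h
  · exact ⟨a, ⟨by omega, by omega⟩, Sym2.mem_mk_left _ _⟩
  · exact ⟨b, ⟨by omega, by omega⟩, Sym2.mem_mk_right _ _⟩
  · exact ⟨b, ⟨by omega, by omega⟩, Sym2.mem_mk_right _ _⟩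

/-! ### matchNum = q + 1 -/

lemma matchNum_eq {q : ℕ} (hq : 3 ≤ q) : matchNum (Gr q) = q + 1 := by
  have hub : ∀ n ∈ {n | ∃ M : Set (Sym2 (Fin (2*q+2))), IsMatchingSet (Gr q) M ∧ M.ncard = n},
      n ≤ q + 1 := by
    rintro n ⟨M, hM, rfl⟩
    calc M.ncard ≤ {v : Fin (2*q+2) | 0 ≤ v.val ∧ v.val < 0 + (q+1)}.ncard :=
          aux_matching_le_cover hM (Set.toFinite _) (cover_T hq)
      _ = q + 1 := ncard_interval q 0 (q+1) (by omega)
  have hmem : q + 1 ∈ {n | ∃ M : Set (Sym2 (Fin (2*q+2))), IsMatchingSet (Gr q) M ∧ M.ncard = n} :=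
    ⟨M1 q, M1_matching hq, M1_card hq⟩
  exact le_antisymm (csSup_le ⟨q+1, hmem⟩ hub) (le_csSup ⟨q+1, hub⟩ hmem)

/-! ### minMatchNum = q -/

lemma minMatch_lb {q : ℕ} (hq : 3 ≤ q) {M : Set (Sym2 (Fin (2*q+2)))}
    (hM : IsMaximalMatchingSet (Gr q) M) : q ≤ M.ncard := by
  -- either all of A or all of B is covered
  have hcov : (∀ v : Fin (2*q+2), v.val < q → ∃ e, e ∈ M ∧ v ∈ e) ∨
      (∀ v : Fin (2*q+2), q ≤ v.val ∧ v.val < 2*q → ∃ e, e ∈ M ∧ v ∈ e) := by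
    by_contra hcon
    push_neg at hcon
    obtain ⟨⟨a, ha, hacov⟩, ⟨b, hb, hbcov⟩⟩ := hcon
    have hab : (Gr q).Adj a b := gr_adj_iff.2 ⟨by omega, Or.inl (Or.inl ⟨ha, hb.1, hb.2⟩)⟩
    have heM : s(a, b) ∉ M := fun h => hacov s(a, b) h (Sym2.mem_mk_left a b)
    refine hM.2 s(a, b) hab heM ⟨?_, ?_⟩
    · rintro e (rfl | he)
      · exact hab
      · exact hM.1.1 e he
    · rintro e (rfl | he) f (rfl | hf) hne v hv hvf
      · exact hne rfl
      · rcases Sym2.mem_iff.1 hv with rfl | rfl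
        · exact hacov f hf hvf
        · exact hbcov f hf hvf
      · rcases Sym2.mem_iff.1 hvf with rfl | rfl
        · exact hacov e he hv
        · exact hbcov e he hv
      · exact hM.1.2 e he f hf hne v hv hvf
  -- each edge contains at most one vertex of A (resp. of B)
  have key : ∀ (S : Set (Fin (2*q+2))),
      (∀ e ∈ (Gr q).edgeSet, ∀ u ∈ S, ∀ w ∈ S, u ∈ e → w ∈ e → u = w) →
      (∀ v ∈ S, ∃ e, e ∈ M ∧ v ∈ e) → S.ncard = q → q ≤ M.ncard := by
    intro S huniq hScov hcard
    have := aux_cover_le_matching (Set.toFinite M) hScov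
      (fun e he u hu w hw hue hwe => huniq e (hM.1.1 e he) u hu w hw hue hwe)
    omega
  rcases hcov with h | h
  · refine key {v | 0 ≤ v.val ∧ v.val < 0 + q} ?_
      (fun v hv => h v (by simp only [Set.mem_setOf_eq] at hv; omega)) ?_
    · intro e he u hu w hw hue hwe
      simp only [Set.mem_setOf_eq] at hu hw
      obtain ⟨c, d, rfl, htype⟩ := edge_cases he
      have hu' : u.val < q := by omega
      have hw' : w.val < q := by omega
      have h1 : u = c ∨ u = d := Sym2.mem_iff.1 hue
      have h2 : w = c ∨ w = d := Sym2.mem_iff.1 hwe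
      rcases h1 with rfl | rfl <;> rcases h2 with rfl | rfl <;>
        first
          | rfl
          | (exfalso; omega)
    · exact ncard_interval q 0 q (by omega)
  · refine key {v | q ≤ v.val ∧ v.val < q + q} ?_
      (fun v hv => h v (by simp only [Set.mem_setOf_eq] at hv; omega)) ?_
    · intro e he u hu w hw hue hwe
      simp only [Set.mem_setOf_eq] at hu hw
      obtain ⟨c, d, rfl, htype⟩ := edge_cases he
      have hu' : q ≤ u.val ∧ u.val < 2*q := by omega
      have hw' : q ≤ w.val ∧ w.val < 2*q := by omega
      have h1 : u = c ∨ u = d := Sym2.mem_iff.1 hue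
      have h2 : w = c ∨ w = d := Sym2.mem_iff.1 hwe
      rcases h1 with rfl | rfl <;> rcases h2 with rfl | rfl <;>
        first
          | rfl
          | (exfalso; omega)
    · exact ncard_interval q q q (by omega)

lemma minMatchNum_eq {q : ℕ} (hq : 3 ≤ q) : minMatchNum (Gr q) = q := by
  have hmem : q ∈ {n | ∃ M : Set (Sym2 (Fin (2*q+2))),
      IsMaximalMatchingSet (Gr q) M ∧ M.ncard = n} :=
    ⟨M0 q, M0_maximal hq, M0_card q⟩
  have hlb : ∀ n ∈ {n | ∃ M : Set (Sym2 (Fin (2*q+2))),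
      IsMaximalMatchingSet (Gr q) M ∧ M.ncard = n}, q ≤ n := by
    rintro n ⟨M, hM, rfl⟩
    exact minMatch_lb hq hM
  exact le_antisymm (Nat.sInf_le hmem) (le_csInf ⟨q, hmem⟩ hlb)

/-! ### indMatchNum = 1 -/

lemma induced_aux {q : ℕ} (hq : 3 ≤ q) {e f : Sym2 (Fin (2*q+2))}
    {u w : Fin (2*q+2)} (hu : u ∈ e) (hw : w ∈ f) (h1 : u.val < q)
    (h2 : q ≤ w.val) (h3 : w.val < 2*q)
    (hind : ∀ g ∈ (Gr q).edgeSet,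
      ¬ ((∃ v : Fin (2*q+2), v ∈ g ∧ v ∈ e) ∧ (∃ v : Fin (2*q+2), v ∈ g ∧ v ∈ f))) :
    False := by
  have hg : s(u, w) ∈ (Gr q).edgeSet := by
    rw [SimpleGraph.mem_edgeSet, gr_adj_iff]
    exact ⟨by omega, Or.inl (Or.inl ⟨h1, h2, h3⟩)⟩
  exact hind s(u, w) hg ⟨⟨u, Sym2.mem_mk_left _ _, hu⟩, ⟨w, Sym2.mem_mk_right _ _, hw⟩⟩

lemma induced_subsingleton {q : ℕ} (hq : 3 ≤ q) {M : Set (Sym2 (Fin (2*q+2)))}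
    (hM : IsInducedMatchingSet (Gr q) M) : M.Subsingleton := by
  intro e he f hf
  by_contra hne
  have hind := hM.2 e he f hf hne
  have hind' : ∀ g ∈ (Gr q).edgeSet,
      ¬ ((∃ v : Fin (2*q+2), v ∈ g ∧ v ∈ f) ∧ (∃ v : Fin (2*q+2), v ∈ g ∧ v ∈ e)) :=
    fun g hg ⟨x, y⟩ => hind g hg ⟨y, x⟩
  obtain ⟨a, b, he', hte⟩ := edge_cases (hM.1.1 e he)
  obtain ⟨c, d, hf', htf⟩ := edge_cases (hM.1.1 f hf)
  have hae : a ∈ e := he' ▸ Sym2.mem_mk_left a b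
  have hbe : b ∈ e := he' ▸ Sym2.mem_mk_right a b
  have hcf : c ∈ f := hf' ▸ Sym2.mem_mk_left c d
  have hdf : d ∈ f := hf' ▸ Sym2.mem_mk_right c d
  rcases hte with h | h | h <;> rcases htf with h' | h' | h'
  · exact induced_aux hq hae hdf (by omega) (by omega) (by omega) hind
  · exact induced_aux hq hdf hbe (by omega) (by omega) (by omega) hind'
  · exact induced_aux hq hae hdf (by omega) (by omega) (by omega) hind
  · exact induced_aux hq hbe hdf (by omega) (by omega) (by omega) hind
  · -- both are the pendant edge at x : e = f
    exact hne (by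
      rw [he', hf']
      have : a = c := Fin.ext (by omega)
      have h2 : b = d := Fin.ext (by omega)
      rw [this, h2])
  · exact induced_aux hq hbe hdf (by omega) (by omega) (by omega) hind
  · exact induced_aux hq hcf hbe (by omega) (by omega) (by omega) hind'
  · exact induced_aux hq hdf hbe (by omega) (by omega) (by omega) hind'
  · exact hne (by
      rw [he', hf']
      have : a = c := Fin.ext (by omega)
      have h2 : b = d := Fin.ext (by omega)
      rw [this, h2])

lemma indMatchNum_eq {q : ℕ} (hq : 3 ≤ q) : indMatchNum (Gr q) = 1 := by
  have hedge : s(vert q 0, vert q q) ∈ (Gr q).edgeSet := by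
    rw [SimpleGraph.mem_edgeSet]
    exact adj_vert (by omega) (by omega) (by omega) (Or.inl ⟨by omega, by omega, by omega⟩)
  have hmem : 1 ∈ {n | ∃ M : Set (Sym2 (Fin (2*q+2))),
      IsInducedMatchingSet (Gr q) M ∧ M.ncard = n} := by
    refine ⟨{s(vert q 0, vert q q)}, ⟨⟨?_, ?_⟩, ?_⟩, Set.ncard_singleton _⟩
    · rintro e rfl
      exact hedge
    · rintro e rfl f rfl hne
      exact absurd rfl hne
    · rintro e rfl f rfl hne
      exact absurd rfl hne
  have hub : ∀ n ∈ {n | ∃ M : Set (Sym2 (Fin (2*q+2))),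
      IsInducedMatchingSet (Gr q) M ∧ M.ncard = n}, n ≤ 1 := by
    rintro n ⟨M, hM, rfl⟩
    rcases (induced_subsingleton hq hM).eq_empty_or_singleton with h | ⟨a, h⟩ <;>
      subst h <;> simp
  exact le_antisymm (csSup_le ⟨1, hmem⟩ hub) (le_csSup ⟨1, hub⟩ hmem)

/-! ### connectivity -/

lemma gr_connected {q : ℕ} (hq : 3 ≤ q) : (Gr q).Connected := by
  rw [SimpleGraph.connected_iff]
  refine ⟨?_, ⟨vert q 0⟩⟩
  have key : ∀ v : Fin (2*q+2), (Gr q).Reachable v (vert q q) := by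
    intro v
    have hq0 : (vert q 0).val = 0 := vert_val (by omega)
    have hqq : (vert q q).val = q := vert_val (by omega)
    have h0q : (Gr q).Adj (vert q 0) (vert q q) :=
      gr_adj_iff.2 ⟨by omega, Or.inl (Or.inl ⟨by omega, by omega, by omega⟩)⟩
    rcases Nat.lt_or_ge v.val q with h | h
    · exact ((gr_adj_iff.2 ⟨by omega, Or.inl (Or.inl ⟨h, by omega, by omega⟩)⟩ :
        (Gr q).Adj v (vert q q))).reachable
    rcases Nat.lt_or_ge v.val (2*q) with h2 | h2
    · have hv0 : (Gr q).Adj v (vert q 0) :=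
        gr_adj_iff.2 ⟨by omega, Or.inr (Or.inl ⟨by omega, by omega, by omega⟩)⟩
      exact hv0.reachable.trans h0q.reachable
    rcases Nat.lt_or_ge v.val (2*q+1) with h3 | h3
    · have hv0 : (Gr q).Adj v (vert q 0) :=
        gr_adj_iff.2 ⟨by omega, Or.inl (Or.inr (Or.inl ⟨by omega, by omega⟩))⟩
      exact hv0.reachable.trans h0q.reachable
    · have : v.val = 2*q+1 := by omega
      exact ((gr_adj_iff.2 ⟨by omega, Or.inl (Or.inr (Or.inr ⟨this, by omega⟩))⟩ :
        (Gr q).Adj v (vert q q))).reachable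
  intro u v
  exact (key u).trans (key v).symm

/-! ### edge count -/

lemma edge_count {q : ℕ} (hq : 3 ≤ q) : (Gr q).edgeSet.ncard ≤ q ^ 2 + 2 := by
  set U : Set (Sym2 (Fin (2*q+2))) :=
    (fun p : Fin q × Fin q => s(vert q p.1.val, vert q (q + p.2.val))) '' Set.univ ∪
      {s(vert q (2*q), vert q 0), s(vert q (2*q+1), vert q q)} with hU
  have hsub : (Gr q).edgeSet ⊆ U := by
    intro e he
    obtain ⟨a, b, rfl, htype⟩ := edge_cases he
    rcases htype with h | h | h
    · left
      refine ⟨(⟨a.val, h.1⟩, ⟨b.val - q, by omega⟩), Set.mem_univ _, ?_⟩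
      show s(vert q a.val, vert q (q + (b.val - q))) = s(a, b)
      have h1 : vert q a.val = a := vert_val_self a
      have h2 : vert q (q + (b.val - q)) = b := by
        apply Fin.ext
        rw [vert_val (by omega)]
        omega
      rw [h1, h2]
    · right
      left
      have h1 : vert q (2*q) = a := Fin.ext (by rw [vert_val (by omega)]; omega)
      have h2 : vert q 0 = b := Fin.ext (by rw [vert_val (by omega)]; omega)
      rw [h1, h2]
    · right
      right
      have h1 : vert q (2*q+1) = a := Fin.ext (by rw [vert_val (by omega)]; omega)
      have h2 : vert q q = b := Fin.ext (by rw [vert_val (by omega)]; omega)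
      rw [h1, h2]
      rfl
  calc (Gr q).edgeSet.ncard ≤ U.ncard := Set.ncard_le_ncard hsub (Set.toFinite _)
    _ ≤ ((fun p : Fin q × Fin q => s(vert q p.1.val, vert q (q + p.2.val))) '' Set.univ).ncard
        + ({s(vert q (2*q), vert q 0), s(vert q (2*q+1), vert q q)} :
            Set (Sym2 (Fin (2*q+2)))).ncard := Set.ncard_union_le _ _
    _ ≤ q ^ 2 + 2 := by
        have h1 : ((fun p : Fin q × Fin q =>
            s(vert q p.1.val, vert q (q + p.2.val))) '' Set.univ).ncard
            ≤ q ^ 2 := by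
          calc _ ≤ (Set.univ : Set (Fin q × Fin q)).ncard := Set.ncard_image_le (Set.toFinite _)
            _ = q ^ 2 := by
              rw [Set.ncard_univ, Nat.card_eq_fintype_card, Fintype.card_prod,
                Fintype.card_fin, sq]
        have h2 : ({s(vert q (2*q), vert q 0), s(vert q (2*q+1), vert q q)} :
            Set (Sym2 (Fin (2*q+2)))).ncard ≤ 2 := by
          calc _ ≤ ({s(vert q (2*q+1), vert q q)} :
              Set (Sym2 (Fin (2*q+2)))).ncard + 1 := Set.ncard_insert_le _ _
            _ = 2 := by rw [Set.ncard_singleton]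
        omega

/-! ### main theorem -/

theorem stmt_11 (q : ℕ) (hq : 3 ≤ q) :
    ∃ (n : ℕ) (G : SimpleGraph (Fin n)), G.Connected ∧
      indMatchNum G = 1 ∧ minMatchNum G = q ∧ matchNum G = q + 1 ∧
      G.edgeSet.ncard ≤ q ^ 2 + 2 := by
  exact ⟨2*q+2, Gr q, gr_connected hq, indMatchNum_eq hq, minMatchNum_eq hq,
    matchNum_eq hq, edge_count hq⟩
end

section
/- For all integers q and r with q + 2 ≤ r ≤ 2q − 2 there exists a finite connected simple graph G with ind-match(G) = 1, min-match(G) = q, match(G) = r, and at most min{f₁(q,r), f₂(q,r)} edges, where f₁(q,r) = r(q − 1) + (r − q + 2 choose 2) and f₂(q,r) = 2(r − q) + (2q choose 2). -/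
variable {V : Type*}

namespace Stmt12

def nn (q s : ℕ) : ℕ := 2*q + 2*s

def base (q s a b : ℕ) : Prop :=
  (a < q ∧ q ≤ b ∧ b < 2*q) ∨
  (2*q ≤ a ∧ a < 2*q + s ∧ q ≤ b ∧ b < 2*q ∧ b - q ≤ a - 2*q) ∨
  (2*q + s ≤ a ∧ a < 2*q + 2*s ∧ b < q ∧ b ≤ a - (2*q + s))

def GG (q s : ℕ) : SimpleGraph (Fin (nn q s)) where
  Adj u v := base q s u.val v.val ∨ base q s v.val u.val
  symm := ⟨fun u v h => h.symm⟩
  loopless := ⟨fun u h => by simp only [base] at h; omega⟩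

lemma adj_iff {q s : ℕ} (u v : Fin (nn q s)) :
    (GG q s).Adj u v ↔ base q s u.val v.val ∨ base q s v.val u.val := Iff.rfl

lemma edge_rep {q s : ℕ} : ∀ e ∈ (GG q s).edgeSet,
    ∃ x y : Fin (nn q s), base q s x.val y.val ∧ e = s(x, y) := by
  intro e
  refine Sym2.inductionOn e ?_
  intro x y he
  rw [SimpleGraph.mem_edgeSet] at he
  rcases he with h | h
  · exact ⟨x, y, h, rfl⟩
  · exact ⟨y, x, h, Sym2.eq_swap⟩

def lsd (q s a : ℕ) : Prop := a < q ∨ (2*q ≤ a ∧ a < 2*q + s)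
def rsd (q s a : ℕ) : Prop := (q ≤ a ∧ a < 2*q) ∨ (2*q + s ≤ a ∧ a < 2*q + 2*s)

lemma base_sides {q s a b : ℕ} (h : base q s a b) :
    (lsd q s a ∧ ¬ lsd q s b) ∧ (rsd q s b ∧ ¬ rsd q s a) ∨
    (lsd q s b ∧ ¬ lsd q s a) ∧ (rsd q s a ∧ ¬ rsd q s b) := by
  simp only [base, lsd, rsd] at *; omega

/-- unique vertex of an edge on a given side -/
lemma side_unique_mem {q s : ℕ} {e : Sym2 (Fin (nn q s))} (he : e ∈ (GG q s).edgeSet)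
    (P : ℕ → Prop) (hP : ∀ a b, base q s a b → (P a ↔ ¬ P b))
    {u v : Fin (nn q s)} (hu : u ∈ e) (hv : v ∈ e)
    (hPu : P u.val) (hPv : P v.val) : u = v := by
  obtain ⟨x, y, hb, rfl⟩ := edge_rep e he
  have hxy := hP _ _ hb
  rw [Sym2.mem_iff] at hu hv
  rcases hu with rfl | rfl <;> rcases hv with rfl | rfl
  · rfl
  · exact absurd (hxy.mp hPu) (not_not_intro hPv)
  · exact absurd (hxy.mp hPv) (not_not_intro hPu)
  · rfl

lemma side_exists_mem {q s : ℕ} {e : Sym2 (Fin (nn q s))} (he : e ∈ (GG q s).edgeSet)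
    (P : ℕ → Prop) (hP : ∀ a b, base q s a b → (P a ↔ ¬ P b)) :
    ∃ v : Fin (nn q s), v ∈ e ∧ P v.val := by
  obtain ⟨x, y, hb, rfl⟩ := edge_rep e he
  have hxy := hP _ _ hb
  by_cases hx : P x.val
  · exact ⟨x, by simp, hx⟩
  · exact ⟨y, by simp, by tauto⟩

lemma lsd_iff {q s : ℕ} : ∀ a b, base q s a b → (lsd q s a ↔ ¬ lsd q s b) := by
  intro a b h; simp only [base, lsd] at *; omega

lemma rsd_iff {q s : ℕ} : ∀ a b, base q s a b → (rsd q s a ↔ ¬ rsd q s b) := by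
  intro a b h; simp only [base, rsd] at *; omega

open Classical in
noncomputable def pk (q s : ℕ) (P : ℕ → Prop) (e : Sym2 (Fin (nn q s))) : ℕ :=
  if h : ∃ v : Fin (nn q s), v ∈ e ∧ P v.val then h.choose.val else 0

lemma pk_spec {q s : ℕ} {P : ℕ → Prop} {e : Sym2 (Fin (nn q s))}
    (hex : ∃ v : Fin (nn q s), v ∈ e ∧ P v.val) :
    ∃ v : Fin (nn q s), v ∈ e ∧ P v.val ∧ v.val = pk q s P e := by
  unfold pk
  rw [dif_pos hex]
  exact ⟨hex.choose, hex.choose_spec.1, hex.choose_spec.2, rfl⟩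

lemma pk_eq {q s : ℕ} {P : ℕ → Prop} (hP : ∀ a b, base q s a b → (P a ↔ ¬ P b))
    {e : Sym2 (Fin (nn q s))} (he : e ∈ (GG q s).edgeSet)
    {v : Fin (nn q s)} (hv : v ∈ e) (hPv : P v.val) : pk q s P e = v.val := by
  obtain ⟨w, hw, hPw, hwval⟩ := pk_spec ⟨v, hv, hPv⟩
  rw [← hwval]
  exact congrArg Fin.val (side_unique_mem he P hP hw hv hPw hPv)


lemma lsd_set_eq (q s : ℕ) :
    {a : ℕ | lsd q s a} = ↑(Finset.range q ∪ Finset.Ico (2*q) (2*q+s)) := by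
  ext a
  simp only [Set.mem_setOf_eq, Finset.coe_union, Set.mem_union, Finset.coe_range,
    Finset.coe_Ico, Set.mem_Iio, Set.mem_Ico, lsd]

lemma lsd_set_ncard (q s : ℕ) : ({a : ℕ | lsd q s a}).ncard = q + s := by
  rw [lsd_set_eq, Set.ncard_coe_finset, Finset.card_union_of_disjoint]
  · rw [Finset.card_range, Nat.card_Ico]; omega
  · simp only [Finset.disjoint_left, Finset.mem_range, Finset.mem_Ico]
    omega

lemma lsd_set_finite (q s : ℕ) : ({a : ℕ | lsd q s a}).Finite := by
  rw [lsd_set_eq]; exact (Finset.range q ∪ Finset.Ico (2*q) (2*q+s)).finite_toSet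

lemma matching_inj {q s : ℕ} {M : Set (Sym2 (Fin (nn q s)))}
    (hM : IsMatchingSet (GG q s) M) : Set.InjOn (pk q s (lsd q s)) M := by
  intro e heM f hfM hef
  by_contra hne
  obtain ⟨ve, hve, hPe, hvale⟩ := pk_spec (side_exists_mem (hM.1 e heM) _ lsd_iff)
  obtain ⟨vf, hvf, hPf, hvalf⟩ := pk_spec (side_exists_mem (hM.1 f hfM) _ lsd_iff)
  have hvv : ve = vf := Fin.ext (by rw [hvale, hvalf, hef])
  exact hM.2 e heM f hfM hne ve hve (hvv ▸ hvf)

lemma matching_card_le {q s : ℕ} {M : Set (Sym2 (Fin (nn q s)))}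
    (hM : IsMatchingSet (GG q s) M) : M.ncard ≤ q + s := by
  have h1 : (pk q s (lsd q s) '' M).ncard = M.ncard := Set.ncard_image_of_injOn (matching_inj hM)
  have h2 : pk q s (lsd q s) '' M ⊆ {a : ℕ | lsd q s a} := by
    rintro a ⟨e, heM, rfl⟩
    obtain ⟨v, hv, hPv, hval⟩ := pk_spec (side_exists_mem (hM.1 e heM) _ lsd_iff)
    rw [← hval]; exact hPv
  calc M.ncard = (pk q s (lsd q s) '' M).ncard := h1.symm
    _ ≤ ({a : ℕ | lsd q s a}).ncard := Set.ncard_le_ncard h2 (lsd_set_finite q s)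
    _ = q + s := lsd_set_ncard q s


def fv (q s : ℕ) (h : 0 < nn q s) (a : ℕ) : Fin (nn q s) := ⟨a % nn q s, Nat.mod_lt a h⟩

lemma fv_val {q s : ℕ} (h : 0 < nn q s) {a : ℕ} (ha : a < nn q s) :
    (fv q s h a).val = a := Nat.mod_eq_of_lt ha

def pA (q s j : ℕ) : ℕ := if j < s then 2*q + j else if j < q then j else 2*q + s + (j - q)
def pB (q s j : ℕ) : ℕ := if j < s then q + j else if j < q then q + j else j - q

lemma pA_lt {q s j : ℕ} (hsq : s + 2 ≤ q) (hj : j < q + s) : pA q s j < nn q s := by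
  simp only [pA, nn]; split_ifs <;> omega

lemma pB_lt {q s j : ℕ} (hsq : s + 2 ≤ q) (hj : j < q + s) : pB q s j < nn q s := by
  simp only [pB, nn]; split_ifs <;> omega

lemma pAB_base {q s j : ℕ} (hsq : s + 2 ≤ q) (hj : j < q + s) :
    base q s (pA q s j) (pB q s j) := by
  simp only [pA, pB, base]; split_ifs <;> omega

lemma pAB_disj {q s : ℕ} (hsq : s + 2 ≤ q) {j k : ℕ} (hj : j < q + s) (hk : k < q + s)
    (hjk : j ≠ k) : ∀ a : ℕ, (a = pA q s j ∨ a = pB q s j) → (a = pA q s k ∨ a = pB q s k) → False := by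
  intro a h1 h2
  simp only [pA, pB] at h1 h2
  split_ifs at h1 h2 <;> omega

noncomputable def pedge (q s : ℕ) (h : 0 < nn q s) (j : ℕ) : Sym2 (Fin (nn q s)) :=
  s(fv q s h (pA q s j), fv q s h (pB q s j))

lemma pedge_mem_vals {q s : ℕ} (hsq : s + 2 ≤ q) (h : 0 < nn q s) {j : ℕ} (hj : j < q + s)
    {v : Fin (nn q s)} (hv : v ∈ pedge q s h j) : v.val = pA q s j ∨ v.val = pB q s j := by
  rw [pedge, Sym2.mem_iff] at hv
  rcases hv with rfl | rfl
  · left; exact fv_val h (pA_lt hsq hj)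
  · right; exact fv_val h (pB_lt hsq hj)

lemma pedge_edge {q s : ℕ} (hsq : s + 2 ≤ q) (h : 0 < nn q s) {j : ℕ} (hj : j < q + s) :
    pedge q s h j ∈ (GG q s).edgeSet := by
  rw [pedge, SimpleGraph.mem_edgeSet, adj_iff]
  left
  rw [fv_val h (pA_lt hsq hj), fv_val h (pB_lt hsq hj)]
  exact pAB_base hsq hj

def Mstar (q s : ℕ) (h : 0 < nn q s) : Set (Sym2 (Fin (nn q s))) :=
  pedge q s h '' (Set.Iio (q + s))

lemma Mstar_matching {q s : ℕ} (hsq : s + 2 ≤ q) (h : 0 < nn q s) :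
    IsMatchingSet (GG q s) (Mstar q s h) := by
  constructor
  · rintro e ⟨j, hj, rfl⟩
    exact pedge_edge hsq h hj
  · rintro e ⟨j, hj, rfl⟩ f ⟨k, hk, rfl⟩ hef v hv hvf
    have hjk : j ≠ k := fun hh => hef (by rw [hh])
    exact pAB_disj hsq hj hk hjk v.val (pedge_mem_vals hsq h hj hv) (pedge_mem_vals hsq h hk hvf)

lemma Mstar_ncard {q s : ℕ} (hsq : s + 2 ≤ q) (h : 0 < nn q s) :
    (Mstar q s h).ncard = q + s := by
  have hinj : Set.InjOn (pedge q s h) (Set.Iio (q + s)) := by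
    intro j hj k hk hjk
    by_contra hne
    have hv : fv q s h (pA q s j) ∈ pedge q s h j := by rw [pedge]; exact Sym2.mem_mk_left _ _
    have hv2 : fv q s h (pA q s j) ∈ pedge q s h k := by rw [hjk] at hv; exact hv
    exact pAB_disj hsq hj hk hne _ (pedge_mem_vals hsq h hj hv) (pedge_mem_vals hsq h hk hv2)
  rw [Mstar, Set.ncard_image_of_injOn hinj, ← Finset.coe_range, Set.ncard_coe_finset,
    Finset.card_range]

lemma matchNum_eq {q s : ℕ} (hsq : s + 2 ≤ q) : matchNum (GG q s) = q + s := by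
  have h : 0 < nn q s := by simp only [nn]; omega
  apply le_antisymm
  · apply csSup_le
    · exact ⟨q + s, Mstar q s h, Mstar_matching hsq h, Mstar_ncard hsq h⟩
    · rintro k ⟨M, hM, rfl⟩
      exact matching_card_le hM
  · apply le_csSup
    · exact ⟨q + s, by rintro k ⟨M, hM, rfl⟩; exact matching_card_le hM⟩
    · exact ⟨Mstar q s h, Mstar_matching hsq h, Mstar_ncard hsq h⟩


noncomputable def qedge (q s : ℕ) (h : 0 < nn q s) (j : ℕ) : Sym2 (Fin (nn q s)) :=
  s(fv q s h j, fv q s h (q + j))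

def M0 (q s : ℕ) (h : 0 < nn q s) : Set (Sym2 (Fin (nn q s))) :=
  qedge q s h '' (Set.Iio q)

lemma qedge_mem_vals {q s : ℕ} (h : 0 < nn q s) {j : ℕ} (hj : j < q)
    {v : Fin (nn q s)} (hv : v ∈ qedge q s h j) : v.val = j ∨ v.val = q + j := by
  rw [qedge, Sym2.mem_iff] at hv
  have h1 : j < nn q s := by simp only [nn]; omega
  have h2 : q + j < nn q s := by simp only [nn]; omega
  rcases hv with rfl | rfl
  · left; exact fv_val h h1
  · right; exact fv_val h h2

lemma qedge_edge {q s : ℕ} (h : 0 < nn q s) {j : ℕ} (hj : j < q) :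
    qedge q s h j ∈ (GG q s).edgeSet := by
  rw [qedge, SimpleGraph.mem_edgeSet, adj_iff]
  left
  rw [fv_val h (by simp only [nn]; omega), fv_val h (by simp only [nn]; omega)]
  simp only [base]; omega

lemma M0_matching {q s : ℕ} (h : 0 < nn q s) : IsMatchingSet (GG q s) (M0 q s h) := by
  constructor
  · rintro e ⟨j, hj, rfl⟩
    exact qedge_edge h hj
  · rintro e ⟨j, hj, rfl⟩ f ⟨k, hk, rfl⟩ hef v hv hvf
    have hjk : j ≠ k := fun hh => hef (by rw [hh])
    have h1 := qedge_mem_vals h hj hv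
    have h2 := qedge_mem_vals h hk hvf
    have hj' : j < q := hj
    have hk' : k < q := hk
    omega

lemma M0_ncard {q s : ℕ} (h : 0 < nn q s) : (M0 q s h).ncard = q := by
  have hinj : Set.InjOn (qedge q s h) (Set.Iio q) := by
    intro j hj k hk hjk
    by_contra hne
    have hv : fv q s h j ∈ qedge q s h j := by rw [qedge]; exact Sym2.mem_mk_left _ _
    have hv2 : fv q s h j ∈ qedge q s h k := by rw [hjk] at hv; exact hv
    have h1 := qedge_mem_vals h hj hv
    have h2 := qedge_mem_vals h hk hv2
    have hj' : j < q := hj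
    have hk' : k < q := hk
    omega
  rw [M0, Set.ncard_image_of_injOn hinj, ← Finset.coe_range, Set.ncard_coe_finset,
    Finset.card_range]

lemma M0_maximal {q s : ℕ} (h : 0 < nn q s) : IsMaximalMatchingSet (GG q s) (M0 q s h) := by
  refine ⟨M0_matching h, ?_⟩
  intro e he hem hmat
  obtain ⟨x, y, hb, rfl⟩ := edge_rep e he
  -- find core endpoint c with c.val < 2*q
  have hcore : ∃ c : Fin (nn q s), c ∈ s(x, y) ∧ c.val < 2*q := by
    rcases hb with h1 | h2 | h3
    · exact ⟨x, by simp, by omega⟩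
    · exact ⟨y, by simp, by omega⟩
    · exact ⟨y, by simp, by omega⟩
  obtain ⟨c, hc, hclt⟩ := hcore
  have hcj : ∃ j0 < q, c ∈ qedge q s h j0 := by
    rcases Nat.lt_or_ge c.val q with hcq | hcq
    · refine ⟨c.val, hcq, ?_⟩
      rw [qedge, Sym2.mem_iff]; left; apply Fin.ext
      rw [fv_val h (show c.val < nn q s from c.isLt)]
    · refine ⟨c.val - q, by omega, ?_⟩
      rw [qedge, Sym2.mem_iff]; right; apply Fin.ext
      rw [fv_val h (show q + (c.val - q) < nn q s from by simp only [nn]; omega)]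
      omega
  obtain ⟨j0, hj0q, hcj⟩ := hcj
  have hqm : qedge q s h j0 ∈ M0 q s h := ⟨j0, hj0q, rfl⟩
  have hne : s(x, y) ≠ qedge q s h j0 := fun hh => hem (hh ▸ hqm)
  exact hmat.2 _ (Set.mem_insert _ _) _ (Set.mem_insert_of_mem _ hqm) hne c hc hcj

lemma maximal_ge {q s : ℕ} (hsq : s + 2 ≤ q) {M : Set (Sym2 (Fin (nn q s)))}
    (hM : IsMaximalMatchingSet (GG q s) M) : q ≤ M.ncard := by
  by_contra hlt
  push_neg at hlt
  -- uncovered L-core vertex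
  have hLun : ∃ a, a < q ∧ ∀ e ∈ M, ∀ v : Fin (nn q s), v ∈ e → v.val ≠ a := by
    by_contra hc
    push_neg at hc
    have hsub : Set.Iio q ⊆ pk q s (lsd q s) '' M := by
      intro a ha
      obtain ⟨e, heM, v, hv, hva⟩ := hc a ha
      refine ⟨e, heM, ?_⟩
      have : lsd q s v.val := by rw [hva]; left; exact ha
      rw [pk_eq lsd_iff (hM.1.1 e heM) hv this, hva]
    have h1 : (Set.Iio q : Set ℕ).ncard ≤ (pk q s (lsd q s) '' M).ncard :=
      Set.ncard_le_ncard hsub ((M.toFinite).image _)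
    have h2 : (pk q s (lsd q s) '' M).ncard ≤ M.ncard := Set.ncard_image_le M.toFinite
    rw [← Finset.coe_range, Set.ncard_coe_finset, Finset.card_range] at h1
    omega
  have hRun : ∃ b, q ≤ b ∧ b < 2*q ∧ ∀ e ∈ M, ∀ v : Fin (nn q s), v ∈ e → v.val ≠ b := by
    by_contra hc
    push_neg at hc
    have hsub : Set.Ico q (2*q) ⊆ pk q s (rsd q s) '' M := by
      intro b hb
      rw [Set.mem_Ico] at hb
      obtain ⟨e, heM, v, hv, hvb⟩ := hc b hb.1 hb.2
      refine ⟨e, heM, ?_⟩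
      have : rsd q s v.val := by rw [hvb]; left; exact hb
      rw [pk_eq rsd_iff (hM.1.1 e heM) hv this, hvb]
    have h1 : (Set.Ico q (2*q) : Set ℕ).ncard ≤ (pk q s (rsd q s) '' M).ncard :=
      Set.ncard_le_ncard hsub ((M.toFinite).image _)
    have h2 : (pk q s (rsd q s) '' M).ncard ≤ M.ncard := Set.ncard_image_le M.toFinite
    rw [← Finset.coe_Ico, Set.ncard_coe_finset, Nat.card_Ico] at h1
    omega
  obtain ⟨a, haq, haun⟩ := hLun
  obtain ⟨b, hbq, hbq2, hbun⟩ := hRun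
  have hu : a < nn q s := by simp only [nn]; omega
  have hw : b < nn q s := by simp only [nn]; omega
  set u : Fin (nn q s) := ⟨a, hu⟩
  set w : Fin (nn q s) := ⟨b, hw⟩
  have hadj : (GG q s).Adj u w := by
    rw [adj_iff]; left; simp only [base, u, w, Fin.val_mk]; omega
  have hmem : s(u, w) ∈ (GG q s).edgeSet := hadj
  have hnotM : s(u, w) ∉ M := fun hin => haun _ hin u (Sym2.mem_mk_left _ _) rfl
  apply hM.2 _ hmem hnotM
  constructor
  · intro e he
    rcases Set.mem_insert_iff.mp he with rfl | heM
    · exact hmem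
    · exact hM.1.1 e heM
  · intro e he f hf hef v hv
    rcases Set.mem_insert_iff.mp he with rfl | heM <;>
      rcases Set.mem_insert_iff.mp hf with rfl | hfM
    · exact absurd rfl hef
    · intro hvf
      rcases Sym2.mem_iff.mp hv with rfl | rfl
      · exact haun f hfM _ hvf rfl
      · exact hbun f hfM _ hvf rfl
    · intro hvf
      rcases Sym2.mem_iff.mp hvf with rfl | rfl
      · exact haun e heM _ hv rfl
      · exact hbun e heM _ hv rfl
    · exact hM.1.2 e heM f hfM hef v hv

lemma minMatchNum_eq {q s : ℕ} (hsq : s + 2 ≤ q) : minMatchNum (GG q s) = q := by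
  have h : 0 < nn q s := by simp only [nn]; omega
  apply le_antisymm
  · exact Nat.sInf_le ⟨M0 q s h, M0_maximal h, M0_ncard h⟩
  · apply le_csInf
    · exact ⟨q, M0 q s h, M0_maximal h, M0_ncard h⟩
    · rintro k ⟨M, hM, rfl⟩
      exact maximal_ge hsq hM


/-- key 2K2-freeness: any two disjoint edges are met by a common edge -/
lemma meet_edges {q s : ℕ} {x y u v : Fin (nn q s)}
    (hb1 : base q s x.val y.val) (hb2 : base q s u.val v.val)
    (hdisj : ∀ w : Fin (nn q s), w ∈ s(x, y) → w ∉ s(u, v)) :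
    ∃ g ∈ (GG q s).edgeSet, (∃ w : Fin (nn q s), w ∈ g ∧ w ∈ s(x, y)) ∧
      (∃ w : Fin (nn q s), w ∈ g ∧ w ∈ s(u, v)) := by
  have hxu : x ≠ u := fun hh => hdisj x (Sym2.mem_mk_left _ _) (hh ▸ Sym2.mem_mk_left _ _)
  have hxuv : x.val ≠ u.val := fun hh => hxu (Fin.ext hh)
  have mk1 : ∀ a b : Fin (nn q s), base q s a.val b.val →
      s(a, b) ∈ (GG q s).edgeSet := fun a b hb => Or.inl hb
  rcases hb1 with h1 | h1 | h1 <;> rcases hb2 with h2 | h2 | h2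
  · -- LR, LR : x -- v
    exact ⟨s(x, v), mk1 x v (by simp only [base]; omega),
      ⟨x, Sym2.mem_mk_left _ _, Sym2.mem_mk_left _ _⟩,
      ⟨v, Sym2.mem_mk_right _ _, Sym2.mem_mk_right _ _⟩⟩
  · -- LR, XR : x -- v
    exact ⟨s(x, v), mk1 x v (by simp only [base]; omega),
      ⟨x, Sym2.mem_mk_left _ _, Sym2.mem_mk_left _ _⟩,
      ⟨v, Sym2.mem_mk_right _ _, Sym2.mem_mk_right _ _⟩⟩
  · -- LR, YL : v -- y
    exact ⟨s(v, y), mk1 v y (by simp only [base]; omega),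
      ⟨y, Sym2.mem_mk_right _ _, Sym2.mem_mk_right _ _⟩,
      ⟨v, Sym2.mem_mk_left _ _, Sym2.mem_mk_right _ _⟩⟩
  · -- XR, LR : u -- y
    exact ⟨s(u, y), mk1 u y (by simp only [base]; omega),
      ⟨y, Sym2.mem_mk_right _ _, Sym2.mem_mk_right _ _⟩,
      ⟨u, Sym2.mem_mk_left _ _, Sym2.mem_mk_left _ _⟩⟩
  · -- XR, XR
    rcases Nat.lt_or_ge x.val u.val with hlt | hge
    · exact ⟨s(u, y), mk1 u y (by simp only [base]; omega),
        ⟨y, Sym2.mem_mk_right _ _, Sym2.mem_mk_right _ _⟩,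
        ⟨u, Sym2.mem_mk_left _ _, Sym2.mem_mk_left _ _⟩⟩
    · exact ⟨s(x, v), mk1 x v (by simp only [base]; omega),
        ⟨x, Sym2.mem_mk_left _ _, Sym2.mem_mk_left _ _⟩,
        ⟨v, Sym2.mem_mk_right _ _, Sym2.mem_mk_right _ _⟩⟩
  · -- XR, YL : v -- y
    exact ⟨s(v, y), mk1 v y (by simp only [base]; omega),
      ⟨y, Sym2.mem_mk_right _ _, Sym2.mem_mk_right _ _⟩,
      ⟨v, Sym2.mem_mk_left _ _, Sym2.mem_mk_right _ _⟩⟩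
  · -- YL, LR : y -- v
    exact ⟨s(y, v), mk1 y v (by simp only [base]; omega),
      ⟨y, Sym2.mem_mk_left _ _, Sym2.mem_mk_right _ _⟩,
      ⟨v, Sym2.mem_mk_right _ _, Sym2.mem_mk_right _ _⟩⟩
  · -- YL, XR : y -- v
    exact ⟨s(y, v), mk1 y v (by simp only [base]; omega),
      ⟨y, Sym2.mem_mk_left _ _, Sym2.mem_mk_right _ _⟩,
      ⟨v, Sym2.mem_mk_right _ _, Sym2.mem_mk_right _ _⟩⟩
  · -- YL, YL
    rcases Nat.lt_or_ge x.val u.val with hlt | hge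
    · exact ⟨s(u, y), mk1 u y (by simp only [base]; omega),
        ⟨y, Sym2.mem_mk_right _ _, Sym2.mem_mk_right _ _⟩,
        ⟨u, Sym2.mem_mk_left _ _, Sym2.mem_mk_left _ _⟩⟩
    · exact ⟨s(x, v), mk1 x v (by simp only [base]; omega),
        ⟨x, Sym2.mem_mk_left _ _, Sym2.mem_mk_left _ _⟩,
        ⟨v, Sym2.mem_mk_right _ _, Sym2.mem_mk_right _ _⟩⟩

lemma induced_card_le_one {q s : ℕ} {M : Set (Sym2 (Fin (nn q s)))}
    (hM : IsInducedMatchingSet (GG q s) M) : M.ncard ≤ 1 := by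
  by_contra hgt
  push_neg at hgt
  obtain ⟨e, f, heM, hfM, hef⟩ := (Set.one_lt_ncard_iff M.toFinite).mp hgt
  obtain ⟨x, y, hb1, rfl⟩ := edge_rep e (hM.1.1 e heM)
  obtain ⟨u, v, hb2, rfl⟩ := edge_rep f (hM.1.1 f hfM)
  have hdisj : ∀ w : Fin (nn q s), w ∈ s(x, y) → w ∉ s(u, v) :=
    fun w hw => hM.1.2 _ heM _ hfM hef w hw
  obtain ⟨g, hg, hw1, hw2⟩ := meet_edges hb1 hb2 hdisj
  exact hM.2 _ heM _ hfM hef g hg ⟨hw1, hw2⟩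

lemma indMatchNum_eq {q s : ℕ} (hsq : s + 2 ≤ q) : indMatchNum (GG q s) = 1 := by
  have h : 0 < nn q s := by simp only [nn]; omega
  have hedge : qedge q s h 0 ∈ (GG q s).edgeSet := qedge_edge h (by omega)
  have hsing : IsInducedMatchingSet (GG q s) {qedge q s h 0} := by
    refine ⟨⟨?_, ?_⟩, ?_⟩
    · rintro e rfl
      exact hedge
    · rintro e rfl f rfl hef
      exact absurd rfl hef
    · rintro e rfl f rfl hef
      exact absurd rfl hef
  apply le_antisymm
  · apply csSup_le
    · exact ⟨1, {qedge q s h 0}, hsing, Set.ncard_singleton _⟩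
    · rintro k ⟨M, hM, rfl⟩
      exact induced_card_le_one hM
  · apply le_csSup
    · exact ⟨1, by rintro k ⟨M, hM, rfl⟩; exact induced_card_le_one hM⟩
    · exact ⟨{qedge q s h 0}, hsing, Set.ncard_singleton _⟩

lemma connected' {q s : ℕ} (hsq : s + 2 ≤ q) : (GG q s).Connected := by
  have h : 0 < nn q s := by simp only [nn]; omega
  have hq : q < nn q s := by simp only [nn]; omega
  set l0 : Fin (nn q s) := ⟨0, h⟩
  set r0 : Fin (nn q s) := ⟨q, hq⟩
  have hl0r0 : (GG q s).Adj r0 l0 := by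
    rw [adj_iff]; right; simp only [base, l0, r0, Fin.val_mk]; omega
  have key : ∀ w : Fin (nn q s), (GG q s).Reachable w l0 := by
    intro w
    have hw := w.isLt
    simp only [nn] at hw
    rcases Nat.lt_or_ge w.val q with h1 | h1
    · -- L : w -- r0 -- l0
      rcases eq_or_ne w l0 with rfl | hne
      · exact SimpleGraph.Reachable.refl _
      · have ha : (GG q s).Adj w r0 := by rw [adj_iff]; left; simp only [base, l0, r0, Fin.val_mk]; omega
        exact ha.reachable.trans hl0r0.reachable
    rcases Nat.lt_or_ge w.val (2*q) with h2 | h2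
    · -- R : w -- l0
      have ha : (GG q s).Adj w l0 := by rw [adj_iff]; right; simp only [base, l0, r0, Fin.val_mk]; omega
      exact ha.reachable
    rcases Nat.lt_or_ge w.val (2*q+s) with h3 | h3
    · -- X : w -- r0 -- l0
      have ha : (GG q s).Adj w r0 := by rw [adj_iff]; left; simp only [base, l0, r0, Fin.val_mk]; omega
      exact ha.reachable.trans hl0r0.reachable
    · -- Y : w -- l0
      have ha : (GG q s).Adj w l0 := by rw [adj_iff]; left; simp only [base, l0, r0, Fin.val_mk]; omega
      exact ha.reachable
  rw [SimpleGraph.connected_iff]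
  exact ⟨fun u v => (key u).trans (key v).symm, ⟨l0⟩⟩


def enc (q s a b : ℕ) : ℕ × ℕ :=
  if a < q then (a, b - q)
  else if a < 2*q + s then (q + (a - 2*q), b - q)
  else (q + (s - 1 - (a - (2*q + s))), s - (a - (2*q + s)) + b)

open Classical in
noncomputable def Phi (q s : ℕ) (e : Sym2 (Fin (nn q s))) : ℕ × ℕ :=
  if h : ∃ p : Fin (nn q s) × Fin (nn q s), base q s p.1.val p.2.val ∧ e = s(p.1, p.2) then
    enc q s h.choose.1.val h.choose.2.val
  else (0, 0)

def TT (q s : ℕ) : Finset (ℕ × ℕ) :=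
  (Finset.range q ×ˢ Finset.range q) ∪
    ((Finset.range s).image (fun i => q + i) ×ˢ Finset.range (s+1))

lemma TT_card (q s : ℕ) : (TT q s).card ≤ q*q + s*(s+1) := by
  calc (TT q s).card ≤ (Finset.range q ×ˢ Finset.range q).card +
      ((Finset.range s).image (fun i => q + i) ×ˢ Finset.range (s+1)).card :=
        Finset.card_union_le _ _
    _ ≤ q*q + s*(s+1) := by
        simp only [Finset.card_product, Finset.card_range]
        exact Nat.add_le_add_left
          (Nat.mul_le_mul_right _ (le_trans Finset.card_image_le (Finset.card_range s).le)) _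

lemma Phi_spec {q s : ℕ} {e : Sym2 (Fin (nn q s))} (he : e ∈ (GG q s).edgeSet) :
    ∃ x y : Fin (nn q s), base q s x.val y.val ∧ e = s(x, y) ∧
      Phi q s e = enc q s x.val y.val := by
  obtain ⟨x, y, hb, rfl⟩ := edge_rep e he
  have hex : ∃ p : Fin (nn q s) × Fin (nn q s), base q s p.1.val p.2.val ∧
      s(x, y) = s(p.1, p.2) := ⟨(x, y), hb, rfl⟩
  refine ⟨hex.choose.1, hex.choose.2, hex.choose_spec.1, hex.choose_spec.2, ?_⟩
  rw [Phi, dif_pos hex]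

lemma Phi_mem {q s : ℕ} (hsq : s + 2 ≤ q) {e : Sym2 (Fin (nn q s))}
    (he : e ∈ (GG q s).edgeSet) : Phi q s e ∈ (TT q s : Set (ℕ × ℕ)) := by
  obtain ⟨x, y, hb, -, henc⟩ := Phi_spec he
  rw [henc]
  simp only [TT, enc, Finset.coe_union, Set.mem_union, Finset.coe_product, Finset.coe_image,
    Finset.coe_range, Set.mem_prod, Set.mem_Iio, Set.mem_image]
  rcases hb with h1 | h1 | h1
  · rw [if_pos (by omega)]
    left; exact ⟨by omega, by omega⟩
  · rw [if_neg (by omega), if_pos (by omega)]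
    right
    exact ⟨⟨x.val - 2*q, by omega, by omega⟩, by omega⟩
  · rw [if_neg (by omega), if_neg (by omega)]
    right
    exact ⟨⟨s - 1 - (x.val - (2*q + s)), by omega, by omega⟩, by omega⟩

lemma Phi_injOn {q s : ℕ} (hsq : s + 2 ≤ q) :
    Set.InjOn (Phi q s) (GG q s).edgeSet := by
  intro e he f hf hef
  obtain ⟨x, y, hb1, he1, henc1⟩ := Phi_spec he
  obtain ⟨u, v, hb2, hf1, henc2⟩ := Phi_spec hf
  rw [henc1, henc2] at hef
  have hvals : x.val = u.val ∧ y.val = v.val := by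
    simp only [enc] at hef
    simp only [base] at hb1 hb2
    split_ifs at hef <;>
      (rw [Prod.mk.injEq] at hef; omega)
  rw [he1, hf1, Fin.ext hvals.1, Fin.ext hvals.2]

lemma edge_count {q s : ℕ} (hsq : s + 2 ≤ q) :
    (GG q s).edgeSet.ncard ≤ q*q + s*(s+1) := by
  calc (GG q s).edgeSet.ncard = (Phi q s '' (GG q s).edgeSet).ncard :=
      (Set.ncard_image_of_injOn (Phi_injOn hsq)).symm
    _ ≤ (TT q s : Set (ℕ × ℕ)).ncard := by
        apply Set.ncard_le_ncard
        · rintro p ⟨e, he, rfl⟩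
          exact Phi_mem hsq he
        · exact (TT q s).finite_toSet
    _ = (TT q s).card := Set.ncard_coe_finset _
    _ ≤ q*q + s*(s+1) := TT_card q s


lemma arith {q s : ℕ} (hs2 : 2 ≤ s) (hsq : s + 2 ≤ q) :
    q*q + s*(s+1) ≤
      min ((q+s)*(q-1) + Nat.choose (s+2) 2) (2*s + Nat.choose (2*q) 2) := by
  have h2c : 2 * Nat.choose (s+2) 2 = (s+2)*(s+1) := by
    rw [Nat.choose_two_right]
    have e1 : (s+2)*(s+2-1) = (s+2)*(s+1) := by
      congr 1
    rw [e1]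
    have hdvd : 2 ∣ (s+2)*(s+1) := by
      have hev : Even ((s+1)*(s+2)) := Nat.even_mul_succ_self (s+1)
      rw [mul_comm] at hev
      exact hev.two_dvd
    rw [Nat.mul_div_cancel' hdvd]
  have h2d : 2 * Nat.choose (2*q) 2 = 2*q*(2*q-1) := by
    rw [Nat.choose_two_right]
    have hdvd : 2 ∣ 2*q*(2*q-1) := Dvd.dvd.mul_right ⟨q, rfl⟩ _
    rw [Nat.mul_div_cancel' hdvd]
  obtain ⟨t, rfl⟩ : ∃ t, q = s + 2 + t := ⟨q - s - 2, by omega⟩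
  obtain ⟨u, rfl⟩ : ∃ u, s = u + 2 := ⟨s - 2, by omega⟩
  rw [show u + 2 + 2 + t - 1 = u + 3 + t from by omega] at *
  rw [show 2 * (u + 2 + 2 + t) - 1 = 2*u + 7 + 2*t from by omega] at *
  apply le_min
  · nlinarith [h2c]
  · nlinarith [h2d]

end Stmt12

theorem stmt_12 (q r : ℕ) (hqr : q + 2 ≤ r) (hr2q : r ≤ 2 * q - 2) :
    ∃ (n : ℕ) (G : SimpleGraph (Fin n)), G.Connected ∧
      indMatchNum G = 1 ∧ minMatchNum G = q ∧ matchNum G = r ∧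
      G.edgeSet.ncard ≤
        min (r * (q - 1) + Nat.choose (r - q + 2) 2)
          (2 * (r - q) + Nat.choose (2 * q) 2) := by
  obtain ⟨s, rfl⟩ : ∃ s, r = q + s := ⟨r - q, by omega⟩
  have hs2 : 2 ≤ s := by omega
  have hsq : s + 2 ≤ q := by omega
  refine ⟨Stmt12.nn q s, Stmt12.GG q s, Stmt12.connected' hsq, Stmt12.indMatchNum_eq hsq,
    Stmt12.minMatchNum_eq hsq, Stmt12.matchNum_eq hsq, ?_⟩
  rw [show q + s - q = s from by omega]
  calc (Stmt12.GG q s).edgeSet.ncard ≤ q*q + s*(s+1) := Stmt12.edge_count hsq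
    _ ≤ min ((q+s)*(q-1) + Nat.choose (s+2) 2) (2*s + Nat.choose (2*q) 2) :=
        Stmt12.arith hs2 hsq
end

section
/- Let p and q be integers with 2 ≤ p < q, and let a and b be the (unique) non-negative integers with q = a·p + b and 0 ≤ b ≤ p − 1. Then there exists a finite connected simple graph G with ind-match(G) = p, min-match(G) = match(G) = q, and at most (a² + 1)p + (2a + 1)b edges. -/
variable {V : Type*}

namespace S13

variable {p : ℕ} (s : Fin p → ℕ)

abbrev GV (s : Fin p → ℕ) : Type := Option (Σ i : Fin p, Bool × Fin (s i))

def av (i : Fin p) (j : Fin (s i)) : GV s := some ⟨i, (false, j)⟩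
def bv (i : Fin p) (k : Fin (s i)) : GV s := some ⟨i, (true, k)⟩

lemma av_eq_av {i i' : Fin p} {j : Fin (s i)} {j' : Fin (s i')}
    (h : av s i j = av s i' j') : (⟨i, j⟩ : Σ i, Fin (s i)) = ⟨i', j'⟩ := by
  simp only [av, Option.some.injEq, Sigma.mk.inj_iff] at h
  obtain ⟨h1, h2⟩ := h
  subst h1
  rw [heq_iff_eq] at h2
  simpa using h2

lemma bv_eq_bv {i i' : Fin p} {j : Fin (s i)} {j' : Fin (s i')}
    (h : bv s i j = bv s i' j') : (⟨i, j⟩ : Σ i, Fin (s i)) = ⟨i', j'⟩ := by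
  simp only [bv, Option.some.injEq, Sigma.mk.inj_iff] at h
  obtain ⟨h1, h2⟩ := h
  subst h1
  rw [heq_iff_eq] at h2
  simpa using h2

lemma av_ne_bv {i i' : Fin p} {j : Fin (s i)} {j' : Fin (s i')} :
    av s i j ≠ bv s i' j' := by
  intro h
  simp only [av, bv, Option.some.injEq, Sigma.mk.inj_iff] at h
  obtain ⟨h1, h2⟩ := h
  subst h1
  rw [heq_iff_eq] at h2
  simp at h2

lemma av_ne_none {i : Fin p} {j : Fin (s i)} : av s i j ≠ none := by simp [av]
lemma bv_ne_none {i : Fin p} {j : Fin (s i)} : bv s i j ≠ none := by simp [bv]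

def Adj0 (u v : GV s) : Prop :=
  (∃ (i : Fin p) (j : Fin (s i)), (j : ℕ) = 0 ∧
      ((u = none ∧ v = av s i j) ∨ (v = none ∧ u = av s i j)))
  ∨ (∃ (i : Fin p) (j k : Fin (s i)),
      ((u = av s i j ∧ v = bv s i k) ∨ (v = av s i j ∧ u = bv s i k)))

def G0 : SimpleGraph (GV s) where
  Adj := Adj0 s
  symm := by
    constructor
    intro u v h
    rcases h with ⟨i, j, hj, h | h⟩ | ⟨i, j, k, h | h⟩
    · exact Or.inl ⟨i, j, hj, Or.inr h⟩
    · exact Or.inl ⟨i, j, hj, Or.inl h⟩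
    · exact Or.inr ⟨i, j, k, Or.inr h⟩
    · exact Or.inr ⟨i, j, k, Or.inl h⟩
  loopless := by
    constructor
    intro u h
    rcases h with ⟨i, j, _, h | h⟩ | ⟨i, j, k, h | h⟩ <;>
      · obtain ⟨h1, h2⟩ := h
        rw [h1] at h2
        first
        | exact av_ne_none s h2.symm
        | exact av_ne_bv s h2

lemma adj_bridge (i : Fin p) (j : Fin (s i)) (hj : (j : ℕ) = 0) :
    (G0 s).Adj none (av s i j) :=
  Or.inl ⟨i, j, hj, Or.inl ⟨rfl, rfl⟩⟩

lemma adj_cross (i : Fin p) (j k : Fin (s i)) :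
    (G0 s).Adj (av s i j) (bv s i k) :=
  Or.inr ⟨i, j, k, Or.inl ⟨rfl, rfl⟩⟩

/-- every edge of `G0` is a bridge or a cross edge -/
lemma edge_cases {e : Sym2 (GV s)} (he : e ∈ (G0 s).edgeSet) :
    (∃ (i : Fin p) (j : Fin (s i)), (j : ℕ) = 0 ∧ e = s(none, av s i j)) ∨
    (∃ (i : Fin p) (j k : Fin (s i)), e = s(av s i j, bv s i k)) := by
  induction e using Sym2.ind with
  | _ x y =>
    rw [SimpleGraph.mem_edgeSet] at he
    rcases he with ⟨i, j, hj, ⟨h1, h2⟩ | ⟨h1, h2⟩⟩ | ⟨i, j, k, ⟨h1, h2⟩ | ⟨h1, h2⟩⟩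
    · exact Or.inl ⟨i, j, hj, by rw [h1, h2]⟩
    · exact Or.inl ⟨i, j, hj, by rw [h1, h2, Sym2.eq_swap]⟩
    · exact Or.inr ⟨i, j, k, by rw [h1, h2]⟩
    · exact Or.inr ⟨i, j, k, by rw [h1, h2, Sym2.eq_swap]⟩

/-- "is an A-side vertex" -/
def IsA (u : GV s) : Prop := ∃ (i : Fin p) (j : Fin (s i)), u = av s i j

lemma exists_unique_A {e : Sym2 (GV s)} (he : e ∈ (G0 s).edgeSet) :
    ∃ u, (u ∈ e ∧ IsA s u) ∧ ∀ v ∈ e, IsA s v → v = u := by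
  rcases edge_cases s he with ⟨i, j, hj, rfl⟩ | ⟨i, j, k, rfl⟩
  · refine ⟨av s i j, ⟨by simp [Sym2.mem_iff], ⟨i, j, rfl⟩⟩, ?_⟩
    intro v hv hA
    rcases Sym2.mem_iff.1 hv with rfl | rfl
    · rcases hA with ⟨i', j', h⟩; exact absurd h.symm (av_ne_none s)
    · rfl
  · refine ⟨av s i j, ⟨by simp [Sym2.mem_iff], ⟨i, j, rfl⟩⟩, ?_⟩
    intro v hv hA
    rcases Sym2.mem_iff.1 hv with rfl | rfl
    · rfl
    · rcases hA with ⟨i', j', h⟩; exact absurd h (av_ne_bv s).symm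

open Classical in
noncomputable def pickA (e : Sym2 (GV s)) : GV s :=
  if h : ∃ u, (u ∈ e ∧ IsA s u) ∧ ∀ v ∈ e, IsA s v → v = u then h.choose else none

lemma pickA_spec {e : Sym2 (GV s)} (he : e ∈ (G0 s).edgeSet) :
    (pickA s e ∈ e ∧ IsA s (pickA s e)) ∧ ∀ v ∈ e, IsA s v → v = pickA s e := by
  have h := exists_unique_A s he
  rw [pickA, dif_pos h]
  exact ⟨h.choose_spec.1, h.choose_spec.2⟩

/-- the type of A-side positions -/
abbrev Atype (s : Fin p → ℕ) : Type := Σ i : Fin p, Fin (s i)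

def embA (x : Atype s) : GV s := av s x.1 x.2

lemma embA_injective : Function.Injective (embA s) := by
  intro x y h
  exact av_eq_av s h

lemma ncard_Aset : (Set.range (embA s)).ncard = ∑ i, s i := by
  rw [← Nat.card_coe_set_eq, Nat.card_range_of_injective (embA_injective s),
    Nat.card_eq_fintype_card, Fintype.card_sigma]
  simp

lemma matching_ncard_le {M : Set (Sym2 (GV s))} (hM : IsMatchingSet (G0 s) M) :
    M.ncard ≤ ∑ i, s i := by
  rw [← ncard_Aset s]
  refine Set.ncard_le_ncard_of_injOn (pickA s) ?_ ?_ (Set.toFinite _)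
  · intro e heM
    have := (pickA_spec s (hM.1 e heM)).1.2
    rcases this with ⟨i, j, h⟩
    exact ⟨⟨i, j⟩, h.symm⟩
  · intro e heM f hfM hef
    by_contra hne
    have h1 := (pickA_spec s (hM.1 e heM)).1.1
    have h2 := (pickA_spec s (hM.1 f hfM)).1.1
    rw [hef] at h1
    exact hM.2 e heM f hfM hne _ h1 h2

/-! ### The canonical maximum matching -/

def mstarEdge (x : Atype s) : Sym2 (GV s) := s(av s x.1 x.2, bv s x.1 x.2)

def Mstar : Set (Sym2 (GV s)) := Set.range (mstarEdge s)

lemma mstarEdge_injective : Function.Injective (mstarEdge s) := by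
  intro x y h
  rw [mstarEdge, mstarEdge, Sym2.eq_iff] at h
  rcases h with ⟨h1, _⟩ | ⟨h1, _⟩
  · have := av_eq_av s h1
    rw [← Sigma.eta x, ← Sigma.eta y]; exact this
  · exact absurd h1 (av_ne_bv s)

lemma Mstar_matching : IsMatchingSet (G0 s) (Mstar s) := by
  constructor
  · rintro e ⟨x, rfl⟩
    exact adj_cross s x.1 x.2 x.2
  · rintro e ⟨x, rfl⟩ f ⟨y, rfl⟩ hne v hv hv'
    have hxy : x ≠ y := fun h => hne (by rw [h])
    rw [mstarEdge, Sym2.mem_iff] at hv hv'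
    rcases hv with rfl | rfl <;> rcases hv' with h | h
    · exact hxy (embA_injective s h)
    · exact av_ne_bv s h
    · exact av_ne_bv s h.symm
    · have := bv_eq_bv s h
      exact hxy (by rw [← Sigma.eta x, ← Sigma.eta y]; exact this)

lemma Mstar_ncard : (Mstar s).ncard = ∑ i, s i := by
  rw [Mstar, ← Nat.card_coe_set_eq, Nat.card_range_of_injective (mstarEdge_injective s),
    Nat.card_eq_fintype_card, Fintype.card_sigma]
  simp

lemma Mstar_maximal : IsMaximalMatchingSet (G0 s) (Mstar s) := by
  refine ⟨Mstar_matching s, ?_⟩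
  intro g hg hgM hIns
  obtain ⟨i, j, hmem⟩ : ∃ (i : Fin p) (j : Fin (s i)), av s i j ∈ g := by
    rcases edge_cases s hg with ⟨i, j, _, rfl⟩ | ⟨i, j, k, rfl⟩
    · exact ⟨i, j, by simp [Sym2.mem_iff]⟩
    · exact ⟨i, j, by simp [Sym2.mem_iff]⟩
  have hfM : mstarEdge s ⟨i, j⟩ ∈ Mstar s := ⟨⟨i, j⟩, rfl⟩
  have hne : g ≠ mstarEdge s ⟨i, j⟩ := fun h => hgM (h ▸ hfM)
  exact hIns.2 g (Set.mem_insert _ _) (mstarEdge s ⟨i, j⟩)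
    (Set.mem_insert_of_mem _ hfM) hne (av s i j) hmem (by simp [mstarEdge, Sym2.mem_iff])

noncomputable def covE (M : Set (Sym2 (GV s))) (u : GV s) : Sym2 (GV s) := by
  classical
  exact if h : ∃ e ∈ M, u ∈ e then h.choose else Sym2.diag u

lemma covE_spec {M : Set (Sym2 (GV s))} {u : GV s} (h : ∃ e ∈ M, u ∈ e) :
    covE s M u ∈ M ∧ u ∈ covE s M u := by
  classical
  rw [covE]
  simp only [dif_pos h]
  exact ⟨h.choose_spec.1, h.choose_spec.2⟩

/-! ### Every maximal matching covers all A-vertices -/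

lemma A_covered (hs : ∀ i, 0 < s i) {M : Set (Sym2 (GV s))}
    (hM : IsMaximalMatchingSet (G0 s) M) (i : Fin p) (j : Fin (s i)) :
    ∃ e ∈ M, av s i j ∈ e := by
  by_contra hu
  push_neg at hu
  -- every B-vertex of gadget i is matched to an A-vertex distinct from j
  have hB : ∀ k : Fin (s i), ∃ j' : Fin (s i), j' ≠ j ∧ s(av s i j', bv s i k) ∈ M := by
    intro k
    set g := s(av s i j, bv s i k) with hgdef
    have hg_e : g ∈ (G0 s).edgeSet := adj_cross s i j k
    have hgM : g ∉ M := fun h => hu g h (by rw [hgdef]; simp [Sym2.mem_iff])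
    have hni := hM.2 g hg_e hgM
    have hP : ∀ e ∈ insert g M, e ∈ (G0 s).edgeSet := by
      rintro e (rfl | he)
      · exact hg_e
      · exact hM.1.1 e he
    have hQ : ¬(∀ e ∈ insert g M, ∀ f ∈ insert g M, e ≠ f → ∀ v, v ∈ e → v ∉ f) :=
      fun hQ => hni ⟨hP, hQ⟩
    push_neg at hQ
    obtain ⟨e, he, f, hf, hef, v, hve, hvf⟩ := hQ
    -- reduce to the case e = g, f ∈ M, v = bv s i k
    have key : ∃ f' ∈ M, bv s i k ∈ f' := by
      rcases Set.mem_insert_iff.1 he with rfl | heM <;>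
        rcases Set.mem_insert_iff.1 hf with rfl | hfM
      · exact absurd rfl hef
      · rcases Sym2.mem_iff.1 hve with rfl | rfl
        · exact absurd hvf (hu f hfM)
        · exact ⟨f, hfM, hvf⟩
      · rcases Sym2.mem_iff.1 hvf with rfl | rfl
        · exact absurd hve (hu e heM)
        · exact ⟨e, heM, hve⟩
      · exact absurd hvf (hM.1.2 e heM f hfM hef v hve)
    obtain ⟨f', hf'M, hbf'⟩ := key
    rcases edge_cases s (hM.1.1 f' hf'M) with ⟨i', j', _, rfl⟩ | ⟨i', j', k', rfl⟩
    · rcases Sym2.mem_iff.1 hbf' with h | h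
      · exact absurd h (bv_ne_none s)
      · exact absurd h.symm (av_ne_bv s)
    · rcases Sym2.mem_iff.1 hbf' with h | h
      · exact absurd h.symm (av_ne_bv s)
      · have hik := bv_eq_bv s h
        obtain ⟨hi, hkk⟩ := Sigma.mk.inj_iff.1 hik
        subst hi
        have hk : k = k' := heq_iff_eq.1 hkk
        subst hk
        refine ⟨j', ?_, hf'M⟩
        intro hjj
        subst hjj
        exact hu _ hf'M (by simp [Sym2.mem_iff])
  choose jf hjf hmemf using hB
  have hinj : Function.Injective jf := by
    intro k k' hkk
    by_contra hne
    have h1 := hmemf k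
    have h2 := hmemf k'
    rw [hkk] at h1
    have hedge_ne : s(av s i (jf k'), bv s i k) ≠ s(av s i (jf k'), bv s i k') := by
      intro h
      rw [Sym2.eq_iff] at h
      rcases h with ⟨_, h2'⟩ | ⟨h1', _⟩
      · have := bv_eq_bv s h2'
        exact hne (heq_iff_eq.1 (Sigma.mk.inj_iff.1 this).2)
      · exact av_ne_bv s h1'
    exact hM.1.2 _ h1 _ h2 hedge_ne (av s i (jf k')) (by simp [Sym2.mem_iff])
      (by simp [Sym2.mem_iff])
  have hsurj := Finite.injective_iff_surjective.1 hinj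
  obtain ⟨k, hk⟩ := hsurj j
  exact hjf k hk

lemma maximal_ncard (hs : ∀ i, 0 < s i) {M : Set (Sym2 (GV s))}
    (hM : IsMaximalMatchingSet (G0 s) M) : M.ncard = ∑ i, s i := by
  refine le_antisymm (matching_ncard_le s hM.1) ?_
  rw [← ncard_Aset s]
  classical
  have hcov : ∀ u ∈ Set.range (embA s), ∃ e ∈ M, u ∈ e := by
    rintro u ⟨⟨i, j⟩, rfl⟩
    exact A_covered s hs hM i j
  refine Set.ncard_le_ncard_of_injOn (covE s M) ?_ ?_ (Set.toFinite _)
  · intro u hu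
    exact (covE_spec s (hcov u hu)).1
  · intro u hu u' hu' heq
    have h := covE_spec s (hcov u hu)
    have h' := covE_spec s (hcov u' hu')
    have he1 : u ∈ covE s M u := h.2
    have he2 : u' ∈ covE s M u := heq ▸ h'.2
    have heE : covE s M u ∈ (G0 s).edgeSet := hM.1.1 _ h.1
    obtain ⟨w, _, hwu⟩ := exists_unique_A s heE
    have hA : IsA s u := by obtain ⟨⟨i, j⟩, rfl⟩ := hu; exact ⟨i, j, rfl⟩
    have hA' : IsA s u' := by obtain ⟨⟨i, j⟩, rfl⟩ := hu'; exact ⟨i, j, rfl⟩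
    rw [hwu u he1 hA, hwu u' he2 hA']

/-! ### Induced matchings -/

/-- the gadget index of a vertex -/
def gadgetOf : GV s → Option (Fin p) := fun v => v.map Sigma.fst

@[simp] lemma gadgetOf_av (i : Fin p) (j : Fin (s i)) : gadgetOf s (av s i j) = some i := rfl
@[simp] lemma gadgetOf_bv (i : Fin p) (k : Fin (s i)) : gadgetOf s (bv s i k) = some i := rfl
@[simp] lemma gadgetOf_none : gadgetOf s none = none := rfl

def mindEdge (hs : ∀ i, 0 < s i) (i : Fin p) : Sym2 (GV s) :=
  s(av s i ⟨0, hs i⟩, bv s i ⟨0, hs i⟩)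

lemma gadget_of_mem_mind {hs : ∀ i, 0 < s i} {i : Fin p} {v : GV s}
    (hv : v ∈ mindEdge s hs i) : gadgetOf s v = some i := by
  rcases Sym2.mem_iff.1 hv with rfl | rfl <;> simp

lemma Mind_induced (hs : ∀ i, 0 < s i) :
    IsInducedMatchingSet (G0 s) (Set.range (mindEdge s hs)) := by
  have hmatch : IsMatchingSet (G0 s) (Set.range (mindEdge s hs)) := by
    constructor
    · rintro e ⟨i, rfl⟩
      exact adj_cross s i _ _
    · rintro e ⟨i, rfl⟩ f ⟨i', rfl⟩ hne v hv hv'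
      have h1 := gadget_of_mem_mind s hv
      have h2 := gadget_of_mem_mind s hv'
      rw [h1] at h2
      obtain rfl : i = i' := by simpa using h2
      exact hne rfl
  refine ⟨hmatch, ?_⟩
  rintro e ⟨i, rfl⟩ f ⟨i', rfl⟩ hne g hg ⟨⟨v, hvg, hve⟩, ⟨v', hv'g, hv'f⟩⟩
  have hii' : i ≠ i' := fun h => hne (by rw [h])
  have h1 : gadgetOf s v = some i := gadget_of_mem_mind s hve
  have h2 : gadgetOf s v' = some i' := gadget_of_mem_mind s hv'f
  -- from the shape of g, v and v' lie in the same gadget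
  have : some i = some i' := by
    rcases edge_cases s hg with ⟨i₂, j₂, _, rfl⟩ | ⟨i₂, j₂, k₂, rfl⟩
    · rcases Sym2.mem_iff.1 hvg with rfl | rfl <;>
        rcases Sym2.mem_iff.1 hv'g with rfl | rfl <;>
        simp_all
    · rcases Sym2.mem_iff.1 hvg with rfl | rfl <;>
        rcases Sym2.mem_iff.1 hv'g with rfl | rfl <;>
        simp_all
  exact hii' (by simpa using this)

lemma mindEdge_injective (hs : ∀ i, 0 < s i) : Function.Injective (mindEdge s hs) := by
  intro i i' h
  have : gadgetOf s (av s i ⟨0, hs i⟩) = some i' := by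
    have hmem : av s i ⟨0, hs i⟩ ∈ mindEdge s hs i' := by
      rw [← h, mindEdge]; simp [Sym2.mem_iff]
    exact gadget_of_mem_mind s hmem
  simpa using this

lemma Mind_ncard (hs : ∀ i, 0 < s i) : (Set.range (mindEdge s hs)).ncard = p := by
  rw [← Nat.card_coe_set_eq, Nat.card_range_of_injective (mindEdge_injective s hs),
    Nat.card_eq_fintype_card, Fintype.card_fin]

noncomputable def gIdx (hp : 0 < p) (e : Sym2 (GV s)) : Fin p :=
  (gadgetOf s (pickA s e)).getD ⟨0, hp⟩

lemma gIdx_spec (hp : 0 < p) {e : Sym2 (GV s)} (he : e ∈ (G0 s).edgeSet) :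
    ∃ j : Fin (s (gIdx s hp e)), av s (gIdx s hp e) j ∈ e := by
  obtain ⟨⟨hmem, hA⟩, _⟩ := pickA_spec s he
  obtain ⟨i, j, hpe⟩ := hA
  have hg : gIdx s hp e = i := by rw [gIdx, hpe]; rfl
  rw [hg]
  exact ⟨j, hpe ▸ hmem⟩

lemma induced_not_same_gadget {M : Set (Sym2 (GV s))}
    (hM : IsInducedMatchingSet (G0 s) M) {e f : Sym2 (GV s)}
    (heM : e ∈ M) (hfM : f ∈ M) (hne : e ≠ f) {i : Fin p} {j j' : Fin (s i)}
    (hje : av s i j ∈ e) (hjf : av s i j' ∈ f) : False := by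
  have he' : (e = s(none, av s i j)) ∨ (∃ k : Fin (s i), e = s(av s i j, bv s i k)) := by
    rcases edge_cases s (hM.1.1 e heM) with ⟨i₁, j₁, hj0, rfl⟩ | ⟨i₁, j₁, k₁, rfl⟩
    · rcases Sym2.mem_iff.1 hje with h | h
      · exact absurd h (av_ne_none s)
      · obtain ⟨hi, hjj⟩ := Sigma.mk.inj_iff.1 (av_eq_av s h)
        subst hi
        obtain rfl : j = j₁ := heq_iff_eq.1 hjj
        exact Or.inl rfl
    · rcases Sym2.mem_iff.1 hje with h | h
      · obtain ⟨hi, hjj⟩ := Sigma.mk.inj_iff.1 (av_eq_av s h)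
        subst hi
        obtain rfl : j = j₁ := heq_iff_eq.1 hjj
        exact Or.inr ⟨k₁, rfl⟩
      · exact absurd h (av_ne_bv s)
  have hf' : (f = s(none, av s i j')) ∨ (∃ k : Fin (s i), f = s(av s i j', bv s i k)) := by
    rcases edge_cases s (hM.1.1 f hfM) with ⟨i₁, j₁, hj0, rfl⟩ | ⟨i₁, j₁, k₁, rfl⟩
    · rcases Sym2.mem_iff.1 hjf with h | h
      · exact absurd h (av_ne_none s)
      · obtain ⟨hi, hjj⟩ := Sigma.mk.inj_iff.1 (av_eq_av s h)
        subst hi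
        obtain rfl : j' = j₁ := heq_iff_eq.1 hjj
        exact Or.inl rfl
    · rcases Sym2.mem_iff.1 hjf with h | h
      · obtain ⟨hi, hjj⟩ := Sigma.mk.inj_iff.1 (av_eq_av s h)
        subst hi
        obtain rfl : j' = j₁ := heq_iff_eq.1 hjj
        exact Or.inr ⟨k₁, rfl⟩
      · exact absurd h (av_ne_bv s)
  rcases he' with rfl | ⟨k, rfl⟩ <;> rcases hf' with hf2 | ⟨k', rfl⟩
  · -- both bridges: they share the vertex `none`
    subst hf2
    exact hM.1.2 _ heM _ hfM hne none (by simp [Sym2.mem_iff]) (by simp [Sym2.mem_iff])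
  · -- e bridge, f cross
    exact hM.2 _ heM _ hfM hne s(av s i j, bv s i k') (adj_cross s i j k')
      ⟨⟨av s i j, by simp [Sym2.mem_iff], by simp [Sym2.mem_iff]⟩,
       ⟨bv s i k', by simp [Sym2.mem_iff], by simp [Sym2.mem_iff]⟩⟩
  · -- e cross, f bridge
    subst hf2
    exact hM.2 _ heM _ hfM hne s(av s i j', bv s i k) (adj_cross s i j' k)
      ⟨⟨bv s i k, by simp [Sym2.mem_iff], by simp [Sym2.mem_iff]⟩,
       ⟨av s i j', by simp [Sym2.mem_iff], by simp [Sym2.mem_iff]⟩⟩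
  · -- both cross
    exact hM.2 _ heM _ hfM hne s(av s i j, bv s i k') (adj_cross s i j k')
      ⟨⟨av s i j, by simp [Sym2.mem_iff], by simp [Sym2.mem_iff]⟩,
       ⟨bv s i k', by simp [Sym2.mem_iff], by simp [Sym2.mem_iff]⟩⟩

lemma induced_ncard_le (hp : 0 < p) {M : Set (Sym2 (GV s))}
    (hM : IsInducedMatchingSet (G0 s) M) : M.ncard ≤ p := by
  have : M.ncard ≤ (Set.univ : Set (Fin p)).ncard := by
    refine Set.ncard_le_ncard_of_injOn (gIdx s hp) (fun _ _ => Set.mem_univ _) ?_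
      (Set.toFinite _)
    intro e heM f hfM hef
    by_contra hne
    have hspec := gIdx_spec s hp (hM.1.1 e heM)
    rw [hef] at hspec
    obtain ⟨j, hje⟩ := hspec
    obtain ⟨j', hjf⟩ := gIdx_spec s hp (hM.1.1 f hfM)
    exact induced_not_same_gadget s hM heM hfM hne hje hjf
  simpa [Set.ncard_univ] using this

/-! ### The three invariants of `G0` -/

lemma matchNum_G0 : matchNum (G0 s) = ∑ i, s i := by
  refine IsGreatest.csSup_eq ⟨⟨Mstar s, Mstar_matching s, Mstar_ncard s⟩, ?_⟩
  rintro n ⟨M, hM, rfl⟩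
  exact matching_ncard_le s hM

lemma minMatchNum_G0 (hs : ∀ i, 0 < s i) : minMatchNum (G0 s) = ∑ i, s i := by
  refine IsLeast.csInf_eq ⟨⟨Mstar s, Mstar_maximal s, Mstar_ncard s⟩, ?_⟩
  rintro n ⟨M, hM, rfl⟩
  exact (maximal_ncard s hs hM).ge

lemma indMatchNum_G0 (hp : 0 < p) (hs : ∀ i, 0 < s i) : indMatchNum (G0 s) = p := by
  refine IsGreatest.csSup_eq ⟨⟨Set.range (mindEdge s hs), Mind_induced s hs, Mind_ncard s hs⟩, ?_⟩
  rintro n ⟨M, hM, rfl⟩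
  exact induced_ncard_le s hp hM

/-! ### Edge count -/

def eCode (hs : ∀ i, 0 < s i) :
    (Σ i : Fin p, Fin (s i) × Fin (s i)) ⊕ Fin p → Sym2 (GV s)
  | Sum.inl ⟨i, (j, k)⟩ => s(av s i j, bv s i k)
  | Sum.inr i => s(none, av s i ⟨0, hs i⟩)

lemma edgeSet_subset_range (hs : ∀ i, 0 < s i) :
    (G0 s).edgeSet ⊆ Set.range (eCode s hs) := by
  intro e he
  rcases edge_cases s he with ⟨i, j, hj0, rfl⟩ | ⟨i, j, k, rfl⟩
  · refine ⟨Sum.inr i, ?_⟩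
    have : j = ⟨0, hs i⟩ := Fin.ext hj0
    rw [eCode, this]
  · exact ⟨Sum.inl ⟨i, (j, k)⟩, rfl⟩

lemma edge_ncard_le (hs : ∀ i, 0 < s i) :
    (G0 s).edgeSet.ncard ≤ (∑ i, s i * s i) + p := by
  have h1 : (G0 s).edgeSet.ncard ≤ (Set.range (eCode s hs)).ncard :=
    Set.ncard_le_ncard (edgeSet_subset_range s hs) (Set.toFinite _)
  have h2 : (Set.range (eCode s hs)).ncard ≤ (∑ i, s i * s i) + p := by
    rw [← Set.image_univ]
    refine le_trans (Set.ncard_image_le Set.finite_univ) ?_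
    rw [Set.ncard_univ, Nat.card_eq_fintype_card, Fintype.card_sum, Fintype.card_sigma]
    simp [Fintype.card_prod]
  exact h1.trans h2

/-! ### Connectivity -/

lemma G0_connected (hs : ∀ i, 0 < s i) : (G0 s).Connected := by
  rw [SimpleGraph.connected_iff]
  refine ⟨?_, ⟨none⟩⟩
  have key : ∀ u : GV s, (G0 s).Reachable u none := by
    intro u
    match u with
    | none => exact SimpleGraph.Reachable.refl _
    | some ⟨i, (t, j)⟩ =>
      have r1 : (G0 s).Reachable (av s i ⟨0, hs i⟩) none :=
        (adj_bridge s i ⟨0, hs i⟩ rfl).reachable.symm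
      cases t with
      | false =>
        have h1 : (G0 s).Adj (av s i j) (bv s i ⟨0, hs i⟩) := adj_cross s i j ⟨0, hs i⟩
        have h2 : (G0 s).Adj (bv s i ⟨0, hs i⟩) (av s i ⟨0, hs i⟩) :=
          ((G0 s).adj_symm (adj_cross s i ⟨0, hs i⟩ ⟨0, hs i⟩))
        exact h1.reachable.trans (h2.reachable.trans r1)
      | true =>
        have h1 : (G0 s).Adj (bv s i j) (av s i ⟨0, hs i⟩) :=
          ((G0 s).adj_symm (adj_cross s i ⟨0, hs i⟩ j))
        exact h1.reachable.trans r1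
  intro u v
  exact (key u).trans (key v).symm

/-! ### Transport along an equivalence -/

section Transport

variable {α β : Type*} (φ : α ≃ β) (G : SimpleGraph α)

lemma sym2_map_symm_map (e : Sym2 β) : Sym2.map ⇑φ (Sym2.map ⇑φ.symm e) = e := by
  rw [Sym2.map_map]
  simp [Function.comp]

lemma sym2_map_map_symm (e : Sym2 α) : Sym2.map ⇑φ.symm (Sym2.map ⇑φ e) = e := by
  rw [Sym2.map_map]
  simp [Function.comp]

lemma mem_edgeSet_comap (e : Sym2 β) :
    e ∈ (G.comap (φ.symm : β → α)).edgeSet ↔ Sym2.map ⇑φ.symm e ∈ G.edgeSet := by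
  induction e using Sym2.ind with
  | _ x y => simp [SimpleGraph.comap]

lemma mem_map_symm {v : β} {e : Sym2 β} : φ.symm v ∈ Sym2.map ⇑φ.symm e ↔ v ∈ e := by
  rw [Sym2.mem_map]
  constructor
  · rintro ⟨u, hu, huv⟩
    rwa [← φ.symm.injective huv]
  · intro hv
    exact ⟨v, hv, rfl⟩

lemma matching_comap_iff (M : Set (Sym2 β)) :
    IsMatchingSet (G.comap (φ.symm : β → α)) M ↔
      IsMatchingSet G (Sym2.map ⇑φ.symm '' M) := by
  constructor
  · intro h
    constructor
    · rintro e' ⟨e, heM, rfl⟩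
      exact (mem_edgeSet_comap φ G e).1 (h.1 e heM)
    · rintro e' ⟨e, heM, rfl⟩ f' ⟨f, hfM, rfl⟩ hne v hv hv'
      have hef : e ≠ f := fun hh => hne (by rw [hh])
      obtain ⟨u, hu, rfl⟩ := Sym2.mem_map.1 hv
      obtain ⟨w, hw, hww⟩ := Sym2.mem_map.1 hv'
      rw [φ.symm.injective hww] at hw
      exact h.2 e heM f hfM hef u hu hw
  · intro h
    constructor
    · intro e heM
      rw [mem_edgeSet_comap]
      exact h.1 _ (Set.mem_image_of_mem _ heM)
    · intro e heM f hfM hne v hv hv'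
      have hne' : Sym2.map ⇑φ.symm e ≠ Sym2.map ⇑φ.symm f :=
        fun hh => hne (Sym2.map.injective φ.symm.injective hh)
      exact h.2 _ (Set.mem_image_of_mem _ heM) _ (Set.mem_image_of_mem _ hfM) hne'
        (φ.symm v) ((mem_map_symm φ).2 hv) ((mem_map_symm φ).2 hv')

lemma maximal_comap_iff (M : Set (Sym2 β)) :
    IsMaximalMatchingSet (G.comap (φ.symm : β → α)) M ↔
      IsMaximalMatchingSet G (Sym2.map ⇑φ.symm '' M) := by
  constructor
  · intro h
    refine ⟨(matching_comap_iff φ G M).1 h.1, ?_⟩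
    intro e' he' he'M hIns
    set e := Sym2.map ⇑φ e' with hedef
    have hee' : Sym2.map ⇑φ.symm e = e' := sym2_map_map_symm φ e'
    have heE : e ∈ (G.comap (φ.symm : β → α)).edgeSet := by
      rw [mem_edgeSet_comap, hee']; exact he'
    have heM : e ∉ M := by
      intro hc
      exact he'M ⟨e, hc, hee'⟩
    refine h.2 e heE heM ?_
    rw [matching_comap_iff φ G, Set.image_insert_eq, hee']
    exact hIns
  · intro h
    refine ⟨(matching_comap_iff φ G M).2 h.1, ?_⟩
    intro e heE heM hIns
    have he' : Sym2.map ⇑φ.symm e ∈ G.edgeSet := (mem_edgeSet_comap φ G e).1 heE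
    have he'M : Sym2.map ⇑φ.symm e ∉ Sym2.map ⇑φ.symm '' M := by
      rintro ⟨f, hfM, hf⟩
      exact heM (by rwa [Sym2.map.injective φ.symm.injective hf] at hfM)
    refine h.2 _ he' he'M ?_
    rw [← Set.image_insert_eq]
    exact (matching_comap_iff φ G _).1 hIns

lemma induced_comap_iff (M : Set (Sym2 β)) :
    IsInducedMatchingSet (G.comap (φ.symm : β → α)) M ↔
      IsInducedMatchingSet G (Sym2.map ⇑φ.symm '' M) := by
  constructor
  · intro h
    refine ⟨(matching_comap_iff φ G M).1 h.1, ?_⟩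
    rintro e' ⟨e, heM, rfl⟩ f' ⟨f, hfM, rfl⟩ hne g' hg' ⟨⟨v, hvg, hve⟩, ⟨v', hv'g, hv'f⟩⟩
    have hef : e ≠ f := fun hh => hne (by rw [hh])
    set g := Sym2.map ⇑φ g' with hgdef
    have hgg' : Sym2.map ⇑φ.symm g = g' := sym2_map_map_symm φ g'
    have hgE : g ∈ (G.comap (φ.symm : β → α)).edgeSet := by
      rw [mem_edgeSet_comap, hgg']; exact hg'
    refine h.2 e heM f hfM hef g hgE ⟨⟨φ v, ?_, ?_⟩, ⟨φ v', ?_, ?_⟩⟩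
    · rw [← hgg'] at hvg
      obtain ⟨u, hu, huv⟩ := Sym2.mem_map.1 hvg
      rwa [show φ v = u from by rw [← huv]; simp]
    · obtain ⟨u, hu, huv⟩ := Sym2.mem_map.1 hve
      rwa [show φ v = u from by rw [← huv]; simp]
    · rw [← hgg'] at hv'g
      obtain ⟨u, hu, huv⟩ := Sym2.mem_map.1 hv'g
      rwa [show φ v' = u from by rw [← huv]; simp]
    · obtain ⟨u, hu, huv⟩ := Sym2.mem_map.1 hv'f
      rwa [show φ v' = u from by rw [← huv]; simp]
  · intro h
    refine ⟨(matching_comap_iff φ G M).2 h.1, ?_⟩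
    intro e heM f hfM hne g hgE ⟨⟨v, hvg, hve⟩, ⟨v', hv'g, hv'f⟩⟩
    have hne' : Sym2.map ⇑φ.symm e ≠ Sym2.map ⇑φ.symm f :=
      fun hh => hne (Sym2.map.injective φ.symm.injective hh)
    refine h.2 _ (Set.mem_image_of_mem _ heM) _ (Set.mem_image_of_mem _ hfM) hne'
      (Sym2.map ⇑φ.symm g) ((mem_edgeSet_comap φ G g).1 hgE)
      ⟨⟨φ.symm v, (mem_map_symm φ).2 hvg, (mem_map_symm φ).2 hve⟩,
       ⟨φ.symm v', (mem_map_symm φ).2 hv'g, (mem_map_symm φ).2 hv'f⟩⟩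

lemma image_symm_image (N : Set (Sym2 α)) :
    Sym2.map ⇑φ.symm '' (Sym2.map ⇑φ '' N) = N := by
  rw [← Set.image_comp]
  have : (Sym2.map ⇑φ.symm ∘ Sym2.map ⇑φ) = id := by
    funext e
    simp [Function.comp, sym2_map_map_symm φ e]
  rw [this, Set.image_id]

lemma matchNum_comap : matchNum (G.comap (φ.symm : β → α)) = matchNum G := by
  unfold matchNum
  congr 1
  ext n
  constructor
  · rintro ⟨M, hM, rfl⟩
    exact ⟨_, (matching_comap_iff φ G M).1 hM,
      Set.ncard_image_of_injective M (Sym2.map.injective φ.symm.injective)⟩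
  · rintro ⟨N, hN, rfl⟩
    refine ⟨Sym2.map ⇑φ '' N, ?_, Set.ncard_image_of_injective N (Sym2.map.injective φ.injective)⟩
    rw [matching_comap_iff φ G, image_symm_image φ]
    exact hN

lemma minMatchNum_comap : minMatchNum (G.comap (φ.symm : β → α)) = minMatchNum G := by
  unfold minMatchNum
  congr 1
  ext n
  constructor
  · rintro ⟨M, hM, rfl⟩
    exact ⟨_, (maximal_comap_iff φ G M).1 hM,
      Set.ncard_image_of_injective M (Sym2.map.injective φ.symm.injective)⟩
  · rintro ⟨N, hN, rfl⟩
    refine ⟨Sym2.map ⇑φ '' N, ?_, Set.ncard_image_of_injective N (Sym2.map.injective φ.injective)⟩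
    rw [maximal_comap_iff φ G, image_symm_image φ]
    exact hN

lemma indMatchNum_comap : indMatchNum (G.comap (φ.symm : β → α)) = indMatchNum G := by
  unfold indMatchNum
  congr 1
  ext n
  constructor
  · rintro ⟨M, hM, rfl⟩
    exact ⟨_, (induced_comap_iff φ G M).1 hM,
      Set.ncard_image_of_injective M (Sym2.map.injective φ.symm.injective)⟩
  · rintro ⟨N, hN, rfl⟩
    refine ⟨Sym2.map ⇑φ '' N, ?_, Set.ncard_image_of_injective N (Sym2.map.injective φ.injective)⟩
    rw [induced_comap_iff φ G, image_symm_image φ]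
    exact hN

lemma edgeSet_comap_eq :
    (G.comap (φ.symm : β → α)).edgeSet = Sym2.map ⇑φ '' G.edgeSet := by
  ext e
  rw [mem_edgeSet_comap]
  constructor
  · intro h
    exact ⟨Sym2.map ⇑φ.symm e, h, sym2_map_symm_map φ e⟩
  · rintro ⟨e0, he0, rfl⟩
    rwa [sym2_map_map_symm φ e0]

lemma edgeSet_comap_ncard :
    (G.comap (φ.symm : β → α)).edgeSet.ncard = G.edgeSet.ncard := by
  rw [edgeSet_comap_eq φ G, Set.ncard_image_of_injective _ (Sym2.map.injective φ.injective)]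

lemma connected_comap (h : G.Connected) : (G.comap (φ.symm : β → α)).Connected := by
  rw [SimpleGraph.connected_iff]
  obtain ⟨x⟩ := h.nonempty
  refine ⟨?_, ⟨φ x⟩⟩
  intro u v
  have hmap : ∀ w z : α, G.Reachable w z →
      (G.comap (φ.symm : β → α)).Reachable (φ w) (φ z) := by
    intro w z hr
    exact hr.map ⟨φ, fun {c d} hcd => by simpa [SimpleGraph.comap] using hcd⟩
  have h2 := hmap _ _ (h.preconnected (φ.symm u) (φ.symm v))
  simpa using h2

end Transport

/-! ### An arithmetic helper -/

lemma sum_ite_const {p b x y : ℕ} (hbp : b ≤ p) :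
    (∑ i : Fin p, if (i : ℕ) < b then x else y) = b * x + (p - b) * y := by
  rw [Fin.sum_univ_eq_sum_range (fun i => if i < b then x else y)]
  rw [Finset.range_eq_Ico, ← Finset.sum_Ico_consecutive _ (Nat.zero_le b) hbp]
  have h1 : (∑ i ∈ Finset.Ico 0 b, if i < b then x else y) = b * x := by
    rw [Finset.sum_congr rfl (fun i hi => if_pos (Finset.mem_Ico.1 hi).2)]
    simp [Nat.mul_comm]
  have h2 : (∑ i ∈ Finset.Ico b p, if i < b then x else y) = (p - b) * y := by
    rw [Finset.sum_congr rfl (fun i hi => if_neg (Nat.not_lt.2 (Finset.mem_Ico.1 hi).1))]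
    simp [Nat.mul_comm]
  rw [h1, h2]

end S13

theorem stmt_13 (p q a b : ℕ) (hp : 2 ≤ p) (hpq : p < q)
    (hab : q = a * p + b) (hb : b ≤ p - 1) :
    ∃ (n : ℕ) (G : SimpleGraph (Fin n)), G.Connected ∧
      indMatchNum G = p ∧ minMatchNum G = q ∧ matchNum G = q ∧
      G.edgeSet.ncard ≤ (a ^ 2 + 1) * p + (2 * a + 1) * b := by
  have ha : 1 ≤ a := by
    rcases Nat.eq_zero_or_pos a with rfl | ha
    · simp only [Nat.zero_mul, Nat.zero_add] at hab
      omega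
    · exact ha
  have hbp : b < p := by omega
  have hp0 : 0 < p := by omega
  set s : Fin p → ℕ := fun i => if (i : ℕ) < b then a + 1 else a with hsdef
  have hs : ∀ i, 0 < s i := fun i => by
    simp only [hsdef]
    split <;> omega
  obtain ⟨c, hc⟩ : ∃ c, p = b + c := ⟨p - b, by omega⟩
  have hcb : p - b = c := by omega
  have hsum : (∑ i, s i) = q := by
    have h1 : (∑ i : Fin p, s i) = b * (a + 1) + (p - b) * a := S13.sum_ite_const hbp.le
    rw [h1, hab, hcb, hc]
    ring
  have hsum2 : (∑ i : Fin p, s i * s i) + p = (a ^ 2 + 1) * p + (2 * a + 1) * b := by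
    have h0 : ∀ i : Fin p, s i * s i = if (i : ℕ) < b then (a+1)*(a+1) else a*a := fun i => by
      simp only [hsdef]
      split <;> ring
    rw [Finset.sum_congr rfl (fun i _ => h0 i), S13.sum_ite_const hbp.le, hcb, hc]
    ring
  let φ := Fintype.equivFin (S13.GV s)
  refine ⟨Fintype.card (S13.GV s), (S13.G0 s).comap (φ.symm : _ → _), ?_, ?_, ?_, ?_, ?_⟩
  · exact S13.connected_comap φ _ (S13.G0_connected s hs)
  · rw [S13.indMatchNum_comap φ, S13.indMatchNum_G0 s hp0 hs]
  · rw [S13.minMatchNum_comap φ, S13.minMatchNum_G0 s hs, hsum]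
  · rw [S13.matchNum_comap φ, S13.matchNum_G0 s, hsum]
  · rw [S13.edgeSet_comap_ncard φ]
    calc (S13.G0 s).edgeSet.ncard ≤ (∑ i : Fin p, s i * s i) + p := S13.edge_ncard_le s hs
      _ = (a ^ 2 + 1) * p + (2 * a + 1) * b := hsum2
end

section
/- Let p, q and r be integers with 2 ≤ p < q ≤ r ≤ 2q and 2q − p + 1 < r, and let a and b be the (unique) non-negative integers with r − q = a·(p − 2q + r) + b and 0 ≤ b ≤ p − 2q + r − 1. Then there exists a finite connected simple graph G with ind-match(G) = p, min-match(G) = q, match(G) = r, and at most p + 2q − r + (p − 2q + r)·(2a + 1 choose 2) + b(4a + 3) edges. -/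
variable {V : Type*}

section Transport

variable {W : Type*} {G : SimpleGraph V} {H : SimpleGraph W}

lemma iso_mem_edgeSet (f : G ≃g H) (e : Sym2 V) :
    Sym2.map f e ∈ H.edgeSet ↔ e ∈ G.edgeSet := by
  induction e using Sym2.ind with
  | _ u v => simp [f.map_adj_iff]

lemma iso_mem_sym2 (f : G ≃g H) (e : Sym2 V) (w : W) :
    w ∈ Sym2.map f e ↔ f.symm w ∈ e := by
  rw [Sym2.mem_map]
  constructor
  · rintro ⟨u, hu, rfl⟩; simpa using hu
  · intro h; exact ⟨f.symm w, h, by simp⟩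

lemma iso_map_map (f : G ≃g H) (e : Sym2 V) :
    Sym2.map f.symm (Sym2.map f e) = e := by
  rw [Sym2.map_map]
  convert congrFun Sym2.map_id e
  · simp
  · rfl

lemma iso_image_image (f : G ≃g H) (M : Set (Sym2 V)) :
    Sym2.map f.symm '' (Sym2.map f '' M) = M := by
  rw [Set.image_image]
  simp only [iso_map_map]
  exact Set.image_id M

lemma iso_isMatchingSet (f : G ≃g H) (M : Set (Sym2 V)) (h : IsMatchingSet G M) :
    IsMatchingSet H (Sym2.map f '' M) := by
  obtain ⟨h1, h2⟩ := h
  constructor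
  · rintro e ⟨e₀, he₀, rfl⟩
    exact (iso_mem_edgeSet f e₀).2 (h1 e₀ he₀)
  · rintro e ⟨e₀, he₀, rfl⟩ g ⟨g₀, hg₀, rfl⟩ hne w hwe hwg
    rw [iso_mem_sym2] at hwe hwg
    exact h2 e₀ he₀ g₀ hg₀ (fun hh => hne (by rw [hh])) _ hwe hwg

lemma iso_isMatchingSet_iff (f : G ≃g H) (M : Set (Sym2 V)) :
    IsMatchingSet H (Sym2.map f '' M) ↔ IsMatchingSet G M := by
  refine ⟨fun h => ?_, iso_isMatchingSet f M⟩
  have := iso_isMatchingSet f.symm _ h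
  rwa [iso_image_image] at this

lemma iso_isMaximalMatchingSet_iff (f : G ≃g H) (M : Set (Sym2 V)) :
    IsMaximalMatchingSet H (Sym2.map f '' M) ↔ IsMaximalMatchingSet G M := by
  rw [IsMaximalMatchingSet, IsMaximalMatchingSet, iso_isMatchingSet_iff]
  refine and_congr_right fun _ => ?_
  constructor
  · intro h e he hem hmax
    refine h (Sym2.map f e) ((iso_mem_edgeSet f e).2 he) ?_ ?_
    · intro hmem
      obtain ⟨e₀, he₀, heq⟩ := hmem
      have := Sym2.map.injective f.injective heq
      exact hem (this ▸ he₀)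
    · rw [← Set.image_insert_eq]
      exact iso_isMatchingSet f _ hmax
  · intro h e he hem hmax
    set e₀ := Sym2.map f.symm e with he₀def
    have heq : Sym2.map f e₀ = e := by
      rw [he₀def, Sym2.map_map]
      convert congrFun Sym2.map_id e
      · simp
      · rfl
    refine h e₀ ?_ ?_ ?_
    · rw [← heq] at he; rwa [iso_mem_edgeSet f] at he
    · intro hmem
      exact hem (heq ▸ (Set.mem_image_of_mem _ hmem))
    · rw [← iso_isMatchingSet_iff f, Set.image_insert_eq, heq]
      exact hmax

lemma iso_isInducedMatchingSet_iff (f : G ≃g H) (M : Set (Sym2 V)) :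
    IsInducedMatchingSet H (Sym2.map f '' M) ↔ IsInducedMatchingSet G M := by
  rw [IsInducedMatchingSet, IsInducedMatchingSet, iso_isMatchingSet_iff]
  refine and_congr_right fun _ => ?_
  constructor
  · intro h e he g hg hne g' hg' ⟨⟨v, hv1, hv2⟩, ⟨w, hw1, hw2⟩⟩
    refine h (Sym2.map f e) (Set.mem_image_of_mem _ he) (Sym2.map f g)
      (Set.mem_image_of_mem _ hg)
      (fun hh => hne (Sym2.map.injective f.injective hh))
      (Sym2.map f g') ((iso_mem_edgeSet f g').2 hg') ⟨⟨f v, ?_, ?_⟩, ⟨f w, ?_, ?_⟩⟩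
    all_goals rw [iso_mem_sym2]; simpa
  · rintro h e ⟨e₀, he₀, rfl⟩ g ⟨g₀, hg₀, rfl⟩ hne g' hg' ⟨⟨v, hv1, hv2⟩, ⟨w, hw1, hw2⟩⟩
    set g₀' := Sym2.map f.symm g' with hgdef
    have heq : Sym2.map f g₀' = g' := by
      rw [hgdef, Sym2.map_map]
      convert congrFun Sym2.map_id g'
      · simp
      · rfl
    refine h e₀ he₀ g₀ hg₀ (fun hh => hne (by rw [hh])) g₀' ?_
      ⟨⟨f.symm v, ?_, ?_⟩, ⟨f.symm w, ?_, ?_⟩⟩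
    · rw [← heq] at hg'; rwa [iso_mem_edgeSet f] at hg'
    · rw [hgdef, iso_mem_sym2 f.symm]; simpa
    · rwa [iso_mem_sym2] at hv2
    · rw [hgdef, iso_mem_sym2 f.symm]; simpa
    · rwa [iso_mem_sym2] at hw2

lemma iso_matchNum (f : G ≃g H) : matchNum H = matchNum G := by
  unfold matchNum
  congr 1
  ext n
  constructor
  · rintro ⟨M, hM, rfl⟩
    exact ⟨Sym2.map f.symm '' M, (iso_isMatchingSet_iff f.symm M).2 hM,
      Set.ncard_image_of_injective _ (Sym2.map.injective f.symm.injective)⟩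
  · rintro ⟨M, hM, rfl⟩
    exact ⟨Sym2.map f '' M, (iso_isMatchingSet_iff f M).2 hM,
      Set.ncard_image_of_injective _ (Sym2.map.injective f.injective)⟩

lemma iso_minMatchNum (f : G ≃g H) : minMatchNum H = minMatchNum G := by
  unfold minMatchNum
  congr 1
  ext n
  constructor
  · rintro ⟨M, hM, rfl⟩
    exact ⟨Sym2.map f.symm '' M, (iso_isMaximalMatchingSet_iff f.symm M).2 hM,
      Set.ncard_image_of_injective _ (Sym2.map.injective f.symm.injective)⟩
  · rintro ⟨M, hM, rfl⟩
    exact ⟨Sym2.map f '' M, (iso_isMaximalMatchingSet_iff f M).2 hM,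
      Set.ncard_image_of_injective _ (Sym2.map.injective f.injective)⟩

lemma iso_indMatchNum (f : G ≃g H) : indMatchNum H = indMatchNum G := by
  unfold indMatchNum
  congr 1
  ext n
  constructor
  · rintro ⟨M, hM, rfl⟩
    exact ⟨Sym2.map f.symm '' M, (iso_isInducedMatchingSet_iff f.symm M).2 hM,
      Set.ncard_image_of_injective _ (Sym2.map.injective f.symm.injective)⟩
  · rintro ⟨M, hM, rfl⟩
    exact ⟨Sym2.map f '' M, (iso_isInducedMatchingSet_iff f M).2 hM,
      Set.ncard_image_of_injective _ (Sym2.map.injective f.injective)⟩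

lemma iso_edgeSet_ncard (f : G ≃g H) : H.edgeSet.ncard = G.edgeSet.ncard := by
  have : H.edgeSet = Sym2.map f '' G.edgeSet := by
    ext e
    constructor
    · intro he
      exact ⟨Sym2.map f.symm e, (iso_mem_edgeSet f.symm e).2 he, iso_map_map f.symm e⟩
    · rintro ⟨e₀, he₀, rfl⟩
      exact (iso_mem_edgeSet f e₀).2 he₀
  rw [this, Set.ncard_image_of_injective _ (Sym2.map.injective f.injective)]

end Transport

section Construction

variable {p : ℕ} {t : Fin p → ℕ}

@[reducible] def BV (p : ℕ) (t : Fin p → ℕ) : Type :=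
  Option ((Σ i : Fin p, Fin (t i)) × Bool)

def xv (k : Σ i : Fin p, Fin (t i)) : BV p t := some (k, false)
def yv (k : Σ i : Fin p, Fin (t i)) : BV p t := some (k, true)

lemma xv_inj : Function.Injective (xv (p := p) (t := t)) := by
  intro k k' h; simpa [xv] using h

lemma yv_inj : Function.Injective (yv (p := p) (t := t)) := by
  intro k k' h; simpa [yv] using h

lemma xv_ne_yv (k k' : Σ i : Fin p, Fin (t i)) : xv k ≠ yv k' := by simp [xv, yv]

lemma sig_eq {k k' : Σ i : Fin p, Fin (t i)} (h1 : k.1 = k'.1)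
    (h2 : (k.2 : ℕ) = (k'.2 : ℕ)) : k = k' := by
  obtain ⟨i, j⟩ := k; obtain ⟨i', j'⟩ := k'
  cases h1
  simp_all [Fin.ext_iff]

def badj : BV p t → BV p t → Prop
  | none, none => False
  | none, some (k, β) => β = false ∧ (k.2 : ℕ) = 0
  | some (k, β), none => β = false ∧ (k.2 : ℕ) = 0
  | some (k, β), some (k', β') =>
      k.1 = k'.1 ∧ (((k.2 : ℕ) = (k'.2 : ℕ) ∧ β ≠ β') ∨
        ((k.2 : ℕ) ≠ (k'.2 : ℕ) ∧ β = false ∧ β' = false))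

def BG (p : ℕ) (t : Fin p → ℕ) : SimpleGraph (BV p t) where
  Adj := badj
  symm := by
    constructor
    rintro (_ | ⟨k, β⟩) (_ | ⟨k', β'⟩) h <;> simp_all [badj]
    tauto
  loopless := by
    constructor
    rintro (_ | ⟨k, β⟩) h <;> simp_all [badj]

lemma adj_apex {k : Σ i : Fin p, Fin (t i)} (h : (k.2 : ℕ) = 0) :
    (BG p t).Adj none (xv k) := ⟨rfl, h⟩

lemma adj_clique {k k' : Σ i : Fin p, Fin (t i)} (h1 : k.1 = k'.1)
    (h2 : (k.2 : ℕ) ≠ (k'.2 : ℕ)) : (BG p t).Adj (xv k) (xv k') :=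
  ⟨h1, Or.inr ⟨h2, rfl, rfl⟩⟩

lemma adj_pendant (k : Σ i : Fin p, Fin (t i)) : (BG p t).Adj (xv k) (yv k) :=
  ⟨rfl, Or.inl ⟨rfl, by simp⟩⟩

/-- classification of edges -/
lemma edge_cases_s15 {e : Sym2 (BV p t)} (he : e ∈ (BG p t).edgeSet) :
    (∃ k : Σ i : Fin p, Fin (t i), (k.2 : ℕ) = 0 ∧ e = s(none, xv k)) ∨
    (∃ k k' : Σ i : Fin p, Fin (t i), k.1 = k'.1 ∧ (k.2 : ℕ) ≠ (k'.2 : ℕ) ∧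
      e = s(xv k, xv k')) ∨
    (∃ k : Σ i : Fin p, Fin (t i), e = s(xv k, yv k)) := by
  induction e using Sym2.ind with
  | _ u v =>
    rw [SimpleGraph.mem_edgeSet] at he
    match u, v with
    | none, none => exact absurd he (by simp [BG, badj])
    | none, some (k, β) =>
      obtain ⟨hβ, hk⟩ := he
      subst hβ
      exact Or.inl ⟨k, hk, rfl⟩
    | some (k, β), none =>
      obtain ⟨hβ, hk⟩ := he
      subst hβ
      exact Or.inl ⟨k, hk, Sym2.eq_swap⟩
    | some (k, β), some (k', β') =>
      obtain ⟨h1, h2 | h2⟩ := he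
      · -- pendant : same index, different bool
        obtain ⟨hj, hβ⟩ := h2
        have hk : k = k' := sig_eq h1 hj
        subst hk
        match β, β' with
        | false, true => exact Or.inr (Or.inr ⟨k, rfl⟩)
        | true, false => exact Or.inr (Or.inr ⟨k, Sym2.eq_swap⟩)
        | false, false => simp at hβ
        | true, true => simp at hβ
      · obtain ⟨hj, hβ, hβ'⟩ := h2
        subst hβ; subst hβ'
        exact Or.inr (Or.inl ⟨k, k', h1, hj, rfl⟩)

/-- every edge contains a clique vertex -/
lemma edge_has_xv {e : Sym2 (BV p t)} (he : e ∈ (BG p t).edgeSet) :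
    ∃ k, xv k ∈ e := by
  rcases edge_cases_s15 he with ⟨k, _, rfl⟩ | ⟨k, k', _, _, rfl⟩ | ⟨k, rfl⟩ <;>
    exact ⟨k, by simp⟩

/-- an edge has all its block vertices in one block -/
lemma edge_block_unique {e : Sym2 (BV p t)} (he : e ∈ (BG p t).edgeSet)
    {k k' : Σ i : Fin p, Fin (t i)} {β β' : Bool}
    (h1 : (some (k, β) : BV p t) ∈ e) (h2 : (some (k', β') : BV p t) ∈ e) :
    k.1 = k'.1 := by
  rcases edge_cases_s15 he with ⟨m, _, rfl⟩ | ⟨m, m', hmm, _, rfl⟩ | ⟨m, rfl⟩ <;>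
      simp only [Sym2.mem_iff, xv, yv] at h1 h2 <;>
      rcases h1 with h1 | h1 <;> rcases h2 with h2 | h2 <;>
      simp_all <;> cases h1 <;> cases h2 <;> simp [hmm]

/-- the only edge containing a pendant vertex is its pendant edge -/
lemma edge_of_yv {e : Sym2 (BV p t)} (he : e ∈ (BG p t).edgeSet)
    {k : Σ i : Fin p, Fin (t i)} (h : yv k ∈ e) : e = s(xv k, yv k) := by
  rcases edge_cases_s15 he with ⟨m, _, rfl⟩ | ⟨m, m', _, _, rfl⟩ | ⟨m, rfl⟩ <;>
    simp only [Sym2.mem_iff, xv, yv] at h <;> simp_all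

end Construction

section Construction2

variable {p : ℕ} {t : Fin p → ℕ}

lemma BG_connected (ht : ∀ i, 0 < t i) : (BG p t).Connected := by
  rw [SimpleGraph.connected_iff]
  refine ⟨?_, ⟨none⟩⟩
  have hx : ∀ k, (BG p t).Reachable (xv k) none := by
    intro k
    by_cases h : (k.2 : ℕ) = 0
    · exact ((adj_apex h).symm).reachable
    · refine ((adj_clique (k := k) (k' := ⟨k.1, ⟨0, ht k.1⟩⟩) rfl ?_).reachable).trans
        ((adj_apex ?_).symm.reachable)
      · simpa using h
      · rfl
  have hr : ∀ v : BV p t, (BG p t).Reachable v none := by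
    rintro (_ | ⟨k, _ | _⟩)
    · exact SimpleGraph.Reachable.refl _
    · exact hx k
    · exact ((adj_pendant k).symm.reachable).trans (hx k)
  intro u v
  exact (hr u).trans (hr v).symm

lemma matchingSet_card_le {M : Set (Sym2 (BV p t))}
    (hM : IsMatchingSet (BG p t) M) : M.ncard ≤ ∑ i, t i := by
  classical
  rcases Set.eq_empty_or_nonempty M with rfl | ⟨e₀, he₀⟩
  · simp
  obtain ⟨k₀, _⟩ := edge_has_xv (hM.1 e₀ he₀)
  set f : Sym2 (BV p t) → (Σ i : Fin p, Fin (t i)) :=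
    fun e => if h : ∃ k, xv k ∈ e then h.choose else k₀ with hfdef
  have hfmem : ∀ e ∈ M, xv (f e) ∈ e := by
    intro e he
    have h : ∃ k, xv k ∈ e := edge_has_xv (hM.1 e he)
    simp only [hfdef, dif_pos h]
    exact h.choose_spec
  have hle : M.ncard ≤ (Set.univ : Set (Σ i : Fin p, Fin (t i))).ncard := by
    refine Set.ncard_le_ncard_of_injOn f (fun _ _ => Set.mem_univ _) ?_ (Set.toFinite _)
    intro e he e' he' heq
    by_contra hne
    exact hM.2 e he e' he' hne (xv (f e)) (hfmem e he) (heq ▸ hfmem e' he')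
  rwa [Set.ncard_univ, Nat.card_eq_fintype_card, Fintype.card_sigma,
    (by simp : ∑ i, Fintype.card (Fin (t i)) = ∑ i, t i)] at hle

lemma pendant_matching :
    IsMatchingSet (BG p t) (Set.range fun k : Σ i : Fin p, Fin (t i) => s(xv k, yv k)) := by
  constructor
  · rintro e ⟨k, rfl⟩
    exact adj_pendant k
  · rintro e ⟨k, rfl⟩ f ⟨k', rfl⟩ hne v hv hv'
    have hkk : k ≠ k' := fun h => hne (by rw [h])
    rw [Sym2.mem_iff] at hv hv'
    rcases hv with rfl | rfl <;> rcases hv' with h | h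
    · exact hkk (xv_inj h)
    · exact xv_ne_yv k k' h
    · exact xv_ne_yv k' k h.symm
    · exact hkk (yv_inj h)

lemma pendant_matching_card :
    (Set.range fun k : Σ i : Fin p, Fin (t i) => s(xv k, yv k)).ncard = ∑ i, t i := by
  have hinj : Function.Injective fun k : Σ i : Fin p, Fin (t i) => s(xv k, yv k) := by
    intro k k' h
    simp only at h
    have hm : xv k ∈ s(xv k', yv k') := by rw [← h]; simp
    rw [Sym2.mem_iff] at hm
    rcases hm with hm | hm
    · exact xv_inj hm
    · exact (xv_ne_yv k k' hm).elim
  rw [← Set.image_univ, Set.ncard_image_of_injective _ hinj, Set.ncard_univ,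
    Nat.card_eq_fintype_card, Fintype.card_sigma]
  simp

end Construction2

section Construction3

variable {p : ℕ} {t : Fin p → ℕ}

def indM (ht : ∀ i, 0 < t i) : Set (Sym2 (BV p t)) :=
  Set.range fun i : Fin p => s(xv ⟨i, ⟨0, ht i⟩⟩, yv ⟨i, ⟨0, ht i⟩⟩)

lemma indM_isInduced (ht : ∀ i, 0 < t i) :
    IsInducedMatchingSet (BG p t) (indM ht) := by
  constructor
  · constructor
    · rintro e ⟨i, rfl⟩
      exact adj_pendant _
    · rintro e ⟨i, rfl⟩ f ⟨i', rfl⟩ hne v hv hv'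
      simp only at hv hv'
      have hii : i ≠ i' := fun h => hne (by rw [h])
      rw [Sym2.mem_iff] at hv hv'
      rcases hv with rfl | rfl <;> rcases hv' with h | h
      · exact hii (congrArg (·.1) (xv_inj h))
      · exact xv_ne_yv _ _ h
      · exact xv_ne_yv _ _ h.symm
      · exact hii (congrArg (·.1) (yv_inj h))
  · rintro e ⟨i, rfl⟩ f ⟨i', rfl⟩ hne g hg ⟨⟨v, hv1, hv2⟩, ⟨w, hw1, hw2⟩⟩
    simp only at hv2 hw2
    have hii : i ≠ i' := fun h => hne (by rw [h])
    rw [Sym2.mem_iff] at hv2 hw2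
    have hv' : ∃ β, (some (⟨⟨i, ⟨0, ht i⟩⟩, β⟩ : _ × Bool) : BV p t) ∈ g := by
      rcases hv2 with rfl | rfl
      exacts [⟨false, hv1⟩, ⟨true, hv1⟩]
    have hw' : ∃ β, (some (⟨⟨i', ⟨0, ht i'⟩⟩, β⟩ : _ × Bool) : BV p t) ∈ g := by
      rcases hw2 with rfl | rfl
      exacts [⟨false, hw1⟩, ⟨true, hw1⟩]
    obtain ⟨β, hβ⟩ := hv'
    obtain ⟨β', hβ'⟩ := hw'
    exact hii (edge_block_unique hg hβ hβ')

lemma indM_card (ht : ∀ i, 0 < t i) : (indM ht).ncard = p := by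
  have hinj : Function.Injective
      fun i : Fin p => s(xv (⟨i, ⟨0, ht i⟩⟩ : Σ i, Fin (t i)), yv ⟨i, ⟨0, ht i⟩⟩) := by
    intro i i' h
    simp only at h
    have hm : xv (⟨i, ⟨0, ht i⟩⟩ : Σ i, Fin (t i)) ∈
        s(xv (⟨i', ⟨0, ht i'⟩⟩ : Σ i, Fin (t i)), yv ⟨i', ⟨0, ht i'⟩⟩) := by
      rw [← h]; simp
    rw [Sym2.mem_iff] at hm
    rcases hm with hm | hm
    · exact congrArg (·.1) (xv_inj hm)
    · exact (xv_ne_yv _ _ hm).elim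
  rw [indM, ← Set.image_univ, Set.ncard_image_of_injective _ hinj, Set.ncard_univ,
    Nat.card_eq_fintype_card, Fintype.card_fin]

lemma inducedMatching_card_le {M : Set (Sym2 (BV p t))}
    (hM : IsInducedMatchingSet (BG p t) M) : M.ncard ≤ p := by
  classical
  rcases Set.eq_empty_or_nonempty M with rfl | ⟨e₀, he₀⟩
  · simp
  obtain ⟨k₀, _⟩ := edge_has_xv (hM.1.1 e₀ he₀)
  set f : Sym2 (BV p t) → (Σ i : Fin p, Fin (t i)) :=
    fun e => if h : ∃ k, xv k ∈ e then h.choose else k₀ with hfdef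
  have hfmem : ∀ e ∈ M, xv (f e) ∈ e := by
    intro e he
    have h : ∃ k, xv k ∈ e := edge_has_xv (hM.1.1 e he)
    simp only [hfdef, dif_pos h]
    exact h.choose_spec
  have hle : M.ncard ≤ (Set.univ : Set (Fin p)).ncard := by
    refine Set.ncard_le_ncard_of_injOn (fun e => (f e).1) (fun _ _ => Set.mem_univ _)
      ?_ (Set.toFinite _)
    intro e he e' he' heq
    by_contra hne
    have hne2 : (f e) ≠ (f e') := by
      intro h
      exact hM.1.2 e he e' he' hne (xv (f e)) (hfmem e he) (h ▸ hfmem e' he')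
    have hne3 : ((f e).2 : ℕ) ≠ ((f e').2 : ℕ) := fun h => hne2 (sig_eq heq h)
    refine hM.2 e he e' he' hne s(xv (f e), xv (f e'))
      (adj_clique heq hne3) ⟨⟨xv (f e), by simp, hfmem e he⟩,
        ⟨xv (f e'), by simp, hfmem e' he'⟩⟩
  rwa [Set.ncard_univ, Nat.card_eq_fintype_card, Fintype.card_fin] at hle

end Construction3

section Construction4

variable {p : ℕ} {t u : Fin p → ℕ}

lemma sig_eq' {ι : Type*} {g : ι → ℕ} {k k' : Σ i, Fin (g i)} (h1 : k.1 = k'.1)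
    (h2 : (k.2 : ℕ) = (k'.2 : ℕ)) : k = k' := by
  obtain ⟨i, j⟩ := k; obtain ⟨i', j'⟩ := k'
  cases h1
  simp_all [Fin.ext_iff]

def minF (hut : ∀ i, 2 * u i ≤ t i + 1) (l : Σ i : Fin p, Fin (u i)) : Sym2 (BV p t) :=
  if h : 2 * (l.2 : ℕ) + 1 < t l.1 then
    s(xv ⟨l.1, ⟨2 * l.2, by have := l.2.isLt; have := hut l.1; omega⟩⟩,
      xv ⟨l.1, ⟨2 * l.2 + 1, h⟩⟩)
  else
    s(xv ⟨l.1, ⟨2 * l.2, by have := l.2.isLt; have := hut l.1; omega⟩⟩,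
      yv ⟨l.1, ⟨2 * l.2, by have := l.2.isLt; have := hut l.1; omega⟩⟩)

lemma minF_mem (hut : ∀ i, 2 * u i ≤ t i + 1) {l : Σ i : Fin p, Fin (u i)}
    {w : BV p t} (hw : w ∈ minF hut l) :
    ∃ (k : Σ i : Fin p, Fin (t i)) (β : Bool), w = some (k, β) ∧ k.1 = l.1 ∧
      ((k.2 : ℕ) = 2 * l.2 ∨ (k.2 : ℕ) = 2 * l.2 + 1) := by
  unfold minF at hw
  split at hw <;> rw [Sym2.mem_iff] at hw <;> rcases hw with rfl | rfl
  · exact ⟨_, false, rfl, rfl, Or.inl rfl⟩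
  · exact ⟨_, false, rfl, rfl, Or.inr rfl⟩
  · exact ⟨_, false, rfl, rfl, Or.inl rfl⟩
  · exact ⟨_, true, rfl, rfl, Or.inl rfl⟩

lemma minF_xv_mem (hut : ∀ i, 2 * u i ≤ t i + 1) (l : Σ i : Fin p, Fin (u i)) :
    ∃ k : Σ i : Fin p, Fin (t i), k.1 = l.1 ∧ (k.2 : ℕ) = 2 * l.2 ∧
      xv k ∈ minF hut l := by
  unfold minF
  split <;> exact ⟨_, rfl, rfl, by rw [Sym2.mem_iff]; left; rfl⟩

lemma minF_edge (hut : ∀ i, 2 * u i ≤ t i + 1) (l : Σ i : Fin p, Fin (u i)) :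
    minF hut l ∈ (BG p t).edgeSet := by
  unfold minF
  split
  · exact adj_clique rfl (by simp)
  · exact adj_pendant _

lemma minF_inj (hut : ∀ i, 2 * u i ≤ t i + 1) :
    Function.Injective (minF (p := p) (t := t) hut) := by
  intro l l' h
  obtain ⟨k, hk1, hk2, hkm⟩ := minF_xv_mem hut l
  rw [h] at hkm
  obtain ⟨k', β', heq, hk1', hk2'⟩ := minF_mem hut hkm
  rw [xv] at heq
  have hkk : k = k' ∧ false = β' := by simpa using heq
  obtain ⟨rfl, _⟩ := hkk
  refine sig_eq' (hk1 ▸ hk1') ?_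
  omega

def minM (hut : ∀ i, 2 * u i ≤ t i + 1) : Set (Sym2 (BV p t)) :=
  Set.range (minF hut)

lemma minM_card (hut : ∀ i, 2 * u i ≤ t i + 1) : (minM hut).ncard = ∑ i, u i := by
  rw [minM, ← Set.image_univ, Set.ncard_image_of_injective _ (minF_inj hut),
    Set.ncard_univ, Nat.card_eq_fintype_card, Fintype.card_sigma]
  simp

lemma minM_isMatching (hut : ∀ i, 2 * u i ≤ t i + 1) :
    IsMatchingSet (BG p t) (minM hut) := by
  constructor
  · rintro e ⟨l, rfl⟩
    exact minF_edge hut l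
  · rintro e ⟨l, rfl⟩ f ⟨l', rfl⟩ hne w hw hw'
    obtain ⟨k, β, rfl, hk1, hk2⟩ := minF_mem hut hw
    obtain ⟨k', β', heq, hk1', hk2'⟩ := minF_mem hut hw'
    have hkk : k = k' ∧ β = β' := by simpa using heq
    obtain ⟨rfl, rfl⟩ := hkk
    have hll : l = l' := sig_eq' (hk1 ▸ hk1') (by omega)
    exact hne (by rw [hll])

/-- every clique vertex is covered by `minM` -/
lemma minM_covers (htu : ∀ i, t i ≤ 2 * u i) (hut : ∀ i, 2 * u i ≤ t i + 1)
    (k : Σ i : Fin p, Fin (t i)) : ∃ e ∈ minM hut, xv k ∈ e := by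
  have hjt : (k.2 : ℕ) < t k.1 := k.2.isLt
  have hl : (k.2 : ℕ) / 2 < u k.1 := by have := htu k.1; omega
  set l : Σ i : Fin p, Fin (u i) := ⟨k.1, ⟨(k.2 : ℕ) / 2, hl⟩⟩ with hldef
  refine ⟨minF hut l, ⟨l, rfl⟩, ?_⟩
  by_cases hpar : (k.2 : ℕ) % 2 = 0
  · obtain ⟨k', hk1, hk2, hkm⟩ := minF_xv_mem hut l
    have : k' = k := by
      refine sig_eq' (by rw [hk1]) ?_
      rw [hk2]; simp only [hldef, l]; omega
    rwa [this] at hkm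
  · have hcond : 2 * ((k.2 : ℕ) / 2) + 1 < t k.1 := by omega
    unfold minF
    rw [dif_pos (by simpa [hldef] using hcond)]
    rw [Sym2.mem_iff]
    right
    congr 1
    refine sig_eq' rfl ?_
    simp only [hldef, l]; omega

lemma minM_isMaximal (htu : ∀ i, t i ≤ 2 * u i) (hut : ∀ i, 2 * u i ≤ t i + 1) :
    IsMaximalMatchingSet (BG p t) (minM hut) := by
  refine ⟨minM_isMatching hut, ?_⟩
  intro e he hem hmax
  obtain ⟨k, hk⟩ := edge_has_xv he
  obtain ⟨g, hg, hkg⟩ := minM_covers htu hut k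
  have hne : e ≠ g := fun h => hem (h ▸ hg)
  exact hmax.2 e (Set.mem_insert _ _) g (Set.mem_insert_of_mem _ hg) hne (xv k) hk hkg

end Construction4

section Construction5

variable {p : ℕ} {t u : Fin p → ℕ}

lemma maximal_covers {M : Set (Sym2 (BV p t))}
    (hM : IsMaximalMatchingSet (BG p t) M) (k : Σ i : Fin p, Fin (t i)) :
    ∃ e ∈ M, xv k ∈ e := by
  by_contra hnc
  push_neg at hnc
  have hy : ∀ e ∈ M, yv k ∉ e := by
    intro e he hye
    have hee := edge_of_yv (hM.1.1 e he) hye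
    exact hnc e he (by rw [hee]; simp)
  have hpe : s(xv k, yv k) ∈ (BG p t).edgeSet := adj_pendant k
  have hpm : s(xv k, yv k) ∉ M := fun h => hnc _ h (by simp)
  apply hM.2 _ hpe hpm
  constructor
  · rintro f (rfl | hf)
    · exact hpe
    · exact hM.1.1 f hf
  · rintro f (rfl | hf) g (rfl | hg) hne w hw hwg
    · exact hne rfl
    · rw [Sym2.mem_iff] at hw
      rcases hw with rfl | rfl
      · exact hnc g hg hwg
      · exact hy g hg hwg
    · rw [Sym2.mem_iff] at hwg
      rcases hwg with rfl | rfl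
      · exact hnc f hf hw
      · exact hy f hf hw
    · exact hM.1.2 f hf g hg hne w hw hwg

lemma maximal_card_ge {M : Set (Sym2 (BV p t))}
    (hM : IsMaximalMatchingSet (BG p t) M)
    (hut : ∀ i, 2 * u i ≤ t i + 1) : ∑ i, u i ≤ M.ncard := by
  classical
  have hfin : M.Finite := Set.toFinite M
  set F := hfin.toFinset with hFdef
  choose cov hcovM hcovmem using maximal_covers hM
  set P : Fin p → Sym2 (BV p t) → Prop :=
    fun i e => ∃ (k : Σ i : Fin p, Fin (t i)) (β : Bool), k.1 = i ∧ some (k, β) ∈ e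
    with hPdef
  set Fi : Fin p → Finset (Sym2 (BV p t)) := fun i => F.filter (P i) with hFidef
  have hdisj : (↑(Finset.univ : Finset (Fin p)) : Set (Fin p)).PairwiseDisjoint Fi := by
    intro i _ i' _ hne
    rw [Function.onFun, Finset.disjoint_left]
    intro e hei hei'
    rw [hFidef, Finset.mem_filter] at hei hei'
    obtain ⟨heF, k, β, hk, hke⟩ := hei
    obtain ⟨_, k', β', hk', hke'⟩ := hei'
    have heM : e ∈ (BG p t).edgeSet := hM.1.1 e (hfin.mem_toFinset.1 heF)
    exact hne (hk ▸ hk' ▸ edge_block_unique heM hke hke')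
  have hsum : ∑ i, (Fi i).card ≤ F.card := by
    rw [← Finset.card_biUnion (fun i hi => fun i' hi' hne => hdisj hi hi' hne)]
    exact Finset.card_le_card (Finset.biUnion_subset.2
      (fun i _ => Finset.filter_subset _ _))
  have hper : ∀ i, u i ≤ (Fi i).card := by
    intro i
    have h2 : t i ≤ 2 * (Fi i).card := by
      have hmt : ∀ j ∈ (Finset.univ : Finset (Fin (t i))),
          cov ⟨i, j⟩ ∈ Fi i := by
        intro j _
        rw [hFidef, Finset.mem_filter]
        exact ⟨hfin.mem_toFinset.2 (hcovM _), ⟨⟨i, j⟩, false, rfl, hcovmem _⟩⟩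
      have hfib : ∀ e ∈ Fi i,
          ((Finset.univ : Finset (Fin (t i))).filter
            (fun j => cov ⟨i, j⟩ = e)).card ≤ 2 := by
        intro e _
        induction e using Sym2.ind with
        | _ w1 w2 =>
          have hcard : (({w1, w2} : Finset (BV p t))).card ≤ 2 :=
            (Finset.card_insert_le _ _).trans (by simp)
          refine le_trans (Finset.card_le_card_of_injOn (fun j => xv ⟨i, j⟩)
            ?_ ?_) hcard
          · intro j hj
            rw [Finset.mem_coe, Finset.mem_filter] at hj
            have : xv (⟨i, j⟩ : Σ i : Fin p, Fin (t i)) ∈ s(w1, w2) := by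
              rw [← hj.2]; exact hcovmem _
            rw [Sym2.mem_iff] at this
            rcases this with rfl | rfl <;> simp
          · intro j _ j' _ hxy
            have := xv_inj hxy
            simpa [Fin.ext_iff] using congrArg (fun k => (k.2 : ℕ)) this
      have := Finset.card_le_mul_card_image_of_maps_to hmt 2 hfib
      simpa using this
    have := hut i
    omega
  rw [Set.ncard_eq_toFinset_card M hfin]
  exact le_trans (Finset.sum_le_sum fun i _ => hper i) hsum

end Construction5

section Construction6

variable {p : ℕ} {t : Fin p → ℕ}

def psiPair (i : Fin p) (j j' : Fin (t i)) : Sym2 (BV p t) :=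
  if j = j' then s(xv ⟨i, j⟩, yv ⟨i, j⟩) else s(xv ⟨i, j⟩, xv ⟨i, j'⟩)

lemma psiPair_symm (i : Fin p) (j j' : Fin (t i)) :
    psiPair i j j' = psiPair i j' j := by
  by_cases h : j = j'
  · subst h; rfl
  · rw [psiPair, psiPair, if_neg h, if_neg (Ne.symm h)]
    exact Sym2.eq_swap

def psi (ht : ∀ i, 0 < t i) : Fin p ⊕ (Σ i : Fin p, Sym2 (Fin (t i))) → Sym2 (BV p t)
  | Sum.inl i => s(none, xv ⟨i, ⟨0, ht i⟩⟩)
  | Sum.inr ⟨i, z⟩ => Sym2.lift ⟨psiPair i, psiPair_symm i⟩ z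

lemma edgeSet_subset_range_psi (ht : ∀ i, 0 < t i) :
    (BG p t).edgeSet ⊆ Set.range (psi ht) := by
  intro e he
  rcases edge_cases_s15 he with ⟨k, hk0, rfl⟩ | ⟨k, k', hk1, hk2, rfl⟩ | ⟨k, rfl⟩
  · refine ⟨Sum.inl k.1, ?_⟩
    have : (⟨k.1, ⟨0, ht k.1⟩⟩ : Σ i : Fin p, Fin (t i)) = k :=
      sig_eq' rfl (by simp [hk0])
    simp [psi, this]
  · obtain ⟨i, j⟩ := k
    obtain ⟨i', j'⟩ := k'
    obtain rfl : i = i' := hk1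
    refine ⟨Sum.inr ⟨i, s(j, j')⟩, ?_⟩
    have hne : j ≠ j' := fun h => hk2 (by rw [h])
    simp only [psi, Sym2.lift_mk]
    rw [psiPair, if_neg hne]
  · obtain ⟨i, j⟩ := k
    refine ⟨Sum.inr ⟨i, s(j, j)⟩, ?_⟩
    simp only [psi, Sym2.lift_mk]
    rw [psiPair, if_pos rfl]

lemma edge_ncard_le (ht : ∀ i, 0 < t i) :
    (BG p t).edgeSet.ncard ≤ p + ∑ i, (t i + 1).choose 2 := by
  have h1 : (BG p t).edgeSet.ncard ≤ (Set.range (psi ht)).ncard :=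
    Set.ncard_le_ncard (edgeSet_subset_range_psi ht) (Set.toFinite _)
  have h2 : (Set.range (psi ht)).ncard ≤
      Fintype.card (Fin p ⊕ (Σ i : Fin p, Sym2 (Fin (t i)))) := by
    rw [← Set.image_univ]
    refine le_trans (Set.ncard_image_le (Set.toFinite _)) ?_
    rw [Set.ncard_univ, Nat.card_eq_fintype_card]
  refine le_trans h1 (le_trans h2 ?_)
  rw [Fintype.card_sum, Fintype.card_fin, Fintype.card_sigma]
  have : ∀ i : Fin p, Fintype.card (Sym2 (Fin (t i))) = (t i + 1).choose 2 := by
    intro i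
    rw [Sym2.card, Fintype.card_fin]
  simp only [this]
  exact le_refl _

end Construction6



section Final

lemma empty_matchingF (G : SimpleGraph V) : IsMatchingSet G ∅ :=
  ⟨fun e he => absurd he (Set.notMem_empty e),
   fun e he => absurd he (Set.notMem_empty e)⟩

lemma empty_inducedF (G : SimpleGraph V) : IsInducedMatchingSet G ∅ :=
  ⟨empty_matchingF G, fun e he => absurd he (Set.notMem_empty e)⟩

variable {p : ℕ} {t u : Fin p → ℕ}

lemma matchNum_BG : matchNum (BG p t) = ∑ i, t i := by
  apply le_antisymm
  · refine csSup_le ⟨0, ∅, empty_matchingF _, by simp⟩ ?_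
    rintro n ⟨M, hM, rfl⟩
    exact matchingSet_card_le hM
  · apply le_csSup
    · exact ⟨∑ i, t i, fun n => by rintro ⟨M, hM, rfl⟩; exact matchingSet_card_le hM⟩
    · exact ⟨_, pendant_matching, pendant_matching_card⟩

lemma indMatchNum_BG (ht : ∀ i, 0 < t i) : indMatchNum (BG p t) = p := by
  apply le_antisymm
  · refine csSup_le ⟨0, ∅, empty_inducedF _, by simp⟩ ?_
    rintro n ⟨M, hM, rfl⟩
    exact inducedMatching_card_le hM
  · apply le_csSup
    · exact ⟨p, fun n => by rintro ⟨M, hM, rfl⟩; exact inducedMatching_card_le hM⟩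
    · exact ⟨_, indM_isInduced ht, indM_card ht⟩

lemma minMatchNum_BG (htu : ∀ i, t i ≤ 2 * u i) (hut : ∀ i, 2 * u i ≤ t i + 1) :
    minMatchNum (BG p t) = ∑ i, u i := by
  apply le_antisymm
  · exact Nat.sInf_le ⟨_, minM_isMaximal htu hut, minM_card hut⟩
  · refine le_csInf ⟨∑ i, u i, _, minM_isMaximal htu hut, minM_card hut⟩ ?_
    rintro n ⟨M, hM, rfl⟩
    exact maximal_card_ge hM hut

lemma sum_piecewise (P c1 c2 A B C : ℕ) (h1 : c1 ≤ c2) (h2 : c2 ≤ P) :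
    ∑ i ∈ Finset.range P, (if i < c1 then A else if i < c2 then B else C)
      = c1 * A + (c2 - c1) * B + (P - c2) * C := by
  rw [Finset.range_eq_Ico,
    ← Finset.sum_Ico_consecutive _ (Nat.zero_le c2) h2,
    ← Finset.sum_Ico_consecutive _ (Nat.zero_le c1) h1]
  have e1 : ∑ i ∈ Finset.Ico 0 c1, (if i < c1 then A else if i < c2 then B else C)
      = c1 * A := by
    rw [Finset.sum_const_nat (m := A) (fun i hi => by
      rw [Finset.mem_Ico] at hi
      rw [if_pos hi.2]), Nat.card_Ico, Nat.sub_zero]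
  have e2 : ∑ i ∈ Finset.Ico c1 c2, (if i < c1 then A else if i < c2 then B else C)
      = (c2 - c1) * B := by
    rw [Finset.sum_const_nat (m := B) (fun i hi => by
      rw [Finset.mem_Ico] at hi
      rw [if_neg (by omega), if_pos hi.2]), Nat.card_Ico]
  have e3 : ∑ i ∈ Finset.Ico c2 P, (if i < c1 then A else if i < c2 then B else C)
      = (P - c2) * C := by
    rw [Finset.sum_const_nat (m := C) (fun i hi => by
      rw [Finset.mem_Ico] at hi
      rw [if_neg (by omega), if_neg (by omega)]), Nat.card_Ico]
  rw [e1, e2, e3]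

lemma fin_sum_piecewise (P c1 c2 A B C : ℕ) (h1 : c1 ≤ c2) (h2 : c2 ≤ P) :
    ∑ i : Fin P, (if (i : ℕ) < c1 then A else if (i : ℕ) < c2 then B else C)
      = c1 * A + (c2 - c1) * B + (P - c2) * C := by
  rw [Fin.sum_univ_eq_sum_range (fun n => if n < c1 then A else if n < c2 then B else C) P]
  exact sum_piecewise P c1 c2 A B C h1 h2

theorem stmt_15 (p q r a b : ℕ) (hp : 2 ≤ p) (hpq : p < q) (hqr : q ≤ r)
    (hr2q : r ≤ 2 * q) (hr : 2 * q - p + 1 < r)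
    (hab : r - q = a * (p + r - 2 * q) + b) (hb : b ≤ p + r - 2 * q - 1) :
    ∃ (n : ℕ) (G : SimpleGraph (Fin n)), G.Connected ∧
      indMatchNum G = p ∧ minMatchNum G = q ∧ matchNum G = r ∧
      G.edgeSet.ncard ≤
        p + (2 * q - r) + (p + r - 2 * q) * Nat.choose (2 * a + 1) 2
          + b * (4 * a + 3) := by
  have h2q : 2 * q ≤ p + r := by omega
  set s := p + r - 2 * q with hs
  have hs2 : 2 ≤ s := by omega
  have hbs : b + 1 ≤ s := by omega
  have ha : 1 ≤ a := by
    rcases Nat.eq_zero_or_pos a with h0 | h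
    · rw [h0] at hab; simp at hab; omega
    · exact h
  set c1 := 2 * q - r with hc1
  set c2 := c1 + (s - b) with hc2
  have hc2p : c2 ≤ p := by omega
  set tf : Fin p → ℕ :=
    fun i => if (i : ℕ) < c1 then 1 else if (i : ℕ) < c2 then 2 * a else 2 * a + 2
    with htf
  set uf : Fin p → ℕ :=
    fun i => if (i : ℕ) < c1 then 1 else if (i : ℕ) < c2 then a else a + 1
    with huf
  have ht : ∀ i, 0 < tf i := by
    intro i; simp only [htf]; split_ifs <;> omega
  have htu : ∀ i, tf i ≤ 2 * uf i := by
    intro i; simp only [htf, huf]; split_ifs <;> omega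
  have hut : ∀ i, 2 * uf i ≤ tf i + 1 := by
    intro i; simp only [htf, huf]; split_ifs <;> omega
  have hdb : (s - b) + b = s := by omega
  have hsum_t : ∑ i, tf i = r := by
    simp only [htf]
    rw [fin_sum_piecewise p c1 c2 1 (2 * a) (2 * a + 2) (by omega) hc2p]
    have hd : c2 - c1 = s - b := by omega
    have hpb : p - c2 = b := by omega
    rw [hd, hpb]
    set m := s - b with hm
    have key : m * (2 * a) + b * (2 * a + 2) = 2 * (a * s + b) := by
      rw [← hdb]; ring
    omega
  have hsum_u : ∑ i, uf i = q := by
    simp only [huf]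
    rw [fin_sum_piecewise p c1 c2 1 a (a + 1) (by omega) hc2p]
    have hd : c2 - c1 = s - b := by omega
    have hpb : p - c2 = b := by omega
    rw [hd, hpb]
    set m := s - b with hm
    have key : m * a + b * (a + 1) = a * s + b := by
      rw [← hdb]; ring
    omega
  have hC3 : (2 * a + 3).choose 2 = (2 * a + 1).choose 2 + (4 * a + 3) := by
    have h1 : (2 * a + 3).choose 2 = (2 * a + 2).choose 1 + (2 * a + 2).choose 2 :=
      Nat.choose_succ_succ _ _
    have h2 : (2 * a + 2).choose 2 = (2 * a + 1).choose 1 + (2 * a + 1).choose 2 :=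
      Nat.choose_succ_succ _ _
    rw [h1, h2, Nat.choose_one_right, Nat.choose_one_right]
    omega
  have hsum_c : p + ∑ i, (tf i + 1).choose 2 ≤
      p + (2 * q - r) + s * (2 * a + 1).choose 2 + b * (4 * a + 3) := by
    have : ∑ i, (tf i + 1).choose 2 =
        c1 * ((1 + 1).choose 2) + (c2 - c1) * ((2 * a + 1).choose 2)
          + (p - c2) * ((2 * a + 2 + 1).choose 2) := by
      simp only [htf]
      rw [show (∑ i : Fin p,
          ((if (i : ℕ) < c1 then 1 else if (i : ℕ) < c2 then 2 * a else 2 * a + 2) + 1).choose 2)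
        = ∑ i : Fin p, (if (i : ℕ) < c1 then (1 + 1).choose 2 else if (i : ℕ) < c2
            then (2 * a + 1).choose 2 else (2 * a + 2 + 1).choose 2) from
        Finset.sum_congr rfl (fun i _ => by split_ifs <;> rfl)]
      exact fin_sum_piecewise p c1 c2 _ _ _ (by omega) hc2p
    rw [this]
    have hd : c2 - c1 = s - b := by omega
    have hpb : p - c2 = b := by omega
    have h11 : (1 + 1).choose 2 = 1 := rfl
    have h23 : (2 * a + 2 + 1).choose 2 = (2 * a + 1).choose 2 + (4 * a + 3) := hC3
    rw [hd, hpb, h11, h23]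
    set m := s - b with hm
    have key : m * ((2 * a + 1).choose 2) + b * ((2 * a + 1).choose 2 + (4 * a + 3))
        = s * ((2 * a + 1).choose 2) + b * (4 * a + 3) := by
      rw [← hdb]; ring
    omega
  have hconn := BG_connected (p := p) (t := tf) ht
  have hmatch : matchNum (BG p tf) = r := by rw [matchNum_BG, hsum_t]
  have hmin : minMatchNum (BG p tf) = q := by rw [minMatchNum_BG htu hut, hsum_u]
  have hind : indMatchNum (BG p tf) = p := indMatchNum_BG ht
  have hedge : (BG p tf).edgeSet.ncard ≤
      p + (2 * q - r) + s * (2 * a + 1).choose 2 + b * (4 * a + 3) :=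
    le_trans (edge_ncard_le ht) hsum_c
  refine ⟨Fintype.card (BV p tf), (BG p tf).overFin rfl, ?_, ?_, ?_, ?_, ?_⟩
  · exact ((BG p tf).overFinIso rfl).connected_iff.mp hconn
  · rw [iso_indMatchNum ((BG p tf).overFinIso rfl)]; exact hind
  · rw [iso_minMatchNum ((BG p tf).overFinIso rfl)]; exact hmin
  · rw [iso_matchNum ((BG p tf).overFinIso rfl)]; exact hmatch
  · rw [iso_edgeSet_ncard ((BG p tf).overFinIso rfl)]; exact hedge

end Final
end

section
/- Let G be a finite connected simple graph with ind-match(G) = 1. Then the number of edges of G is at least (match(G) + 1 choose 2). -/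
variable {V : Type*}

lemma sym2_mem_eq {α : Type*} {z : Sym2 α} {a b c : α} (ha : a ∈ z) (hb : b ∈ z)
    (hab : a ≠ b) (hc : c ∈ z) : c = a ∨ c = b := by
  induction z using Sym2.ind with
  | _ x y =>
    rw [Sym2.mem_iff] at ha hb hc
    rcases ha with rfl | rfl <;> rcases hb with rfl | rfl <;> tauto

theorem stmt_16 (V : Type) [Fintype V] (G : SimpleGraph V) (hconn : G.Connected)
    (hind : indMatchNum G = 1) :
    Nat.choose (matchNum G + 1) 2 ≤ G.edgeSet.ncard := by
  classical
  have hbdd : ∀ (P : Set (Sym2 V) → Prop),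
      BddAbove {n | ∃ M : Set (Sym2 V), P M ∧ M.ncard = n} := by
    intro P
    refine ⟨Nat.card (Sym2 V), ?_⟩
    rintro n ⟨M, _, rfl⟩
    calc M.ncard ≤ (Set.univ : Set (Sym2 V)).ncard :=
          Set.ncard_le_ncard (Set.subset_univ _) Set.finite_univ
      _ = Nat.card (Sym2 V) := Set.ncard_univ _
  have h0 : (0 : ℕ) ∈ {n | ∃ M : Set (Sym2 V), IsMatchingSet G M ∧ M.ncard = n} :=
    ⟨∅, ⟨fun e he => absurd he (Set.notMem_empty e),
      fun e he => absurd he (Set.notMem_empty e)⟩, Set.ncard_empty _⟩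
  have hmem := Nat.sSup_mem ⟨0, h0⟩ (hbdd (IsMatchingSet G))
  obtain ⟨M, hM, hcard⟩ := hmem
  -- every two distinct matching edges are joined by an edge of G
  have hconnpair : ∀ e ∈ M, ∀ f ∈ M, e ≠ f →
      ∃ g ∈ G.edgeSet, (∃ v : V, v ∈ g ∧ v ∈ e) ∧ (∃ v : V, v ∈ g ∧ v ∈ f) := by
    intro e he f hf hef
    by_contra hno
    have hindM : IsInducedMatchingSet G {e, f} := by
      constructor
      · constructor
        · rintro x (rfl | rfl)
          · exact hM.1 _ he
          · exact hM.1 _ hf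
        · rintro x (rfl | rfl) y (rfl | rfl) hxy v hvx
          · exact absurd rfl hxy
          · exact hM.2 _ he _ hf hef v hvx
          · exact hM.2 _ hf _ he (Ne.symm hef) v hvx
          · exact absurd rfl hxy
      · rintro x (rfl | rfl) y (rfl | rfl) hxy g hg ⟨hgx, hgy⟩
        · exact absurd rfl hxy
        · exact hno ⟨g, hg, hgx, hgy⟩
        · exact hno ⟨g, hg, hgy, hgx⟩
        · exact absurd rfl hxy
    have h2 : (2 : ℕ) ≤ indMatchNum G :=
      le_csSup (hbdd (IsInducedMatchingSet G)) ⟨{e, f}, hindM, Set.ncard_pair hef⟩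
    omega
  -- touch sets
  have htouch1 : ∀ e ∈ M, {h | h ∈ M ∧ ∃ v : V, v ∈ e ∧ v ∈ h} = {e} := by
    intro e he
    ext h
    simp only [Set.mem_setOf_eq, Set.mem_singleton_iff]
    constructor
    · rintro ⟨hh, v, hve, hvh⟩
      by_contra hne
      exact hM.2 e he h hh (fun c => hne c.symm) v hve hvh
    · rintro rfl
      refine ⟨he, h.out.1, Sym2.out_fst_mem h, Sym2.out_fst_mem h⟩
  have htouch2 : ∀ e ∈ M, ∀ f ∈ M, e ≠ f → ∀ g : Sym2 V,
      (∃ v : V, v ∈ g ∧ v ∈ e) → (∃ v : V, v ∈ g ∧ v ∈ f) →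
      {h | h ∈ M ∧ ∃ v : V, v ∈ g ∧ v ∈ h} = {e, f} := by
    intro e he f hf hef g ⟨v1, hv1g, hv1e⟩ ⟨v2, hv2g, hv2f⟩
    have hv12 : v1 ≠ v2 := by
      rintro rfl
      exact hM.2 e he f hf hef v1 hv1e hv2f
    ext h
    simp only [Set.mem_setOf_eq, Set.mem_insert_iff, Set.mem_singleton_iff]
    constructor
    · rintro ⟨hh, v, hvg, hvh⟩
      rcases sym2_mem_eq hv1g hv2g hv12 hvg with rfl | rfl
      · left
        by_contra hne
        exact hM.2 e he h hh (fun c => hne c.symm) v hv1e hvh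
      · right
        by_contra hne
        exact hM.2 f hf h hh (fun c => hne c.symm) v hv2f hvh
    · rintro (rfl | rfl)
      · exact ⟨he, v1, hv1g, hv1e⟩
      · exact ⟨hf, v2, hv2g, hv2f⟩
  -- set up finsets
  have hMfin : M.Finite := Set.toFinite M
  set Mf : Finset (Sym2 V) := hMfin.toFinset with hMfdef
  have hMfmem : ∀ x, x ∈ Mf ↔ x ∈ M := fun x => hMfin.mem_toFinset
  rcases isEmpty_or_nonempty V with hV | hV
  · have hMe : M = ∅ := Set.eq_empty_of_isEmpty M
    rw [hMe, Set.ncard_empty] at hcard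
    have hm0 : matchNum G = 0 := hcard.symm
    rw [hm0]
    simp
  have hne : Nonempty (Sym2 V) := ⟨s(Classical.arbitrary V, Classical.arbitrary V)⟩
  have hMfcard : Mf.card = matchNum G := by
    have h1 : Mf.card = M.ncard := (Set.ncard_eq_toFinset_card M hMfin).symm
    rw [h1]
    exact hcard
  set P : Finset (Finset (Sym2 V)) :=
    Finset.powersetCard 1 Mf ∪ Finset.powersetCard 2 Mf with hPdef
  have hchoose : ∀ s : Finset (Sym2 V), ∃ g : Sym2 V, s ∈ P →
      g ∈ G.edgeSet ∧ {h | h ∈ M ∧ ∃ v : V, v ∈ g ∧ v ∈ h} = ↑s := by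
    intro s
    by_cases hs : s ∈ P
    · rw [hPdef, Finset.mem_union, Finset.mem_powersetCard, Finset.mem_powersetCard] at hs
      rcases hs with ⟨hsub, hc1⟩ | ⟨hsub, hc2⟩
      · obtain ⟨e, rfl⟩ := Finset.card_eq_one.mp hc1
        have he : e ∈ M := (hMfmem e).mp (hsub (Finset.mem_singleton_self e))
        exact ⟨e, fun _ => ⟨hM.1 e he, by rw [htouch1 e he]; simp⟩⟩
      · obtain ⟨e, f, hef, rfl⟩ := Finset.card_eq_two.mp hc2
        have he : e ∈ M := (hMfmem e).mp (hsub (by simp))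
        have hf : f ∈ M := (hMfmem f).mp (hsub (by simp))
        obtain ⟨g, hg, hge, hgf⟩ := hconnpair e he f hf hef
        exact ⟨g, fun _ => ⟨hg, by rw [htouch2 e he f hf hef g hge hgf]; simp⟩⟩
    · exact ⟨Classical.arbitrary (Sym2 V), fun h => absurd h hs⟩
  choose F hF using hchoose
  have hinj : Set.InjOn F ↑P := by
    intro s hs t ht hst
    have h1 := (hF s hs).2
    have h2 := (hF t ht).2
    rw [hst, h2] at h1
    exact Finset.coe_injective h1.symm
  have hcardle : P.card ≤ G.edgeFinset.card := by
    apply Finset.card_le_card_of_injOn F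
    · intro s hs
      rw [Finset.mem_coe, SimpleGraph.mem_edgeFinset]
      exact (hF s hs).1
    · intro s hs t ht
      exact hinj hs ht
  have hdisj : Disjoint (Finset.powersetCard 1 Mf) (Finset.powersetCard 2 Mf) := by
    rw [Finset.disjoint_left]
    intro s h1 h2
    rw [Finset.mem_powersetCard] at h1 h2
    omega
  have hPcard : P.card = Nat.choose (matchNum G + 1) 2 := by
    rw [hPdef, Finset.card_union_of_disjoint hdisj, Finset.card_powersetCard,
      Finset.card_powersetCard, hMfcard]
    rw [Nat.choose_succ_succ (matchNum G) 1, Nat.choose_one_right]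
  have hedge : G.edgeSet.ncard = G.edgeFinset.card := by
    rw [Set.ncard_eq_toFinset_card' G.edgeSet]
    exact congrArg Finset.card (Finset.ext fun x => by simp)
  rw [hedge, ← hPcard]
  exact hcardle
end

section
/- Let r ≥ 2 be an integer and let G_r be the whiskered complete graph: the simple graph on the 2r vertices x₁, …, x_r, y₁, …, y_r whose edges are all pairs {x_i, x_j} with 1 ≤ i < j ≤ r together with the edges {x_k, y_k} for 1 ≤ k ≤ r. Then ind-match(G_r) = 1, min-match(G_r) = ⌈r/2⌉ and match(G_r) = r. -/
variable {V : Type*}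

/-- The whiskered complete graph `G_r` on vertices `x₁, …, x_r` (the `Sum.inl`s) and
`y₁, …, y_r` (the `Sum.inr`s): all pairs of distinct `x`'s are adjacent, and `x_k` is
adjacent to `y_k` for each `k`. -/
def whiskeredComplete (r : ℕ) : SimpleGraph (Fin r ⊕ Fin r) :=
  SimpleGraph.fromRel (fun a b =>
    match a, b with
    | Sum.inl _, Sum.inl _ => True
    | Sum.inl i, Sum.inr j => i = j
    | _, _ => False)


section WC
open Sum
lemma wc_adj {r : ℕ} (a b : Fin r ⊕ Fin r) :
    (whiskeredComplete r).Adj a b ↔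
      (∃ i j, a = inl i ∧ b = inl j ∧ i ≠ j) ∨
      (∃ i, a = inl i ∧ b = inr i) ∨ (∃ i, a = inr i ∧ b = inl i) := by
  cases a <;> cases b <;>
    simp [whiskeredComplete, SimpleGraph.fromRel_adj] <;> aesop

lemma wc_edge {r : ℕ} {e : Sym2 (Fin r ⊕ Fin r)}
    (he : e ∈ (whiskeredComplete r).edgeSet) :
    (∃ i j : Fin r, i ≠ j ∧ e = s(inl i, inl j)) ∨
    (∃ i : Fin r, e = s(inl i, inr i)) := by
  induction e using Sym2.ind with
  | _ a b =>
    rw [SimpleGraph.mem_edgeSet, wc_adj] at he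
    rcases he with ⟨i, j, rfl, rfl, h⟩ | ⟨i, rfl, rfl⟩ | ⟨i, rfl, rfl⟩
    · exact Or.inl ⟨i, j, h, rfl⟩
    · exact Or.inr ⟨i, rfl⟩
    · exact Or.inr ⟨i, Sym2.eq_swap⟩

lemma wc_edge_has_inl {r : ℕ} {e : Sym2 (Fin r ⊕ Fin r)}
    (he : e ∈ (whiskeredComplete r).edgeSet) : ∃ i : Fin r, inl i ∈ e := by
  rcases wc_edge he with ⟨i, j, _, rfl⟩ | ⟨i, rfl⟩ <;>
    exact ⟨i, by simp⟩

lemma wc_edge_at_inr {r : ℕ} {e : Sym2 (Fin r ⊕ Fin r)} {k : Fin r}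
    (he : e ∈ (whiskeredComplete r).edgeSet) (hk : (inr k : Fin r ⊕ Fin r) ∈ e) :
    e = s(inl k, inr k) := by
  rcases wc_edge he with ⟨i, j, _, rfl⟩ | ⟨i, rfl⟩ <;> simp_all [Sym2.mem_iff]

/-- any matching has at most r edges -/
lemma wc_match_le {r : ℕ} {M : Set (Sym2 (Fin r ⊕ Fin r))}
    (hM : IsMatchingSet (whiskeredComplete r) M) : M.ncard ≤ r := by
  have hF : ∀ e : M, ∃ i : Fin r, inl i ∈ (e : Sym2 (Fin r ⊕ Fin r)) :=
    fun e => wc_edge_has_inl (hM.1 e e.2)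
  choose F hF using hF
  have hinj : Function.Injective F := by
    intro e f hef
    by_contra hne
    have hne' : (e : Sym2 (Fin r ⊕ Fin r)) ≠ f := fun h => hne (Subtype.ext h)
    exact hM.2 e e.2 f f.2 hne' (inl (F e)) (hF e) (hef ▸ hF f)
  calc M.ncard = Nat.card M := (Nat.card_coe_set_eq M).symm
    _ ≤ Nat.card (Fin r) := Nat.card_le_card_of_injective F hinj
    _ = r := by simp

/-- a maximal matching covers every inl vertex -/
lemma wc_maximal_covers {r : ℕ} {M : Set (Sym2 (Fin r ⊕ Fin r))}
    (hM : IsMaximalMatchingSet (whiskeredComplete r) M) (k : Fin r) :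
    ∃ e ∈ M, (inl k : Fin r ⊕ Fin r) ∈ e := by
  by_contra h
  push_neg at h
  have hek : s(inl k, inr k) ∈ (whiskeredComplete r).edgeSet := by
    rw [SimpleGraph.mem_edgeSet, wc_adj]; exact Or.inr (Or.inl ⟨k, rfl, rfl⟩)
  have hnm : s((inl k : Fin r ⊕ Fin r), inr k) ∉ M := fun hm => h _ hm (by simp)
  apply hM.2 _ hek hnm
  constructor
  · rintro e (rfl | he)
    · exact hek
    · exact hM.1.1 e he
  · rintro e (rfl | he) f (rfl | hf) hne v hv hvf
    · exact hne rfl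
    · rcases Sym2.mem_iff.1 hv with rfl | rfl
      · exact h f hf hvf
      · rw [wc_edge_at_inr (hM.1.1 f hf) hvf] at hf
        exact h _ hf (by simp)
    · rcases Sym2.mem_iff.1 hvf with rfl | rfl
      · exact h e he hv
      · rw [wc_edge_at_inr (hM.1.1 e he) hv] at he
        exact h _ he (by simp)
    · exact hM.1.2 e he f hf hne v hv hvf

lemma wc_maximal_ge {r : ℕ} {M : Set (Sym2 (Fin r ⊕ Fin r))}
    (hM : IsMaximalMatchingSet (whiskeredComplete r) M) : r ≤ 2 * M.ncard := by
  have hcov := wc_maximal_covers hM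
  choose E hEM hEk using hcov
  set F : Fin r → M × Bool := fun k =>
    (⟨E k, hEM k⟩, decide ((inl k : Fin r ⊕ Fin r) = (E k).out.1))
  have hinj : Function.Injective F := by
    intro k k' hkk
    have h1 : E k = E k' := congrArg (fun p => (p.1 : Sym2 (Fin r ⊕ Fin r))) hkk
    have h2 : decide ((inl k : Fin r ⊕ Fin r) = (E k).out.1)
        = decide ((inl k' : Fin r ⊕ Fin r) = (E k').out.1) :=
      congrArg Prod.snd hkk
    have hmk : ∀ m : Fin r, (inl m : Fin r ⊕ Fin r) = (E m).out.1 ∨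
        (inl m : Fin r ⊕ Fin r) = (E m).out.2 := by
      intro m
      have := hEk m
      rw [← (E m).out_eq] at this
      exact Sym2.mem_iff.1 this
    by_cases hc : (inl k : Fin r ⊕ Fin r) = (E k).out.1
    · have hc' : (inl k' : Fin r ⊕ Fin r) = (E k').out.1 := by
        simpa [hc] using h2.symm
      have : (inl k : Fin r ⊕ Fin r) = inl k' := by rw [hc, h1, ← hc']
      exact inl.inj this
    · have hc2 := (hmk k).resolve_left hc
      have hc' : ¬ ((inl k' : Fin r ⊕ Fin r) = (E k').out.1) := by
        simpa [hc] using h2.symm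
      have hc2' := (hmk k').resolve_left hc'
      have : (inl k : Fin r ⊕ Fin r) = inl k' := by rw [hc2, h1, ← hc2']
      exact inl.inj this
  have := Nat.card_le_card_of_injective F hinj
  simp only [Nat.card_eq_fintype_card, Fintype.card_fin] at this
  have h2 : Nat.card (M × Bool) = Nat.card M * 2 := by
    rw [Nat.card_prod]; simp
  rw [h2, Nat.card_coe_set_eq] at this
  omega


abbrev wcV (r : ℕ) := Fin r ⊕ Fin r

def wcKey : wcV r → ℕ := Sum.elim Fin.val Fin.val

/-- the perfect matching of whiskers -/
lemma wc_match_r (r : ℕ) :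
    ∃ M, IsMatchingSet (whiskeredComplete r) M ∧ M.ncard = r := by
  refine ⟨Set.range (fun k : Fin r => s(inl k, inr k)), ⟨?_, ?_⟩, ?_⟩
  · rintro e ⟨k, rfl⟩
    rw [SimpleGraph.mem_edgeSet, wc_adj]
    exact Or.inr (Or.inl ⟨k, rfl, rfl⟩)
  · rintro e ⟨k, rfl⟩ f ⟨k', rfl⟩ hne v hv hvf
    have hkk : k ≠ k' := fun h => hne (by rw [h])
    rcases Sym2.mem_iff.1 hv with rfl | rfl <;>
      rcases Sym2.mem_iff.1 hvf with h | h <;> simp_all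
  · have hinj : Function.Injective (fun k : Fin r => s((inl k : wcV r), inr k)) := by
      intro k k' h
      simp only [Sym2.eq, Sym2.rel_iff', Prod.mk.injEq, Prod.swap_prod_mk] at h
      rcases h with ⟨h, _⟩ | ⟨h, _⟩ <;> simp_all
    rw [← Set.image_univ, Set.ncard_image_of_injective _ hinj, Set.ncard_univ,
      Nat.card_eq_fintype_card, Fintype.card_fin]

/-- maximal matching of size (r+1)/2 -/
lemma wc_minmatch (hr : 2 ≤ r) :
    ∃ M, IsMaximalMatchingSet (whiskeredComplete r) M ∧ M.ncard = (r + 1) / 2 := by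
  set m := (r + 1) / 2 with hm
  have hr1 : r - 1 < r := by omega
  set f : Fin m → Sym2 (wcV r) := fun i =>
    if h : 2 * i.val + 1 < r then s(inl ⟨2 * i.val, by omega⟩, inl ⟨2 * i.val + 1, h⟩)
    else s(inl ⟨r - 1, hr1⟩, inr ⟨r - 1, hr1⟩) with hf
  have hkey : ∀ (i : Fin m) (v : wcV r), v ∈ f i →
      wcKey v = 2 * i.val ∨ wcKey v = 2 * i.val + 1 := by
    intro i v hv
    have him : i.val < m := i.2
    rw [hf] at hv
    dsimp only at hv
    split at hv
    · rcases Sym2.mem_iff.1 hv with rfl | rfl <;> simp [wcKey]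
    · rename_i h
      have h1 : r - 1 = 2 * i.val := by omega
      rcases Sym2.mem_iff.1 hv with rfl | rfl <;> simp [wcKey] <;> omega
  have hcov : ∀ k : Fin r, (inl k : wcV r) ∈ f ⟨k.val / 2, by omega⟩ := by
    intro k
    have hk := k.2
    rw [hf]
    dsimp only
    split
    · rename_i h
      rw [Sym2.mem_iff]
      rcases Nat.even_or_odd k.val with he | ho
      · left; congr 1; exact Fin.ext (by rcases he with ⟨c, hc⟩; dsimp; omega)
      · right; congr 1; exact Fin.ext (by rcases ho with ⟨c, hc⟩; dsimp; omega)
    · rename_i h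
      have h' : ¬ (2 * (k.val / 2) + 1 < r) := h
      rw [Sym2.mem_iff]
      left; congr 1; exact Fin.ext (by dsimp; omega)
  have hedge : ∀ i : Fin m, f i ∈ (whiskeredComplete r).edgeSet := by
    intro i
    rw [hf]; dsimp only; split
    · rw [SimpleGraph.mem_edgeSet, wc_adj]
      exact Or.inl ⟨_, _, rfl, rfl, by simp [Fin.ext_iff]⟩
    · rw [SimpleGraph.mem_edgeSet, wc_adj]
      exact Or.inr (Or.inl ⟨_, rfl, rfl⟩)
  have hdisj : ∀ i j : Fin m, i ≠ j → ∀ v : wcV r, v ∈ f i → v ∉ f j := by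
    intro i j hij v hvi hvj
    have h1 := hkey i v hvi
    have h2 := hkey j v hvj
    have : i.val ≠ j.val := fun h => hij (Fin.ext h)
    omega
  set M := Set.range f with hM
  have hmatch : IsMatchingSet (whiskeredComplete r) M := by
    refine ⟨?_, ?_⟩
    · rintro e ⟨i, rfl⟩; exact hedge i
    · rintro e ⟨i, rfl⟩ g ⟨j, rfl⟩ hne v hv hvg
      have hij : i ≠ j := fun h => hne (by rw [h])
      exact hdisj i j hij v hv hvg
  refine ⟨M, ⟨hmatch, ?_⟩, ?_⟩
  · intro e he hem hins
    obtain ⟨k, hk⟩ := wc_edge_has_inl he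
    have h1 : f ⟨k.val / 2, by omega⟩ ∈ M := ⟨_, rfl⟩
    have hne : e ≠ f ⟨k.val / 2, by omega⟩ := fun h => hem (h ▸ h1)
    exact hins.2 e (Set.mem_insert _ _) _ (Set.mem_insert_of_mem _ h1) hne
      (inl k) hk (hcov k)
  · have hinj : Function.Injective f := by
      intro i j hij
      have hwit : ∃ v ∈ f i, wcKey v = 2 * i.val := by
        rw [hf]; dsimp only; split
        · exact ⟨inl ⟨2 * i.val, by omega⟩, by simp [Sym2.mem_iff], by simp [wcKey]⟩
        · rename_i h
          have him : i.val < m := i.2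
          exact ⟨inl ⟨r - 1, hr1⟩, by simp [Sym2.mem_iff], by simp [wcKey]; omega⟩
      obtain ⟨v, hv, hkv⟩ := hwit
      have := hkey j v (hij ▸ hv)
      exact Fin.ext (by omega)
    rw [hM, ← Set.image_univ, Set.ncard_image_of_injective _ hinj, Set.ncard_univ,
      Nat.card_eq_fintype_card, Fintype.card_fin]

/-- the singleton induced matching -/
lemma wc_indmatch (hr : 2 ≤ r) :
    ∃ M, IsInducedMatchingSet (whiskeredComplete r) M ∧ M.ncard = 1 := by
  have h0 : (0 : ℕ) < r := by omega
  refine ⟨{s((inl ⟨0, h0⟩ : wcV r), inr ⟨0, h0⟩)}, ⟨⟨?_, ?_⟩, ?_⟩, Set.ncard_singleton _⟩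
  · rintro e rfl
    rw [SimpleGraph.mem_edgeSet, wc_adj]
    exact Or.inr (Or.inl ⟨_, rfl, rfl⟩)
  · rintro e rfl g rfl hne; exact absurd rfl hne
  · rintro e rfl g rfl hne; exact absurd rfl hne

/-- any induced matching has at most one edge -/
lemma wc_ind_le {M : Set (Sym2 (wcV r))}
    (hM : IsInducedMatchingSet (whiskeredComplete r) M) : M.ncard ≤ 1 := by
  rw [Set.ncard_le_one (Set.toFinite M)]
  intro e he g hg
  by_contra hne
  obtain ⟨i, hi⟩ := wc_edge_has_inl (hM.1.1 e he)
  obtain ⟨j, hj⟩ := wc_edge_has_inl (hM.1.1 g hg)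
  have hij : i ≠ j := by
    rintro rfl
    exact hM.1.2 e he g hg hne (inl i) hi hj
  have hginl : s((inl i : wcV r), inl j) ∈ (whiskeredComplete r).edgeSet := by
    rw [SimpleGraph.mem_edgeSet, wc_adj]
    exact Or.inl ⟨i, j, rfl, rfl, hij⟩
  exact hM.2 e he g hg hne _ hginl
    ⟨⟨inl i, by simp, hi⟩, ⟨inl j, by simp, hj⟩⟩


end WC

open Sum in
theorem stmt_17 (r : ℕ) (hr : 2 ≤ r) :
    indMatchNum (whiskeredComplete r) = 1 ∧
    minMatchNum (whiskeredComplete r) = (r + 1) / 2 ∧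
    matchNum (whiskeredComplete r) = r := by
  refine ⟨?_, ?_, ?_⟩
  · have hub : ∀ n ∈ {n | ∃ M : Set (Sym2 (wcV r)),
        IsInducedMatchingSet (whiskeredComplete r) M ∧ M.ncard = n}, n ≤ 1 := by
      rintro n ⟨M, hM, rfl⟩; exact wc_ind_le hM
    have hmem : 1 ∈ {n | ∃ M : Set (Sym2 (wcV r)),
        IsInducedMatchingSet (whiskeredComplete r) M ∧ M.ncard = n} := wc_indmatch hr
    exact le_antisymm (csSup_le ⟨1, hmem⟩ hub) (le_csSup ⟨1, hub⟩ hmem)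
  · have hmem : (r + 1) / 2 ∈ {n | ∃ M : Set (Sym2 (wcV r)),
        IsMaximalMatchingSet (whiskeredComplete r) M ∧ M.ncard = n} := wc_minmatch hr
    refine le_antisymm (Nat.sInf_le hmem) ?_
    have h2 : ∃ M : Set (Sym2 (wcV r)), IsMaximalMatchingSet (whiskeredComplete r) M ∧
        M.ncard = minMatchNum (whiskeredComplete r) := Nat.sInf_mem ⟨_, hmem⟩
    obtain ⟨M, hM, hcard⟩ := h2
    have := wc_maximal_ge hM
    omega
  · have hub : ∀ n ∈ {n | ∃ M : Set (Sym2 (wcV r)),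
        IsMatchingSet (whiskeredComplete r) M ∧ M.ncard = n}, n ≤ r := by
      rintro n ⟨M, hM, rfl⟩; exact wc_match_le hM
    have hmem : r ∈ {n | ∃ M : Set (Sym2 (wcV r)),
        IsMatchingSet (whiskeredComplete r) M ∧ M.ncard = n} := wc_match_r r
    exact le_antisymm (csSup_le ⟨r, hmem⟩ hub) (le_csSup ⟨r, hub⟩ hmem)
end
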